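/- arXiv:1709.08095 — 6 statements merged into one kernel-verified Lean document; each statement's English description precedes it below -/
import Mathlib

section
/- Let 1 ≤ p ≤ q < ∞ and z ∈ ℂ, and suppose the two-point inequality holds for (p,q,z). Then for every n ≥ 1 and every function f : {-1,1}^n → ℂ one has (𝔼 |T_z f|^q)^{1/q} ≤ (𝔼 |f|^p)^{1/p}, where 𝔼 denotes the average over the uniform measure on {-1,1}^n. -/
open MeasureTheory Finset

noncomputable section

/-- The ±1 value of a Boolean coordinate. -/
def sgn (b : Bool) : ℝ := if b then 1 else -1

/-- Walsh function `W_S(x) = ∏_{j ∈ S} x_j`. -/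
def walsh {n : ℕ} (S : Finset (Fin n)) (x : Fin n → Bool) : ℂ :=
  ∏ j ∈ S, (sgn (x j) : ℂ)

/-- Fourier–Walsh coefficient `f̂(S) = 𝔼 f·W_S`. -/
def walshCoeff {n : ℕ} (f : (Fin n → Bool) → ℂ) (S : Finset (Fin n)) : ℂ :=
  (∑ x : Fin n → Bool, f x * walsh S x) / 2 ^ n

/-- `T_z^k f = ∑_S z^{|S ∩ {k+1,…,n}|} f̂(S) W_S`. -/
def Tzk {n : ℕ} (z : ℂ) (k : ℕ) (f : (Fin n → Bool) → ℂ) : (Fin n → Bool) → ℂ :=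
  fun x => ∑ S : Finset (Fin n),
    z ^ (S.filter (fun j : Fin n => k ≤ (j : ℕ))).card * walshCoeff f S * walsh S x

/-- The two-point inequality for `(p,q,z)`. -/
def TwoPointIneq (p q : ℝ) (z : ℂ) : Prop :=
  ∀ a b : ℂ,
    ((‖a + z * b‖ ^ q + ‖a - z * b‖ ^ q) / 2) ^ (1 / q)
      ≤ ((‖a + b‖ ^ p + ‖a - b‖ ^ p) / 2) ^ (1 / p)

/-- Combine a point of `{-1,1}^k` and a point of `{-1,1}^{n-k}` into a point of `{-1,1}^n`. -/
def merge (n k : ℕ) (a : Fin k → Bool) (b : Fin (n - k) → Bool) : Fin n → Bool :=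
  fun i => if h : (i : ℕ) < k then a ⟨i, h⟩
           else b ⟨(i : ℕ) - k, by have := i.isLt; omega⟩

/-- Symmetric function `φ_ℓ(x_1,…,x_n) = ℓ! ∑_{m_1<⋯<m_ℓ} x_{m_1}⋯x_{m_ℓ}`. -/
def phi (ℓ : ℕ) {n : ℕ} (x : Fin n → ℂ) : ℂ :=
  (ℓ.factorial : ℂ) * ∑ S ∈ Finset.powersetCard ℓ (Finset.univ : Finset (Fin n)), ∏ j ∈ S, x j

/-- Standard Gaussian measure on ℝ. -/
def γ : Measure ℝ := ProbabilityTheory.gaussianReal 0 1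

/-- Hermite polynomial `H_m(x) = ∫ (x+iy)^m dγ(y)`, at a complex argument. -/
def Hpoly (m : ℕ) (x : ℂ) : ℂ := ∫ y : ℝ, (x + Complex.I * (y : ℂ)) ^ m ∂γ

/-- Analytically extended heat flow `P_τ h (ξ)`. -/
def heatP (τ : ℂ) (h : ℂ → ℂ) (ξ : ℂ) : ℂ :=
  ∫ t : ℝ, h (t : ℂ) * Complex.exp (-(ξ - (t : ℂ)) ^ 2 / (2 * τ)) /
    ((2 * (Real.pi : ℂ) * τ) ^ ((1 : ℂ) / 2))

/-- Sum of the first `k` coordinates. -/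
def sumLow (n k : ℕ) (x : Fin n → Bool) : ℝ :=
  ∑ i ∈ Finset.univ.filter (fun i : Fin n => (i : ℕ) < k), sgn (x i)

/-- Sum of the last `n - k` coordinates. -/
def sumHigh (n k : ℕ) (x : Fin n → Bool) : ℝ :=
  ∑ i ∈ Finset.univ.filter (fun i : Fin n => k ≤ (i : ℕ)), sgn (x i)


/-! ### Auxiliary material for `stmt0` -/

/-- Product kernel `∏_j (1 + z x_j y_j)`. -/
def kerZ (z : ℂ) {n : ℕ} (x y : Fin n → Bool) : ℂ :=
  ∏ j : Fin n, (1 + z * (sgn (x j) : ℂ) * (sgn (y j) : ℂ))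

/-- The noise operator applied coordinate-by-coordinate, defined recursively. -/
def Tall (z : ℂ) : (n : ℕ) → ((Fin n → Bool) → ℂ) → (Fin n → Bool) → ℂ
  | 0, f, x => f x
  | n+1, f, x =>
      (Tall z n (fun y => f (Fin.cons true y)) (Fin.tail x)
        + Tall z n (fun y => f (Fin.cons false y)) (Fin.tail x)) / 2
      + (if x 0 then z else -z) *
        ((Tall z n (fun y => f (Fin.cons true y)) (Fin.tail x)
          - Tall z n (fun y => f (Fin.cons false y)) (Fin.tail x)) / 2)

lemma sum_prod_subset {n : ℕ} (c : Fin n → ℂ) :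
    ∑ S : Finset (Fin n), ∏ j ∈ S, c j = ∏ j : Fin n, (1 + c j) := by
  have := Finset.prod_add c (fun _ => (1:ℂ)) Finset.univ
  simp [add_comm] at this ⊢
  rw [this]

lemma sum_cube_succ {M : Type*} [AddCommMonoid M] {n : ℕ} (G : (Fin (n+1) → Bool) → M) :
    ∑ x : Fin (n+1) → Bool, G x
      = ∑ y : Fin n → Bool, (G (Fin.cons true y) + G (Fin.cons false y)) := by
  rw [← Equiv.sum_comp (Fin.consEquiv (fun _ => Bool)) G, Fintype.sum_prod_type]
  simp [Fin.consEquiv, Fintype.sum_bool, Finset.sum_add_distrib]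

lemma tzk0_eq {n : ℕ} (z : ℂ) (f : (Fin n → Bool) → ℂ) (x : Fin n → Bool) :
    Tzk z 0 f x = (∑ y : Fin n → Bool, f y * kerZ z x y) / 2 ^ n := by
  have hfilter : ∀ S : Finset (Fin n), S.filter (fun j : Fin n => 0 ≤ (j : ℕ)) = S := by
    intro S; exact Finset.filter_true_of_mem (fun j _ => Nat.zero_le _)
  unfold Tzk walshCoeff walsh
  simp only [hfilter]
  calc ∑ S : Finset (Fin n),
        z ^ S.card * ((∑ y : Fin n → Bool, f y * ∏ j ∈ S, (sgn (y j):ℂ)) / 2 ^ n)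
          * ∏ j ∈ S, (sgn (x j):ℂ)
      = ∑ S : Finset (Fin n),
        (∑ y : Fin n → Bool, f y * ∏ j ∈ S, (z * (sgn (x j):ℂ) * (sgn (y j):ℂ))) / 2 ^ n := by
        refine Finset.sum_congr rfl fun S _ => ?_
        simp only [Finset.prod_mul_distrib, Finset.prod_const]
        have : ∑ y : Fin n → Bool,
            f y * ((z ^ S.card * ∏ j ∈ S, (sgn (x j):ℂ)) * ∏ j ∈ S, (sgn (y j):ℂ))
            = (z ^ S.card * ∏ j ∈ S, (sgn (x j):ℂ)) * ∑ y : Fin n → Bool,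
              f y * ∏ j ∈ S, (sgn (y j):ℂ) := by
          rw [Finset.mul_sum]; exact Finset.sum_congr rfl fun y _ => by ring
        rw [this]; ring
    _ = (∑ y : Fin n → Bool, f y *
          ∑ S : Finset (Fin n), ∏ j ∈ S, (z * (sgn (x j):ℂ) * (sgn (y j):ℂ))) / 2 ^ n := by
        rw [← Finset.sum_div, Finset.sum_comm]
        congr 1
        exact Finset.sum_congr rfl fun y _ => (Finset.mul_sum _ _ _).symm
    _ = (∑ y : Fin n → Bool, f y * kerZ z x y) / 2 ^ n := by
        congr 1
        refine Finset.sum_congr rfl fun y _ => ?_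
        rw [sum_prod_subset]; rfl

lemma kerZ_cons {n : ℕ} (z : ℂ) (x : Fin (n+1) → Bool) (b : Bool) (y : Fin n → Bool) :
    kerZ z x (Fin.cons b y)
      = (1 + z * (sgn (x 0) : ℂ) * (sgn b : ℂ)) * kerZ z (Fin.tail x) y := by
  unfold kerZ
  rw [Fin.prod_univ_succ]
  simp [Fin.tail]

lemma tall_eq (z : ℂ) : ∀ (n : ℕ) (f : (Fin n → Bool) → ℂ) (x : Fin n → Bool),
    Tall z n f x = (∑ y : Fin n → Bool, f y * kerZ z x y) / 2 ^ n := by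
  intro n
  induction n with
  | zero =>
      intro f x
      have h1 : (∑ y : Fin 0 → Bool, f y * kerZ z x y) = f x * kerZ z x x := by
        rw [Fintype.sum_unique (fun y : Fin 0 → Bool => f y * kerZ z x y)]
        simp only [kerZ, Finset.univ_eq_empty, Finset.prod_empty]
        exact congrArg (· * 1) (congrArg f (Subsingleton.elim _ _))
      rw [h1]
      simp [Tall, kerZ]
  | succ n ih =>
      intro f x
      show Tall z (n+1) f x = _
      rw [sum_cube_succ (fun y => f y * kerZ z x y)]
      unfold Tall
      rw [ih, ih]
      simp only [kerZ_cons]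
      have hs : ∑ y : Fin n → Bool,
          (f (Fin.cons true y) * ((1 + z * (sgn (x 0):ℂ) * (sgn true:ℂ)) * kerZ z (Fin.tail x) y)
            + f (Fin.cons false y) * ((1 + z * (sgn (x 0):ℂ) * (sgn false:ℂ)) * kerZ z (Fin.tail x) y))
          = (1 + z * (sgn (x 0):ℂ)) * ∑ y : Fin n → Bool, f (Fin.cons true y) * kerZ z (Fin.tail x) y
            + (1 - z * (sgn (x 0):ℂ)) * ∑ y : Fin n → Bool, f (Fin.cons false y) * kerZ z (Fin.tail x) y := by
        rw [Finset.mul_sum, Finset.mul_sum, ← Finset.sum_add_distrib]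
        refine Finset.sum_congr rfl fun y _ => ?_
        simp [sgn]; ring
      rw [hs]
      cases h : x 0 <;> simp only [h, if_true, if_false, sgn] <;> push_cast <;> ring

lemma abs_rpow_nonneg (w : ℂ) (r : ℝ) : 0 ≤ ‖w‖ ^ r :=
  Real.rpow_nonneg (norm_nonneg w) r

lemma tall_succ (z : ℂ) {n : ℕ} (f : (Fin (n+1) → Bool) → ℂ) (b : Bool) (y : Fin n → Bool) :
    Tall z (n+1) f (Fin.cons b y)
      = (Tall z n (fun w => f (Fin.cons true w)) y
          + Tall z n (fun w => f (Fin.cons false w)) y) / 2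
      + (if b then z else -z) *
        ((Tall z n (fun w => f (Fin.cons true w)) y
          - Tall z n (fun w => f (Fin.cons false w)) y) / 2) := by
  show (Tall z n (fun w => f (Fin.cons true w)) (Fin.tail ((Fin.cons b y : Fin (n+1) → Bool)))
          + Tall z n (fun w => f (Fin.cons false w)) (Fin.tail ((Fin.cons b y : Fin (n+1) → Bool)))) / 2
      + (if (Fin.cons b y : Fin (n+1) → Bool) 0 then z else -z) *
        ((Tall z n (fun w => f (Fin.cons true w)) (Fin.tail ((Fin.cons b y : Fin (n+1) → Bool)))
          - Tall z n (fun w => f (Fin.cons false w)) (Fin.tail ((Fin.cons b y : Fin (n+1) → Bool)))) / 2) = _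
  rw [Fin.tail_cons, Fin.cons_zero]

lemma tall_bound (p q : ℝ) (z : ℂ) (hp : 1 ≤ p) (hpq : p ≤ q)
    (h2pt : TwoPointIneq p q z) :
    ∀ (n : ℕ) (f : (Fin n → Bool) → ℂ),
      ((∑ x : Fin n → Bool, ‖Tall z n f x‖ ^ q) / 2 ^ n) ^ (1/q)
        ≤ ((∑ x : Fin n → Bool, ‖f x‖ ^ p) / 2 ^ n) ^ (1/p) := by
  have hq : 1 ≤ q := le_trans hp hpq
  have hp0 : 0 < p := lt_of_lt_of_le one_pos hp
  have hq0 : 0 < q := lt_of_lt_of_le one_pos hq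
  have hpq1 : p / q * (q / p) = 1 := by field_simp
  intro n
  induction n with
  | zero =>
      intro f
      simp only [pow_zero, div_one]
      rw [Fintype.sum_unique (fun x : Fin 0 → Bool => ‖Tall z 0 f x‖ ^ q),
        Fintype.sum_unique (fun x : Fin 0 → Bool => ‖f x‖ ^ p),
        ← Real.rpow_mul (norm_nonneg _), ← Real.rpow_mul (norm_nonneg _),
        mul_one_div_cancel hq0.ne', mul_one_div_cancel hp0.ne', Real.rpow_one, Real.rpow_one]
      exact le_of_eq rfl
  | succ n ih =>
      intro f
      have ihT := ih (fun y => f (Fin.cons true y))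
      have ihF := ih (fun y => f (Fin.cons false y))
      have ht : ∀ y : Fin n → Bool, Tall z (n+1) f (Fin.cons true y)
          = (Tall z n (fun w => f (Fin.cons true w)) y
              + Tall z n (fun w => f (Fin.cons false w)) y) / 2
            + z * ((Tall z n (fun w => f (Fin.cons true w)) y
              - Tall z n (fun w => f (Fin.cons false w)) y) / 2) := by
        intro y; rw [tall_succ]; norm_num
      have hf' : ∀ y : Fin n → Bool, Tall z (n+1) f (Fin.cons false y)
          = (Tall z n (fun w => f (Fin.cons true w)) y
              + Tall z n (fun w => f (Fin.cons false w)) y) / 2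
            - z * ((Tall z n (fun w => f (Fin.cons true w)) y
              - Tall z n (fun w => f (Fin.cons false w)) y) / 2) := by
        intro y; rw [tall_succ]; norm_num; ring
      set u : (Fin n → Bool) → ℂ := Tall z n (fun w => f (Fin.cons true w)) with hu
      set v : (Fin n → Bool) → ℂ := Tall z n (fun w => f (Fin.cons false w)) with hv
      set St : ℝ := ∑ y : Fin n → Bool, ‖u y‖ ^ q with hSt
      set Sf : ℝ := ∑ y : Fin n → Bool, ‖v y‖ ^ q with hSf
      set Rt : ℝ := ∑ y : Fin n → Bool, ‖f (Fin.cons true y)‖ ^ p with hRt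
      set Rf : ℝ := ∑ y : Fin n → Bool, ‖f (Fin.cons false y)‖ ^ p with hRf
      set Sig : ℝ := ∑ y : Fin n → Bool,
        ((‖u y‖ ^ p + ‖v y‖ ^ p) / 2) ^ (q/p) with hSig
      have hRtnn : 0 ≤ Rt := Finset.sum_nonneg fun y _ => abs_rpow_nonneg _ _
      have hRfnn : 0 ≤ Rf := Finset.sum_nonneg fun y _ => abs_rpow_nonneg _ _
      have hStnn : 0 ≤ St := Finset.sum_nonneg fun y _ => abs_rpow_nonneg _ _
      have hSfnn : 0 ≤ Sf := Finset.sum_nonneg fun y _ => abs_rpow_nonneg _ _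
      have hSignn : 0 ≤ Sig := Finset.sum_nonneg fun y _ => Real.rpow_nonneg
        (div_nonneg (add_nonneg (abs_rpow_nonneg _ _) (abs_rpow_nonneg _ _)) (by norm_num)) _
      have h2n : (0:ℝ) < 2 ^ n := by positivity
      have h2n1 : (0:ℝ) < 2 ^ (n+1) := by positivity
      -- pointwise two-point bound
      have key : ∀ (U V : ℂ),
          ‖(U+V)/2 + z * ((U-V)/2)‖ ^ q
            + ‖(U+V)/2 - z * ((U-V)/2)‖ ^ q
          ≤ 2 * ((‖U‖ ^ p + ‖V‖ ^ p)/2) ^ (q/p) := by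
        intro U V
        have h := h2pt ((U+V)/2) ((U-V)/2)
        have e1 : (U+V)/2 + (U-V)/2 = U := by ring
        have e2 : (U+V)/2 - (U-V)/2 = V := by ring
        rw [e1, e2] at h
        have hL : 0 ≤ (‖(U+V)/2 + z*((U-V)/2)‖ ^ q
            + ‖(U+V)/2 - z*((U-V)/2)‖ ^ q)/2 :=
          div_nonneg (add_nonneg (abs_rpow_nonneg _ _) (abs_rpow_nonneg _ _)) (by norm_num)
        have hR : 0 ≤ (‖U‖ ^ p + ‖V‖ ^ p)/2 :=
          div_nonneg (add_nonneg (abs_rpow_nonneg _ _) (abs_rpow_nonneg _ _)) (by norm_num)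
        have h2 := Real.rpow_le_rpow (Real.rpow_nonneg hL _) h hq0.le
        rw [← Real.rpow_mul hL, ← Real.rpow_mul hR, one_div_mul_cancel hq0.ne',
          Real.rpow_one] at h2
        have h3 : (1/p) * q = q/p := by ring
        rw [h3] at h2
        linarith
      -- Step A : sum bound
      have stepA : ∑ x : Fin (n+1) → Bool, ‖Tall z (n+1) f x‖ ^ q ≤ 2 * Sig := by
        rw [sum_cube_succ (fun x => ‖Tall z (n+1) f x‖ ^ q), hSig,
          Finset.mul_sum]
        refine Finset.sum_le_sum fun y _ => ?_
        rw [ht y, hf' y]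
        exact key (u y) (v y)
      -- Step B : reduce to Sig
      have hdiv : 2 * Sig / 2 ^ (n+1) = Sig / 2 ^ n := by
        rw [pow_succ, mul_comm ((2:ℝ)^n) 2]
        exact mul_div_mul_left _ _ two_ne_zero
      have stepB : ((∑ x : Fin (n+1) → Bool, ‖Tall z (n+1) f x‖ ^ q)
            / 2 ^ (n+1)) ^ (1/q) ≤ (Sig / 2 ^ n) ^ (1/q) := by
        rw [← hdiv]
        refine Real.rpow_le_rpow
          (div_nonneg (Finset.sum_nonneg fun x _ => abs_rpow_nonneg _ _) h2n1.le)
          ?_ (one_div_nonneg.mpr hq0.le)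
        exact (div_le_div_iff_of_pos_right h2n1).mpr stepA
      -- IH consequences
      have ihT' : (St / 2 ^ n) ^ (p/q) ≤ Rt / 2 ^ n := by
        have h2 := Real.rpow_le_rpow (Real.rpow_nonneg (div_nonneg hStnn h2n.le) _) ihT hp0.le
        rw [← Real.rpow_mul (div_nonneg hStnn h2n.le),
          ← Real.rpow_mul (div_nonneg hRtnn h2n.le),
          one_div_mul_cancel hp0.ne', Real.rpow_one] at h2
        have h3 : (1/q) * p = p/q := by ring
        rwa [h3] at h2
      have ihF' : (Sf / 2 ^ n) ^ (p/q) ≤ Rf / 2 ^ n := by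
        have h2 := Real.rpow_le_rpow (Real.rpow_nonneg (div_nonneg hSfnn h2n.le) _) ihF hp0.le
        rw [← Real.rpow_mul (div_nonneg hSfnn h2n.le),
          ← Real.rpow_mul (div_nonneg hRfnn h2n.le),
          one_div_mul_cancel hp0.ne', Real.rpow_one] at h2
        have h3 : (1/q) * p = p/q := by ring
        rwa [h3] at h2
      -- Minkowski step
      have hr1 : 1 ≤ q/p := (one_le_div hp0).mpr hpq
      have hr0 : (0:ℝ) < q/p := div_pos hq0 hp0
      set c : ℝ := (1/2) * ((2:ℝ) ^ n) ^ (-(p/q)) with hc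
      have hcnn : 0 ≤ c := by positivity
      have hQpos : (0:ℝ) < (2:ℝ) ^ (q/p) := Real.rpow_pos_of_pos two_pos _
      have hcr : c ^ (q/p) = ((2:ℝ) ^ (q/p))⁻¹ * ((2:ℝ) ^ n)⁻¹ := by
        rw [hc, Real.mul_rpow (by norm_num) (Real.rpow_nonneg h2n.le _),
          ← Real.rpow_mul h2n.le]
        have h4 : -(p/q) * (q/p) = -1 := by rw [neg_mul, hpq1]
        rw [h4, Real.rpow_neg_one, one_div, Real.inv_rpow (by norm_num : (0:ℝ) ≤ 2)]
      have habs : ∀ w : ℂ, (c * ‖w‖ ^ p) ^ (q/p)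
          = c ^ (q/p) * ‖w‖ ^ q := by
        intro w
        rw [Real.mul_rpow hcnn (abs_rpow_nonneg _ _), ← Real.rpow_mul (norm_nonneg _)]
        congr 2
        field_simp
      have hsumA : ∑ y : Fin n → Bool, (c * ‖u y‖ ^ p) ^ (q/p)
          = c ^ (q/p) * St := by
        rw [hSt, Finset.mul_sum]; exact Finset.sum_congr rfl fun y _ => habs (u y)
      have hsumB : ∑ y : Fin n → Bool, (c * ‖v y‖ ^ p) ^ (q/p)
          = c ^ (q/p) * Sf := by
        rw [hSf, Finset.mul_sum]; exact Finset.sum_congr rfl fun y _ => habs (v y)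
      have hsumAB : ∑ y : Fin n → Bool,
          (c * ‖u y‖ ^ p + c * ‖v y‖ ^ p) ^ (q/p)
          = Sig / 2 ^ n := by
        rw [hSig, Finset.sum_div]
        refine Finset.sum_congr rfl fun y _ => ?_
        have hXnn : 0 ≤ ‖u y‖ ^ p + ‖v y‖ ^ p :=
          add_nonneg (abs_rpow_nonneg _ _) (abs_rpow_nonneg _ _)
        rw [← mul_add, Real.mul_rpow hcnn hXnn, hcr,
          Real.div_rpow hXnn (by norm_num : (0:ℝ) ≤ 2)]
        field_simp
      have mink := Real.Lp_add_le_of_nonneg (s := Finset.univ)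
        (f := fun y : Fin n → Bool => c * ‖u y‖ ^ p)
        (g := fun y : Fin n → Bool => c * ‖v y‖ ^ p) hr1
        (fun y _ => mul_nonneg hcnn (abs_rpow_nonneg _ _))
        (fun y _ => mul_nonneg hcnn (abs_rpow_nonneg _ _))
      rw [hsumAB, hsumA, hsumB] at mink
      have hpowc : ∀ S : ℝ, 0 ≤ S → (c ^ (q/p) * S) ^ (1/(q/p)) = c * S ^ (p/q) := by
        intro S hS
        rw [one_div_div]
        rw [Real.mul_rpow (Real.rpow_nonneg hcnn _) hS, ← Real.rpow_mul hcnn]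
        have hqp1 : q / p * (p / q) = 1 := by field_simp
        rw [hqp1, Real.rpow_one]
      rw [hpowc St hStnn, hpowc Sf hSfnn] at mink
      have hc1 : (Sig / 2 ^ n) ^ (p/q) ≤ (Rt + Rf) / 2 ^ (n+1) := by
        rw [one_div_div] at mink
        have hcS : ∀ S : ℝ, 0 ≤ S → c * S ^ (p/q) = (1/2) * ((S / 2 ^ n) ^ (p/q)) := by
          intro S hS
          rw [hc, Real.div_rpow hS h2n.le, Real.rpow_neg h2n.le]
          ring
        rw [hcS St hStnn, hcS Sf hSfnn] at mink
        have hfin : (1/2) * ((St / 2 ^ n) ^ (p/q)) + (1/2) * ((Sf / 2 ^ n) ^ (p/q))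
            ≤ (Rt + Rf) / 2 ^ (n+1) := by
          have e : (Rt + Rf) / 2 ^ (n+1) = (1/2) * (Rt / 2 ^ n) + (1/2) * (Rf / 2 ^ n) := by
            rw [pow_succ]; ring
          rw [e]
          have := add_le_add (mul_le_mul_of_nonneg_left ihT' (by norm_num : (0:ℝ) ≤ 1/2))
            (mul_le_mul_of_nonneg_left ihF' (by norm_num : (0:ℝ) ≤ 1/2))
          linarith
        exact le_trans mink hfin
      -- conclude
      have stepC : (Sig / 2 ^ n) ^ (1/q) ≤ ((Rt + Rf) / 2 ^ (n+1)) ^ (1/p) := by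
        have hSignn' : 0 ≤ Sig / 2 ^ n := div_nonneg hSignn h2n.le
        have h2 := Real.rpow_le_rpow (Real.rpow_nonneg hSignn' _) hc1
          (one_div_nonneg.mpr hp0.le)
        rw [← Real.rpow_mul hSignn'] at h2
        have h5 : p/q * (1/p) = 1/q := by
          field_simp
        rw [h5] at h2
        exact h2
      have hsumf : ∑ x : Fin (n+1) → Bool, ‖f x‖ ^ p = Rt + Rf := by
        rw [sum_cube_succ (fun x => ‖f x‖ ^ p), hRt, hRf,
          ← Finset.sum_add_distrib]
      calc ((∑ x : Fin (n+1) → Bool, ‖Tall z (n+1) f x‖ ^ q) / 2 ^ (n+1)) ^ (1/q)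
          ≤ (Sig / 2 ^ n) ^ (1/q) := stepB
        _ ≤ ((Rt + Rf) / 2 ^ (n+1)) ^ (1/p) := stepC
        _ = ((∑ x : Fin (n+1) → Bool, ‖f x‖ ^ p) / 2 ^ (n+1)) ^ (1/p) := by
            rw [hsumf]

/-- complex hypercontractivity on the Hamming cube, assuming the
two-point inequality for `(p,q,z)`. -/
theorem stmt0 (p q : ℝ) (z : ℂ) (hp : 1 ≤ p) (hpq : p ≤ q)
    (h2pt : TwoPointIneq p q z) (n : ℕ) (hn : 1 ≤ n)
    (f : (Fin n → Bool) → ℂ) :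
    ((∑ x : Fin n → Bool, ‖Tzk z 0 f x‖ ^ q) / 2 ^ n) ^ (1 / q)
      ≤ ((∑ x : Fin n → Bool, ‖f x‖ ^ p) / 2 ^ n) ^ (1 / p) := by
  have heq : ∑ x : Fin n → Bool, ‖Tzk z 0 f x‖ ^ q
      = ∑ x : Fin n → Bool, ‖Tall z n f x‖ ^ q := by
    refine Finset.sum_congr rfl fun x _ => ?_
    rw [tzk0_eq, tall_eq]
  rw [heq]
  exact tall_bound p q z hp hpq h2pt n f

end
end

section
/- Let 1 ≤ p ≤ q < ∞ and z ∈ ℂ, and suppose the two-point inequality holds for (p,q,z). Then for every n ≥ 1 and every f : {-1,1}^n → ℂ one has (𝔼 |T_z f|^q)^{p/q} ≤ 𝔼^1 (𝔼_{n-1} |T_z^1 f|^q)^{p/q}, where 𝔼 is the average over all of {-1,1}^n, 𝔼^1 is the average over the first coordinate, and 𝔼_{n-1} is the average over the last n−1 coordinates. -/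
open MeasureTheory Finset

noncomputable section

lemma merge_low {n : ℕ} (a : Fin 1 → Bool) (b : Fin (n-1) → Bool) (j : Fin n)
    (hj : (j : ℕ) < 1) : merge n 1 a b j = a 0 := by
  simp only [merge, dif_pos hj]
  congr 1
  exact Subsingleton.elim _ _

lemma merge_high {n : ℕ} (a a' : Fin 1 → Bool) (b : Fin (n-1) → Bool) (j : Fin n)
    (hj : ¬ (j : ℕ) < 1) : merge n 1 a b j = merge n 1 a' b j := by
  simp only [merge, dif_neg hj]

def mergeEquiv (n : ℕ) (hn : 1 ≤ n) : Bool × (Fin (n-1) → Bool) ≃ (Fin n → Bool) where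
  toFun p := merge n 1 (fun _ => p.1) p.2
  invFun x := (x ⟨0, hn⟩, fun i => x ⟨(i : ℕ) + 1, by have := i.isLt; omega⟩)
  left_inv p := by
    obtain ⟨c, b⟩ := p
    refine Prod.ext ?_ ?_
    · show merge n 1 (fun _ => c) b ⟨0, hn⟩ = c
      simp [merge]
    · funext i
      show merge n 1 (fun _ => c) b ⟨(i : ℕ) + 1, _⟩ = b i
      simp only [merge, Fin.val_mk]
      rw [dif_neg (by omega)]
      congr 1
  right_inv x := by
    funext j
    show merge n 1 _ _ j = x j
    by_cases hj : (j : ℕ) < 1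
    · simp only [merge, dif_pos hj]
      congr 1
      exact Fin.ext (by simp only [Fin.val_mk]; omega)
    · simp only [merge, dif_neg hj]
      congr 1
      exact Fin.ext (by simp only [Fin.val_mk]; omega)

lemma walsh_merge_congr {n : ℕ} (hn : 1 ≤ n) (S : Finset (Fin n))
    (h0 : (⟨0, hn⟩ : Fin n) ∉ S) (a a' : Fin 1 → Bool) (b : Fin (n-1) → Bool) :
    walsh S (merge n 1 a b) = walsh S (merge n 1 a' b) := by
  refine Finset.prod_congr rfl fun j hj => ?_
  have hj0 : ¬ (j : ℕ) < 1 := by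
    intro h
    exact h0 (by rwa [show (⟨0, hn⟩ : Fin n) = j from Fin.ext (by simp only [Fin.val_mk]; omega)])
  rw [merge_high a a' b j hj0]

lemma tzk_merge_decomp {n : ℕ} (hn : 1 ≤ n) (z : ℂ) (f : (Fin n → Bool) → ℂ)
    (a : Fin 1 → Bool) (b : Fin (n-1) → Bool) :
    Tzk z 0 f (merge n 1 a b)
      = (Tzk z 1 f (merge n 1 (fun _ => true) b) + Tzk z 1 f (merge n 1 (fun _ => false) b)) / 2
        + ((sgn (a 0) : ℂ)) * z *
          ((Tzk z 1 f (merge n 1 (fun _ => true) b) - Tzk z 1 f (merge n 1 (fun _ => false) b)) / 2) := by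
  unfold Tzk
  rw [← Finset.sum_add_distrib, ← Finset.sum_sub_distrib, Finset.sum_div, Finset.sum_div,
    Finset.mul_sum, ← Finset.sum_add_distrib]
  refine Finset.sum_congr rfl fun S _ => ?_
  have hfil0 : S.filter (fun j : Fin n => 0 ≤ (j : ℕ)) = S :=
    Finset.filter_true_of_mem fun j _ => Nat.zero_le _
  rw [hfil0]
  set i0 : Fin n := ⟨0, hn⟩ with hi0
  by_cases h0 : i0 ∈ S
  · have hfil : S.filter (fun j : Fin n => 1 ≤ (j : ℕ)) = S.erase i0 := by
      ext j
      simp only [Finset.mem_filter, Finset.mem_erase]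
      constructor
      · rintro ⟨hj, h1⟩
        refine ⟨fun hji => ?_, hj⟩
        rw [hji] at h1
        simp [hi0] at h1
      · rintro ⟨hne, hj⟩
        refine ⟨hj, ?_⟩
        have : (j : ℕ) ≠ 0 := fun h => hne (Fin.ext (by simp only [hi0, Fin.val_mk]; omega))
        omega
    rw [hfil]
    have hW : ∀ a' : Fin 1 → Bool,
        walsh S (merge n 1 a' b)
          = (sgn (a' 0) : ℂ) * walsh (S.erase i0) (merge n 1 a' b) := by
      intro a'
      rw [walsh, ← Finset.mul_prod_erase S _ h0, merge_low a' b i0 (by simp [hi0])]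
      rfl
    rw [hW a, hW (fun _ => true), hW (fun _ => false),
      walsh_merge_congr hn _ (Finset.notMem_erase _ _) (fun _ => true) a b,
      walsh_merge_congr hn _ (Finset.notMem_erase _ _) (fun _ => false) a b,
      ← Finset.card_erase_add_one h0, pow_succ]
    simp only [sgn, if_true, if_false]
    push_cast
    ring
  · have hfil : S.filter (fun j : Fin n => 1 ≤ (j : ℕ)) = S := by
      refine Finset.filter_true_of_mem fun j hj => ?_
      have : (j : ℕ) ≠ 0 := fun h =>
        h0 (by rwa [show i0 = j from Fin.ext (by simp only [hi0, Fin.val_mk]; omega)])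
      omega
    rw [hfil, walsh_merge_congr hn S h0 (fun _ => true) a b,
      walsh_merge_congr hn S h0 (fun _ => false) a b]
    ring

lemma core_ineq {ι : Type*} [Fintype ι] (p q : ℝ) (hp : 1 ≤ p) (hpq : p ≤ q)
    (z : ℂ) (h2pt : TwoPointIneq p q z) (N : ℝ) (hN : 0 < N)
    (gp gm : ι → ℂ) :
    ((∑ b : ι, (‖(gp b + gm b) / 2 + z * ((gp b - gm b) / 2)‖ ^ q
          + ‖(gp b + gm b) / 2 - z * ((gp b - gm b) / 2)‖ ^ q)) / (2 * N)) ^ (p / q)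
      ≤ (((∑ b : ι, ‖gp b‖ ^ q) / N) ^ (p / q)
          + ((∑ b : ι, ‖gm b‖ ^ q) / N) ^ (p / q)) / 2 := by
  have hq : 1 ≤ q := hp.trans hpq
  have hp0 : 0 < p := lt_of_lt_of_le one_pos hp
  have hq0 : 0 < q := lt_of_lt_of_le one_pos hq
  set e := p / q with he
  set r := q / p with hr
  have he0 : 0 < e := div_pos hp0 hq0
  have hr1 : 1 ≤ r := (one_le_div hp0).mpr hpq
  have hr0 : 0 < r := lt_of_lt_of_le one_pos hr1
  have her : e * r = 1 := by rw [he, hr]; field_simp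
  have hpr : p * r = q := by rw [hr]; field_simp
  have hEr : e = 1 / r := by rw [he, hr]; rw [one_div_div]
  set U : ι → ℝ := fun b => ‖(gp b + gm b) / 2 + z * ((gp b - gm b) / 2)‖ ^ q with hU
  set V : ι → ℝ := fun b => ‖(gp b + gm b) / 2 - z * ((gp b - gm b) / 2)‖ ^ q with hV
  set sp : ι → ℝ := fun b => ‖gp b‖ ^ p with hsp
  set tp : ι → ℝ := fun b => ‖gm b‖ ^ p with htp
  set c : ι → ℝ := fun b => ((U b + V b) / 2) ^ e with hc
  set d : ι → ℝ := fun b => (sp b + tp b) / 2 with hd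
  have hU0 : ∀ b, 0 ≤ U b := fun b => by
    simp only [hU]; exact Real.rpow_nonneg (norm_nonneg _) q
  have hV0 : ∀ b, 0 ≤ V b := fun b => by
    simp only [hV]; exact Real.rpow_nonneg (norm_nonneg _) q
  have hUV0 : ∀ b, 0 ≤ (U b + V b) / 2 := fun b => by
    have := hU0 b; have := hV0 b; positivity
  have hsp0 : ∀ b, 0 ≤ sp b := fun b => by
    simp only [hsp]; exact Real.rpow_nonneg (norm_nonneg _) p
  have htp0 : ∀ b, 0 ≤ tp b := fun b => by
    simp only [htp]; exact Real.rpow_nonneg (norm_nonneg _) p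
  have hd0 : ∀ b, 0 ≤ d b := fun b => by
    have := hsp0 b; have := htp0 b; simp only [hd]; positivity
  have hc0 : ∀ b, 0 ≤ c b := fun b => Real.rpow_nonneg (hUV0 b) e
  have key1 : ∀ b, c b ≤ d b := by
    intro b
    have h := h2pt ((gp b + gm b) / 2) ((gp b - gm b) / 2)
    have hplus : (gp b + gm b) / 2 + (gp b - gm b) / 2 = gp b := by ring
    have hminus : (gp b + gm b) / 2 - (gp b - gm b) / 2 = gm b := by ring
    rw [hplus, hminus] at h
    have h2 := Real.rpow_le_rpow (Real.rpow_nonneg (hUV0 b) _) h hp0.le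
    rw [← Real.rpow_mul (hUV0 b), ← Real.rpow_mul (hd0 b)] at h2
    rw [one_div_mul_cancel hp0.ne'] at h2
    rw [Real.rpow_one] at h2
    have : (1 : ℝ) / q * p = e := by rw [he]; ring
    rw [this] at h2
    exact h2
  have key2 : ∀ b, (c b) ^ r = (U b + V b) / 2 := by
    intro b
    rw [hc, ← Real.rpow_mul (hUV0 b), her, Real.rpow_one]
  have hsum_c : ∑ b : ι, (c b) ^ r = (∑ b : ι, (U b + V b)) / 2 := by
    rw [Finset.sum_div]
    exact Finset.sum_congr rfl fun b _ => key2 b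
  have hSc0 : 0 ≤ ∑ b : ι, (c b) ^ r := Finset.sum_nonneg fun b _ => Real.rpow_nonneg (hc0 b) r
  have hSd0 : 0 ≤ ∑ b : ι, (d b) ^ r := Finset.sum_nonneg fun b _ => Real.rpow_nonneg (hd0 b) r
  have hSp0 : 0 ≤ ∑ b : ι, ‖gp b‖ ^ q :=
    Finset.sum_nonneg fun b _ => Real.rpow_nonneg (norm_nonneg _) q
  have hTp0 : 0 ≤ ∑ b : ι, ‖gm b‖ ^ q :=
    Finset.sum_nonneg fun b _ => Real.rpow_nonneg (norm_nonneg _) q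
  have mink : (∑ b : ι, (d b) ^ r) ^ (1 / r)
      ≤ ((∑ b : ι, ‖gp b‖ ^ q) ^ (1/r)
          + (∑ b : ι, ‖gm b‖ ^ q) ^ (1/r)) / 2 := by
    have M := Real.Lp_add_le (Finset.univ : Finset ι)
      (fun b => sp b / 2) (fun b => tp b / 2) hr1
    have e1 : ∀ b : ι, |sp b / 2 + tp b / 2| ^ r = (d b) ^ r := by
      intro b
      rw [abs_of_nonneg (by have := hsp0 b; have := htp0 b; positivity)]
      congr 1
      rw [hd]
      ring
    have e2 : ∀ b : ι, |sp b / 2| ^ r = ‖gp b‖ ^ q / (2 : ℝ) ^ r := by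
      intro b
      rw [abs_of_nonneg (by have := hsp0 b; positivity),
        Real.div_rpow (hsp0 b) (by norm_num), hsp, ← Real.rpow_mul (norm_nonneg _), hpr]
    have e3 : ∀ b : ι, |tp b / 2| ^ r = ‖gm b‖ ^ q / (2 : ℝ) ^ r := by
      intro b
      rw [abs_of_nonneg (by have := htp0 b; positivity),
        Real.div_rpow (htp0 b) (by norm_num), htp, ← Real.rpow_mul (norm_nonneg _), hpr]
    rw [Finset.sum_congr rfl fun b _ => e1 b, Finset.sum_congr rfl fun b _ => e2 b,
      Finset.sum_congr rfl fun b _ => e3 b, ← Finset.sum_div, ← Finset.sum_div] at M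
    have h2r : ((2 : ℝ) ^ r) ^ (1 / r) = 2 := by
      rw [← Real.rpow_mul (by norm_num), mul_one_div_cancel hr0.ne', Real.rpow_one]
    rw [Real.div_rpow hSp0 (Real.rpow_nonneg (by norm_num) r),
      Real.div_rpow hTp0 (Real.rpow_nonneg (by norm_num) r), h2r] at M
    calc (∑ b : ι, (d b) ^ r) ^ (1 / r) ≤ _ := M
      _ = _ := by ring
  have hNe0 : (0:ℝ) < N ^ e := Real.rpow_pos_of_pos hN e
  calc ((∑ b : ι, (U b + V b)) / (2 * N)) ^ e
      = ((∑ b : ι, (c b) ^ r) / N) ^ e := by rw [hsum_c, div_div]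
    _ = (∑ b : ι, (c b) ^ r) ^ e / N ^ e := Real.div_rpow hSc0 hN.le e
    _ ≤ (∑ b : ι, (d b) ^ r) ^ e / N ^ e := by
        apply div_le_div_of_nonneg_right ?_ hNe0.le
        exact Real.rpow_le_rpow hSc0
          (Finset.sum_le_sum fun b _ => Real.rpow_le_rpow (hc0 b) (key1 b) hr0.le) he0.le
    _ ≤ (((∑ b : ι, ‖gp b‖ ^ q) ^ e
          + (∑ b : ι, ‖gm b‖ ^ q) ^ e) / 2) / N ^ e := by
        apply div_le_div_of_nonneg_right ?_ hNe0.le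
        rw [hEr]
        exact mink
    _ = (((∑ b : ι, ‖gp b‖ ^ q) / N) ^ e
          + ((∑ b : ι, ‖gm b‖ ^ q) / N) ^ e) / 2 := by
        rw [Real.div_rpow hSp0 hN.le, Real.div_rpow hTp0 hN.le]
        ring

/-- the one-step inequality
`(𝔼 |T_z f|^q)^{p/q} ≤ 𝔼^1 (𝔼_{n-1} |T_z^1 f|^q)^{p/q}`. -/
theorem stmt1 (p q : ℝ) (z : ℂ) (hp : 1 ≤ p) (hpq : p ≤ q)
    (h2pt : TwoPointIneq p q z) (n : ℕ) (hn : 1 ≤ n)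
    (f : (Fin n → Bool) → ℂ) :
    ((∑ x : Fin n → Bool, ‖Tzk z 0 f x‖ ^ q) / 2 ^ n) ^ (p / q)
      ≤ (∑ a : Fin 1 → Bool,
          ((∑ b : Fin (n - 1) → Bool,
              ‖Tzk z 1 f (merge n 1 a b)‖ ^ q) / 2 ^ (n - 1)) ^ (p / q)) / 2 := by
  have hRsum : ∀ (G : (Fin 1 → Bool) → ℝ),
      (∑ a : Fin 1 → Bool, G a) = G (fun _ => true) + G (fun _ => false) := by
    intro G
    rw [← (Equiv.funUnique (Fin 1) Bool).symm.sum_comp G, Fintype.sum_bool]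
    have hcc : ∀ c : Bool, (Equiv.funUnique (Fin 1) Bool).symm c = fun _ => c := fun c => by
      rw [Equiv.symm_apply_eq]
      rfl
    rw [hcc true, hcc false]
  have hLsum : (∑ x : Fin n → Bool, ‖Tzk z 0 f x‖ ^ q)
      = ∑ b : Fin (n-1) → Bool,
          (‖Tzk z 0 f (merge n 1 (fun _ => true) b)‖ ^ q
           + ‖Tzk z 0 f (merge n 1 (fun _ => false) b)‖ ^ q) := by
    rw [← (mergeEquiv n hn).sum_comp (fun x => ‖Tzk z 0 f x‖ ^ q),
        Fintype.sum_prod_type, Fintype.sum_bool, ← Finset.sum_add_distrib]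
    rfl
  have hT1 : ∀ b : Fin (n-1) → Bool, Tzk z 0 f (merge n 1 (fun _ => true) b)
      = (Tzk z 1 f (merge n 1 (fun _ => true) b) + Tzk z 1 f (merge n 1 (fun _ => false) b)) / 2
        + z * ((Tzk z 1 f (merge n 1 (fun _ => true) b)
            - Tzk z 1 f (merge n 1 (fun _ => false) b)) / 2) := by
    intro b
    rw [tzk_merge_decomp hn z f (fun _ => true) b]
    simp only [sgn, if_true]
    push_cast
    ring
  have hT2 : ∀ b : Fin (n-1) → Bool, Tzk z 0 f (merge n 1 (fun _ => false) b)
      = (Tzk z 1 f (merge n 1 (fun _ => true) b) + Tzk z 1 f (merge n 1 (fun _ => false) b)) / 2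
        - z * ((Tzk z 1 f (merge n 1 (fun _ => true) b)
            - Tzk z 1 f (merge n 1 (fun _ => false) b)) / 2) := by
    intro b
    rw [tzk_merge_decomp hn z f (fun _ => false) b]
    simp only [sgn, if_false]
    push_cast
    ring
  have h2n : (2:ℝ) ^ n = 2 * 2 ^ (n-1) := by
    conv_lhs => rw [show n = (n-1)+1 by omega]
    rw [pow_succ]
    ring
  rw [hLsum, hRsum, h2n,
    Finset.sum_congr rfl fun b _ => by rw [hT1 b, hT2 b]]
  exact core_ineq p q hp hpq z h2pt ((2:ℝ) ^ (n-1)) (by positivity)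
    (fun b => Tzk z 1 f (merge n 1 (fun _ => true) b))
    (fun b => Tzk z 1 f (merge n 1 (fun _ => false) b))


end
end

section
/- (Beckner's discrete monotonicity.) Let 1 ≤ p ≤ q < ∞ and z ∈ ℂ, and suppose the two-point inequality holds for (p,q,z). Then for every n ≥ 1 and every f : {-1,1}^n → ℂ, the map k ↦ 𝔼^k (𝔼_{n-k} |T_z^k f|^q)^{p/q} is nondecreasing for 0 ≤ k ≤ n, where 𝔼^k denotes the average over the first k coordinates and 𝔼_{n-k} the average over the last n−k coordinates, both with respect to the uniform measure on {-1,1}. -/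
open MeasureTheory Finset

noncomputable section

namespace Stmt2Aux

lemma walsh_update_not_mem {n : ℕ} {S : Finset (Fin n)} {i : Fin n} (hi : i ∉ S)
    (x : Fin n → Bool) (c : Bool) : walsh S (Function.update x i c) = walsh S x := by
  unfold walsh
  refine Finset.prod_congr rfl fun j hj => ?_
  rw [Function.update_of_ne (by rintro rfl; exact hi hj)]

lemma walsh_update_mem {n : ℕ} {S : Finset (Fin n)} {i : Fin n} (hi : i ∈ S)
    (x : Fin n → Bool) : walsh S (Function.update x i (!(x i))) = - walsh S x := by
  unfold walsh
  rw [← Finset.mul_prod_erase S _ hi, ← Finset.mul_prod_erase S (fun j => (sgn (x j) : ℂ)) hi]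
  have h1 : ∏ j ∈ S.erase i, (sgn (Function.update x i (!(x i)) j) : ℂ)
      = ∏ j ∈ S.erase i, (sgn (x j) : ℂ) :=
    Finset.prod_congr rfl fun j hj => by
      rw [Function.update_of_ne (Finset.ne_of_mem_erase hj)]
  rw [h1, Function.update_self]
  have h2 : (sgn (!(x i)) : ℝ) = - sgn (x i) := by cases x i <;> simp [sgn]
  rw [h2]
  push_cast
  ring

lemma card_filter_succ {n k : ℕ} (hk : k < n) (S : Finset (Fin n)) :
    (S.filter (fun j : Fin n => k ≤ (j : ℕ))).card
      = (S.filter (fun j : Fin n => k + 1 ≤ (j : ℕ))).card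
        + (if (⟨k, hk⟩ : Fin n) ∈ S then 1 else 0) := by
  have h1 : S.filter (fun j : Fin n => k ≤ (j : ℕ))
      = S.filter (fun j : Fin n => k + 1 ≤ (j : ℕ) ∨ j = ⟨k, hk⟩) := by
    refine Finset.filter_congr fun j _ => ?_
    constructor
    · intro h
      rcases eq_or_lt_of_le h with h' | h'
      · exact Or.inr (Fin.ext h'.symm)
      · exact Or.inl h'
    · rintro (h | rfl)
      · omega
      · simp
  rw [h1, Finset.filter_or, Finset.card_union_of_disjoint, Finset.filter_eq']
  · split <;> simp
  · rw [Finset.disjoint_left]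
    rintro j hj hj'
    simp only [Finset.mem_filter] at hj hj'
    rcases hj' with ⟨-, rfl⟩
    simp at hj

lemma Tzk_succ {n : ℕ} (z : ℂ) {k : ℕ} (hk : k < n) (f : (Fin n → Bool) → ℂ)
    (x : Fin n → Bool) :
    Tzk z k f x =
      (Tzk z (k+1) f x + Tzk z (k+1) f (Function.update x ⟨k, hk⟩ (!(x ⟨k, hk⟩)))) / 2
      + z * ((Tzk z (k+1) f x
          - Tzk z (k+1) f (Function.update x ⟨k, hk⟩ (!(x ⟨k, hk⟩)))) / 2) := by
  set i : Fin n := ⟨k, hk⟩ with hi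
  set x' := Function.update x i (!(x i)) with hx'
  have key : ∀ S : Finset (Fin n),
      z ^ (S.filter (fun j : Fin n => k ≤ (j : ℕ))).card * walshCoeff f S * walsh S x
      = (z ^ (S.filter (fun j : Fin n => k + 1 ≤ (j : ℕ))).card * walshCoeff f S * walsh S x
          + z ^ (S.filter (fun j : Fin n => k + 1 ≤ (j : ℕ))).card * walshCoeff f S
              * walsh S x') / 2
        + z * ((z ^ (S.filter (fun j : Fin n => k + 1 ≤ (j : ℕ))).card * walshCoeff f S
              * walsh S x
          - z ^ (S.filter (fun j : Fin n => k + 1 ≤ (j : ℕ))).card * walshCoeff f S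
              * walsh S x') / 2) := by
    intro S
    by_cases hiS : i ∈ S
    · rw [hx', walsh_update_mem hiS x, card_filter_succ hk S, if_pos hiS]
      ring
    · rw [hx', walsh_update_not_mem hiS x, card_filter_succ hk S, if_neg hiS]
      ring
  unfold Tzk
  rw [← Finset.sum_add_distrib, ← Finset.sum_sub_distrib, Finset.sum_div, Finset.sum_div,
    Finset.mul_sum, ← Finset.sum_add_distrib]
  exact Finset.sum_congr rfl fun S _ => key S

lemma twopoint' {p q : ℝ} {z : ℂ} (hp : 1 ≤ p) (hpq : p ≤ q) (h : TwoPointIneq p q z)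
    (c d : ℂ) :
    (‖(c + d) / 2 + z * ((c - d) / 2)‖ ^ q
      + ‖(c + d) / 2 - z * ((c - d) / 2)‖ ^ q) / 2
      ≤ ((‖c‖ ^ p + ‖d‖ ^ p) / 2) ^ (q / p) := by
  have hp0 : (0:ℝ) < p := by linarith
  have hq0 : (0:ℝ) < q := by linarith
  have h2 := h ((c + d) / 2) ((c - d) / 2)
  have e1 : (c + d) / 2 + (c - d) / 2 = c := by ring
  have e2 : (c + d) / 2 - (c - d) / 2 = d := by ring
  rw [e1, e2] at h2
  set L := (‖(c + d) / 2 + z * ((c - d) / 2)‖ ^ q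
      + ‖(c + d) / 2 - z * ((c - d) / 2)‖ ^ q) / 2 with hL
  set R := (‖c‖ ^ p + ‖d‖ ^ p) / 2 with hR
  have hL0 : 0 ≤ L := by
    rw [hL]
    have := Real.rpow_nonneg (norm_nonneg ((c + d) / 2 + z * ((c - d) / 2))) q
    have := Real.rpow_nonneg (norm_nonneg ((c + d) / 2 - z * ((c - d) / 2))) q
    linarith
  have hR0 : 0 ≤ R := by
    rw [hR]
    have := Real.rpow_nonneg (norm_nonneg c) p
    have := Real.rpow_nonneg (norm_nonneg d) p
    linarith
  calc L = (L ^ (1 / q)) ^ q := by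
        rw [← Real.rpow_mul hL0, one_div_mul_cancel (ne_of_gt hq0), Real.rpow_one]
    _ ≤ (R ^ (1 / p)) ^ q :=
        Real.rpow_le_rpow (Real.rpow_nonneg hL0 _) h2 hq0.le
    _ = R ^ (q / p) := by
        rw [← Real.rpow_mul hR0]
        congr 1
        field_simp

def exta {k : ℕ} (a : Fin k → Bool) (ε : Bool) : Fin (k + 1) → Bool :=
  fun j => if h : (j : ℕ) < k then a ⟨j, h⟩ else ε

def tl {n k : ℕ} (b : Fin (n - k) → Bool) : Fin (n - (k + 1)) → Bool :=
  fun j => b ⟨(j : ℕ) + 1, by have := j.isLt; omega⟩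

lemma merge_apply_k {n k : ℕ} (hk : k < n) (a : Fin k → Bool) (b : Fin (n - k) → Bool) :
    merge n k a b ⟨k, hk⟩ = b ⟨0, by omega⟩ := by
  unfold merge
  rw [dif_neg (by simp)]
  congr 1
  exact Fin.ext (by simp)

lemma merge_update {n k : ℕ} (hk : k < n) (a : Fin k → Bool) (b : Fin (n - k) → Bool)
    (c : Bool) :
    Function.update (merge n k a b) ⟨k, hk⟩ c
      = merge n k a (Function.update b ⟨0, by omega⟩ c) := by
  funext j
  by_cases hj : j = (⟨k, hk⟩ : Fin n)
  · subst hj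
    rw [Function.update_self, merge_apply_k hk, Function.update_self]
  · rw [Function.update_of_ne hj]
    have hjk : (j : ℕ) ≠ k := fun h => hj (Fin.ext h)
    unfold merge
    by_cases hlt : (j : ℕ) < k
    · rw [dif_pos hlt, dif_pos hlt]
    · rw [dif_neg hlt, dif_neg hlt,
        Function.update_of_ne (by exact Fin.ne_of_val_ne (by simp; omega))]

lemma merge_exta {n k : ℕ} (hk : k < n) (a : Fin k → Bool) (ε : Bool)
    (b : Fin (n - k) → Bool) :
    merge n k a (Function.update b ⟨0, by omega⟩ ε) = merge n (k + 1) (exta a ε) (tl b) := by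
  funext j
  rcases lt_trichotomy (j : ℕ) k with h | h | h
  · unfold merge
    rw [dif_pos h, dif_pos (by omega)]
    unfold exta
    rw [dif_pos (by simpa using h)]
  · unfold merge
    rw [dif_neg (by omega), dif_pos (by omega)]
    unfold exta
    rw [dif_neg (by simp; omega)]
    rw [Function.update_apply, if_pos (Fin.ext (by simp; omega))]
  · unfold merge
    rw [dif_neg (by omega), dif_neg (by omega)]
    rw [Function.update_of_ne (Fin.ne_of_val_ne (by simp; omega))]
    unfold tl
    congr 1
    exact Fin.ext (by simp; omega)

lemma sum_flip {m : ℕ} (hm : 0 < m) (F : (Fin m → Bool) → ℝ) :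
    ∑ b : Fin m → Bool, F b
      = ∑ b : Fin m → Bool, F (Function.update b ⟨0, hm⟩ (!(b ⟨0, hm⟩))) := by
  have hinv : Function.Involutive
      (fun b : Fin m → Bool => Function.update b ⟨0, hm⟩ (!(b ⟨0, hm⟩))) := by
    intro b
    simp [Function.update_self, Function.update_idem, Function.update_eq_self]
  exact (Fintype.sum_bijective _ hinv.bijective _ F (fun b => rfl)).symm

def tailEquiv (n k : ℕ) (hk : k < n) :
    (Fin (n - k) → Bool) ≃ Bool × (Fin (n - (k + 1)) → Bool) where
  toFun b := (b ⟨0, by omega⟩, tl b)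
  invFun cb j := if h : (j : ℕ) = 0 then cb.1
    else cb.2 ⟨(j : ℕ) - 1, by have := j.isLt; omega⟩
  left_inv b := by
    funext j
    by_cases h : (j : ℕ) = 0
    · dsimp only
      rw [dif_pos h]
      exact congrArg b (Fin.ext h.symm)
    · dsimp only
      rw [dif_neg h]
      exact congrArg b (Fin.ext (by simp [tl]; omega))
  right_inv := by
    rintro ⟨c, b'⟩
    dsimp only
    refine Prod.ext ?_ ?_
    · dsimp only
      rw [dif_pos rfl]
    · funext j
      dsimp only [tl]
      rw [dif_neg (by simp)]
      exact congrArg b' (Fin.ext (by simp))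

lemma sum_tl {n k : ℕ} (hk : k < n) (F : (Fin (n - (k + 1)) → Bool) → ℝ) :
    ∑ b : Fin (n - k) → Bool, F (tl b)
      = 2 * ∑ b' : Fin (n - (k + 1)) → Bool, F b' := by
  calc ∑ b : Fin (n - k) → Bool, F (tl b)
      = ∑ y : Bool × (Fin (n - (k + 1)) → Bool), F y.2 :=
        Fintype.sum_bijective (tailEquiv n k hk) (tailEquiv n k hk).bijective _ _
          (fun b => rfl)
    _ = 2 * ∑ b' : Fin (n - (k + 1)) → Bool, F b' := by
        rw [Fintype.sum_prod_type, Fintype.sum_bool, two_mul]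

def extaEquiv (k : ℕ) : (Fin k → Bool) × Bool ≃ (Fin (k + 1) → Bool) where
  toFun aε := exta aε.1 aε.2
  invFun a' := (fun j => a' ⟨j, by omega⟩, a' ⟨k, by omega⟩)
  left_inv := by
    rintro ⟨a, ε⟩
    dsimp only
    refine Prod.ext ?_ ?_
    · funext j
      dsimp only [exta]
      rw [dif_pos (by simpa using j.isLt)]
    · dsimp only [exta]
      rw [dif_neg (by simp)]
  right_inv := by
    intro a'
    funext j
    dsimp only [exta]
    by_cases h : (j : ℕ) < k
    · rw [dif_pos h]
    · rw [dif_neg h]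
      exact congrArg a' (Fin.ext (by simp; omega))

lemma sum_exta {k : ℕ} (Φ : (Fin (k + 1) → Bool) → ℝ) :
    ∑ a' : Fin (k + 1) → Bool, Φ a'
      = ∑ a : Fin k → Bool, (Φ (exta a true) + Φ (exta a false)) := by
  calc ∑ a' : Fin (k + 1) → Bool, Φ a'
      = ∑ aε : (Fin k → Bool) × Bool, Φ (exta aε.1 aε.2) :=
        (Fintype.sum_bijective (extaEquiv k) (extaEquiv k).bijective _ _
          (fun aε => rfl)).symm
    _ = ∑ a : Fin k → Bool, (Φ (exta a true) + Φ (exta a false)) := by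
        rw [Fintype.sum_prod_type]
        exact Finset.sum_congr rfl fun a _ => by rw [Fintype.sum_bool]

lemma coef_eq {r : ℝ} (hr : 1 ≤ r) {D t : ℝ} (hD : 0 < D) (ht : 0 ≤ t) :
    (2 * t / 2 ^ r) ^ (1 / r) / (2 * D) ^ (1 / r) = (t / D) ^ (1 / r) / 2 := by
  have hr0 : (0:ℝ) < r := by linarith
  have h2r : (0:ℝ) < (2:ℝ) ^ r := Real.rpow_pos_of_pos two_pos r
  rw [Real.div_rpow (by positivity) h2r.le, Real.mul_rpow (by norm_num) ht,
    Real.mul_rpow (by norm_num) hD.le, Real.div_rpow ht hD.le,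
    ← Real.rpow_mul (by norm_num : (0:ℝ) ≤ 2), mul_one_div_cancel hr0.ne', Real.rpow_one]
  have h21r : (0:ℝ) < (2:ℝ) ^ (1 / r) := Real.rpow_pos_of_pos two_pos _
  have hD1r : (0:ℝ) < D ^ (1 / r) := Real.rpow_pos_of_pos hD _
  field_simp

lemma key_a {p q : ℝ} {z : ℂ} (hp : 1 ≤ p) (hpq : p ≤ q) (h2pt : TwoPointIneq p q z)
    {n k : ℕ} (hk : k < n) (f : (Fin n → Bool) → ℂ) (a : Fin k → Bool) :
    ((∑ b : Fin (n - k) → Bool,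
        ‖Tzk z k f (merge n k a b)‖ ^ q) / 2 ^ (n - k)) ^ (p / q)
      ≤ (((∑ b' : Fin (n - (k + 1)) → Bool,
            ‖Tzk z (k + 1) f (merge n (k + 1) (exta a true) b')‖ ^ q)
              / 2 ^ (n - (k + 1))) ^ (p / q)
        + ((∑ b' : Fin (n - (k + 1)) → Bool,
            ‖Tzk z (k + 1) f (merge n (k + 1) (exta a false) b')‖ ^ q)
              / 2 ^ (n - (k + 1))) ^ (p / q)) / 2 := by
  have hp0 : (0:ℝ) < p := by linarith
  have hq0 : (0:ℝ) < q := by linarith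
  have hr1 : 1 ≤ q / p := (one_le_div hp0).mpr hpq
  have hr0 : (0:ℝ) < q / p := by linarith
  have hpq' : p / q = 1 / (q / p) := by rw [one_div_div]
  have hpr : p * (q / p) = q := by field_simp
  have hmk : 0 < n - k := by omega
  set r := q / p with hr_def
  set g := Tzk z (k + 1) f with hg
  set u : (Fin (n - k) → Bool) → ℝ := fun b =>
    ‖g (merge n k a (Function.update b ⟨0, hmk⟩ true))‖ ^ p / 2 with hu
  set v : (Fin (n - k) → Bool) → ℝ := fun b =>
    ‖g (merge n k a (Function.update b ⟨0, hmk⟩ false))‖ ^ p / 2 with hv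
  set F : (Fin (n - k) → Bool) → ℝ := fun b =>
    ‖Tzk z k f (merge n k a b)‖ ^ q with hF
  set D : ℝ := 2 ^ (n - (k + 1)) with hD
  set St : ℝ := ∑ b' : Fin (n - (k + 1)) → Bool,
    ‖g (merge n (k + 1) (exta a true) b')‖ ^ q with hSt
  set Sf : ℝ := ∑ b' : Fin (n - (k + 1)) → Bool,
    ‖g (merge n (k + 1) (exta a false) b')‖ ^ q with hSf
  have hDpos : (0:ℝ) < D := by rw [hD]; positivity
  have hD2 : (2:ℝ) ^ (n - k) = 2 * D := by
    rw [hD, ← pow_succ']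
    congr 1
    omega
  have hSt0 : 0 ≤ St := by
    rw [hSt]
    exact Finset.sum_nonneg fun b' _ => Real.rpow_nonneg (norm_nonneg _) q
  have hSf0 : 0 ≤ Sf := by
    rw [hSf]
    exact Finset.sum_nonneg fun b' _ => Real.rpow_nonneg (norm_nonneg _) q
  have hu0 : ∀ b, 0 ≤ u b := fun b => by
    rw [hu]
    exact div_nonneg (Real.rpow_nonneg (norm_nonneg _) p) (by norm_num)
  have hv0 : ∀ b, 0 ≤ v b := fun b => by
    rw [hv]
    exact div_nonneg (Real.rpow_nonneg (norm_nonneg _) p) (by norm_num)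
  have hF0 : ∀ b, 0 ≤ F b := fun b => by
    rw [hF]
    exact Real.rpow_nonneg (norm_nonneg _) q
  -- Step A : two-point inequality applied on each σ-orbit
  have hStepA : (∑ b : Fin (n - k) → Bool, F b)
      ≤ ∑ b : Fin (n - k) → Bool, (u b + v b) ^ r := by
    have hflip := sum_flip hmk F
    have e1 : (∑ b : Fin (n - k) → Bool, F b)
        = ∑ b : Fin (n - k) → Bool,
            (F b + F (Function.update b ⟨0, hmk⟩ (!(b ⟨0, hmk⟩)))) / 2 := by
      rw [← Finset.sum_div, Finset.sum_add_distrib, ← hflip]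
      ring
    rw [e1]
    refine Finset.sum_le_sum fun b _ => ?_
    simp only [hF]
    set x := merge n k a b with hx
    set x' := Function.update x (⟨k, hk⟩ : Fin n) (!(x ⟨k, hk⟩)) with hx'
    have hxi : x ⟨k, hk⟩ = b ⟨0, hmk⟩ := merge_apply_k hk a b
    have hMσ : x' = merge n k a (Function.update b ⟨0, hmk⟩ (!(b ⟨0, hmk⟩))) := by
      rw [hx', hxi]
      exact merge_update hk a b (!(b ⟨0, hmk⟩))
    have hx'' : Function.update x' (⟨k, hk⟩ : Fin n) (!(x' ⟨k, hk⟩)) = x := by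
      rw [hx']
      simp [Function.update_self, Function.update_idem, Function.update_eq_self]
    have hTx : Tzk z k f x = (g x + g x') / 2 + z * ((g x - g x') / 2) := by
      rw [hg, hx']
      exact Tzk_succ z hk f x
    have hTx' : Tzk z k f x' = (g x + g x') / 2 - z * ((g x - g x') / 2) := by
      have h0 := Tzk_succ z hk f x'
      rw [hx''] at h0
      rw [h0, hg]
      ring
    have h2p := twopoint' hp hpq h2pt (g x) (g x')
    rw [← hTx, ← hTx'] at h2p
    have hbase : (‖g x‖ ^ p + ‖g x'‖ ^ p) / 2 = u b + v b := by
      simp only [hu, hv]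
      cases hb : b ⟨0, hmk⟩ with
      | true =>
          have e2 : Function.update b ⟨0, hmk⟩ true = b := by
            rw [← hb]
            exact Function.update_eq_self _ b
          simp only [hb, Bool.not_true] at hMσ
          rw [e2, ← hx, ← hMσ]
          ring
      | false =>
          have e2 : Function.update b ⟨0, hmk⟩ false = b := by
            rw [← hb]
            exact Function.update_eq_self _ b
          simp only [hb, Bool.not_false] at hMσ
          rw [e2, ← hx, ← hMσ]
          ring
    rw [← hMσ, ← hbase, hr_def]
    exact h2p
  -- Step C : computing the sums of `u ^ r` and `v ^ r`
  have hsum_u : ∑ b : Fin (n - k) → Bool, u b ^ r = 2 * St / 2 ^ r := by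
    have e1 : ∀ b : Fin (n - k) → Bool, u b ^ r
        = ‖g (merge n (k + 1) (exta a true) (tl b))‖ ^ q / 2 ^ r := by
      intro b
      rw [hu]
      simp only []
      rw [Real.div_rpow (Real.rpow_nonneg (norm_nonneg _) p) (by norm_num),
        ← Real.rpow_mul (norm_nonneg _), hpr, merge_exta hk a true b]
    rw [Finset.sum_congr rfl fun b _ => e1 b, ← Finset.sum_div,
      sum_tl hk (fun b' => ‖g (merge n (k + 1) (exta a true) b')‖ ^ q), ← hSt]
  have hsum_v : ∑ b : Fin (n - k) → Bool, v b ^ r = 2 * Sf / 2 ^ r := by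
    have e1 : ∀ b : Fin (n - k) → Bool, v b ^ r
        = ‖g (merge n (k + 1) (exta a false) (tl b))‖ ^ q / 2 ^ r := by
      intro b
      rw [hv]
      simp only []
      rw [Real.div_rpow (Real.rpow_nonneg (norm_nonneg _) p) (by norm_num),
        ← Real.rpow_mul (norm_nonneg _), hpr, merge_exta hk a false b]
    rw [Finset.sum_congr rfl fun b _ => e1 b, ← Finset.sum_div,
      sum_tl hk (fun b' => ‖g (merge n (k + 1) (exta a false) b')‖ ^ q), ← hSf]
  -- Assembly
  have hsumF0 : 0 ≤ ∑ b : Fin (n - k) → Bool, F b :=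
    Finset.sum_nonneg fun b _ => hF0 b
  have hsumG0 : 0 ≤ ∑ b : Fin (n - k) → Bool, (u b + v b) ^ r :=
    Finset.sum_nonneg fun b _ => Real.rpow_nonneg (add_nonneg (hu0 b) (hv0 b)) r
  calc ((∑ b : Fin (n - k) → Bool, F b) / 2 ^ (n - k)) ^ (p / q)
      = ((∑ b : Fin (n - k) → Bool, F b) / (2 * D)) ^ (1 / r) := by
        rw [hpq', hD2]
    _ ≤ ((∑ b : Fin (n - k) → Bool, (u b + v b) ^ r) / (2 * D)) ^ (1 / r) := by
        apply Real.rpow_le_rpow (div_nonneg hsumF0 (mul_pos two_pos hDpos).le) _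
          (one_div_nonneg.mpr hr0.le)
        exact (div_le_div_iff_of_pos_right (mul_pos two_pos hDpos)).mpr hStepA
    _ = ((∑ b : Fin (n - k) → Bool, (u b + v b) ^ r)) ^ (1 / r) / (2 * D) ^ (1 / r) :=
        Real.div_rpow hsumG0 (mul_pos two_pos hDpos).le (1 / r)
    _ ≤ ((∑ b : Fin (n - k) → Bool, u b ^ r) ^ (1 / r)
          + (∑ b : Fin (n - k) → Bool, v b ^ r) ^ (1 / r)) / (2 * D) ^ (1 / r) := by
        exact (div_le_div_iff_of_pos_right (Real.rpow_pos_of_pos (mul_pos two_pos hDpos) _)).mpr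
          (Real.Lp_add_le_of_nonneg Finset.univ hr1 (fun b _ => hu0 b) (fun b _ => hv0 b))
    _ = (2 * St / 2 ^ r) ^ (1 / r) / (2 * D) ^ (1 / r)
          + (2 * Sf / 2 ^ r) ^ (1 / r) / (2 * D) ^ (1 / r) := by
        rw [hsum_u, hsum_v, add_div]
    _ = (St / D) ^ (1 / r) / 2 + (Sf / D) ^ (1 / r) / 2 := by
        rw [coef_eq hr1 hDpos hSt0, coef_eq hr1 hDpos hSf0]
    _ = ((St / D) ^ (p / q) + (Sf / D) ^ (p / q)) / 2 := by
        rw [hpq']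
        ring

lemma step_le {p q : ℝ} {z : ℂ} (hp : 1 ≤ p) (hpq : p ≤ q) (h2pt : TwoPointIneq p q z)
    {n : ℕ} (f : (Fin n → Bool) → ℂ) {k : ℕ} (hk : k < n) :
    (∑ a : Fin k → Bool,
        ((∑ b : Fin (n - k) → Bool,
            ‖Tzk z k f (merge n k a b)‖ ^ q) / 2 ^ (n - k)) ^ (p / q)) / 2 ^ k
      ≤ (∑ a : Fin (k + 1) → Bool,
          ((∑ b : Fin (n - (k + 1)) → Bool,
              ‖Tzk z (k + 1) f (merge n (k + 1) a b)‖ ^ q)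
                / 2 ^ (n - (k + 1))) ^ (p / q)) / 2 ^ (k + 1) := by
  set Φ : (Fin (k + 1) → Bool) → ℝ := fun a' =>
    ((∑ b : Fin (n - (k + 1)) → Bool,
        ‖Tzk z (k + 1) f (merge n (k + 1) a' b)‖ ^ q)
          / 2 ^ (n - (k + 1))) ^ (p / q) with hΦ
  have hkey : (∑ a : Fin k → Bool,
        ((∑ b : Fin (n - k) → Bool,
            ‖Tzk z k f (merge n k a b)‖ ^ q) / 2 ^ (n - k)) ^ (p / q))
      ≤ ∑ a : Fin k → Bool, (Φ (exta a true) + Φ (exta a false)) / 2 := by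
    refine Finset.sum_le_sum fun a _ => ?_
    simp only [hΦ]
    exact key_a hp hpq h2pt hk f a
  refine le_trans ((div_le_div_iff_of_pos_right (by positivity)).mpr hkey) (le_of_eq ?_)
  rw [sum_exta Φ, ← Finset.sum_div]
  ring

end Stmt2Aux

/-- Beckner's discrete monotonicity: the map
`k ↦ 𝔼^k (𝔼_{n-k} |T_z^k f|^q)^{p/q}` is nondecreasing in `k`. -/
theorem stmt2 (p q : ℝ) (z : ℂ) (hp : 1 ≤ p) (hpq : p ≤ q)
    (h2pt : TwoPointIneq p q z) (n : ℕ) (hn : 1 ≤ n)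
    (f : (Fin n → Bool) → ℂ) (k₁ k₂ : ℕ) (hk : k₁ ≤ k₂) (hk₂ : k₂ ≤ n) :
    (∑ a : Fin k₁ → Bool,
        ((∑ b : Fin (n - k₁) → Bool,
            ‖Tzk z k₁ f (merge n k₁ a b)‖ ^ q) / 2 ^ (n - k₁)) ^ (p / q)) / 2 ^ k₁
      ≤ (∑ a : Fin k₂ → Bool,
          ((∑ b : Fin (n - k₂) → Bool,
              ‖Tzk z k₂ f (merge n k₂ a b)‖ ^ q) / 2 ^ (n - k₂)) ^ (p / q)) / 2 ^ k₂ := by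
  revert hk₂
  induction k₂, hk using Nat.le_induction with
  | base => intro _; exact le_rfl
  | succ m hm ih =>
      intro hmn
      exact le_trans (ih (by omega)) (Stmt2Aux.step_le hp hpq h2pt f (by omega))

end
end

section
/- Let g(x) = Σ_{ℓ=0}^{N} a_ℓ x^ℓ be a polynomial with complex coefficients, let s ∈ [0,1], let z ∈ ℂ, and let w ∈ ℂ with w² = s + (1-s)z² and w ≠ 0. Then for all real u and x, ∫_ℝ ∫_ℝ g( z(x+iy)√(1-s) + (u+iv)√s ) dγ(y) dγ(v) = Σ_{ℓ=0}^{N} a_ℓ w^ℓ H_ℓ( (u√s + z x √(1-s)) / w ). -/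
open MeasureTheory Finset

noncomputable section

namespace Stmt10Aux

instance : IsProbabilityMeasure γ := by unfold γ; infer_instance

lemma intK (m : ℕ) : Integrable (fun x : ℝ => x ^ m * Real.exp (-x^2/2)) := by
  have h := integrable_rpow_mul_exp_neg_mul_sq (b := (1:ℝ)/2) (by norm_num) (s := (m:ℝ))
    (lt_of_lt_of_le (by norm_num : (-1:ℝ) < 0) (Nat.cast_nonneg m))
  refine h.congr (Filter.Eventually.of_forall fun x => ?_)
  simp only [Real.rpow_natCast]; ring_nf

/-- the gaussian pdf as an `ℝ≥0`-valued function -/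
def pdf1 : ℝ → NNReal := fun x => Real.toNNReal (ProbabilityTheory.gaussianPDFReal 0 1 x)

lemma pdf1_meas : Measurable pdf1 :=
  (ProbabilityTheory.measurable_gaussianPDFReal 0 1).real_toNNReal

lemma pdf1_coe (x : ℝ) :
    (pdf1 x : ℝ) = (Real.sqrt (2 * Real.pi))⁻¹ * Real.exp (-x^2/2) := by
  rw [pdf1, Real.coe_toNNReal _ (ProbabilityTheory.gaussianPDFReal_nonneg 0 1 x)]
  simp [ProbabilityTheory.gaussianPDFReal, neg_div]

lemma γ_eq : γ = (volume : Measure ℝ).withDensity fun x => ((pdf1 x : NNReal) : ENNReal) := by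
  unfold γ
  rw [ProbabilityTheory.gaussianReal_of_var_ne_zero _ one_ne_zero]
  rfl

lemma integral_gamma (g : ℝ → ℂ) :
    ∫ x, g x ∂γ = ∫ x, ((pdf1 x : ℝ) : ℂ) * g x := by
  rw [γ_eq, integral_withDensity_eq_integral_smul pdf1_meas]
  refine integral_congr_ae (Filter.Eventually.of_forall fun x => ?_)
  simp [NNReal.smul_def, Complex.real_smul]

lemma integrable_gamma_iff (g : ℝ → ℂ) :
    Integrable g γ ↔ Integrable (fun x => ((pdf1 x : ℝ) : ℂ) * g x) volume := by
  rw [γ_eq, MeasureTheory.integrable_withDensity_iff_integrable_smul pdf1_meas]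
  constructor <;> intro h <;> refine h.congr (Filter.Eventually.of_forall fun x => ?_) <;>
    simp [NNReal.smul_def, Complex.real_smul]

/-- complex moments of the standard gaussian -/
def Jc (m : ℕ) : ℂ := ∫ x : ℝ, ((x : ℂ)) ^ m ∂γ

lemma intJc (m : ℕ) : Integrable (fun x : ℝ => ((x:ℂ)) ^ m) γ := by
  rw [integrable_gamma_iff]
  have h1 : Integrable (fun x : ℝ =>
      ((((Real.sqrt (2 * Real.pi))⁻¹ * (x ^ m * Real.exp (-x^2/2)) : ℝ)) : ℂ)) volume :=
    Integrable.ofReal ((intK m).const_mul _)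
  refine h1.congr (Filter.Eventually.of_forall fun x => ?_)
  simp only [pdf1_coe]; push_cast; ring

lemma Jc_zero : Jc 0 = 1 := by simp [Jc]

lemma Krec (m : ℕ) :
    ∫ x : ℝ, x ^ (m+2) * Real.exp (-x^2/2) = (m+1) * ∫ x : ℝ, x ^ m * Real.exp (-x^2/2) := by
  have hderiv : ∀ x : ℝ, HasDerivAt (fun x : ℝ => x ^ (m+1) * Real.exp (-x^2/2))
      (((m:ℝ)+1) * (x ^ m * Real.exp (-x^2/2)) - x ^ (m+2) * Real.exp (-x^2/2)) x := by
    intro x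
    have h1 : HasDerivAt (fun x : ℝ => x ^ (m+1)) (((m:ℝ)+1) * x ^ m) x := by
      simpa using hasDerivAt_pow (m+1) x
    have h3 : HasDerivAt (fun x : ℝ => -x^2/2) (-x) x := by
      have := ((hasDerivAt_pow 2 x).neg).div_const 2
      refine this.congr_deriv ?_
      push_cast; ring
    have := h1.mul h3.exp
    refine this.congr_deriv ?_; ring
  have hint' : Integrable (fun x : ℝ =>
      ((m:ℝ)+1) * (x ^ m * Real.exp (-x^2/2)) - x ^ (m+2) * Real.exp (-x^2/2)) :=
    ((intK m).const_mul _).sub (intK (m+2))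
  have h0 := integral_eq_zero_of_hasDerivAt_of_integrable hderiv hint' (intK (m+1))
  rw [integral_sub ((intK m).const_mul _) (intK (m+2)), integral_const_mul] at h0
  linarith

lemma K1 : ∫ x : ℝ, x ^ 1 * Real.exp (-x^2/2) = 0 := by
  have hderiv : ∀ x : ℝ, HasDerivAt (fun x : ℝ => -Real.exp (-x^2/2))
      (x ^ 1 * Real.exp (-x^2/2)) x := by
    intro x
    have h3 : HasDerivAt (fun x : ℝ => -x^2/2) (-x) x := by
      have := ((hasDerivAt_pow 2 x).neg).div_const 2
      refine this.congr_deriv ?_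
      push_cast; ring
    have := h3.exp.neg
    refine this.congr_deriv ?_; ring
  have hint : Integrable (fun x : ℝ => -Real.exp (-x^2/2)) := by
    have := (intK 0).neg
    refine this.congr (Filter.Eventually.of_forall fun x => by simp)
  exact integral_eq_zero_of_hasDerivAt_of_integrable hderiv (intK 1) hint

lemma ofReal_int (f : ℝ → ℝ) (μ : Measure ℝ) :
    ((∫ x, f x ∂μ : ℝ) : ℂ) = ∫ x, ((f x : ℝ) : ℂ) ∂μ :=
  (integral_ofReal (𝕜 := ℂ)).symm

lemma Jc_as_K (m : ℕ) :
    Jc m = (((Real.sqrt (2*Real.pi))⁻¹ : ℝ) : ℂ) * ((∫ x : ℝ, x ^ m * Real.exp (-x^2/2) : ℝ) : ℂ) := by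
  rw [Jc, integral_gamma, ofReal_int, ← integral_const_mul]
  refine integral_congr_ae (Filter.Eventually.of_forall fun x => ?_)
  simp only [pdf1_coe]; push_cast; ring

lemma Jc_one : Jc 1 = 0 := by rw [Jc_as_K, K1]; simp

lemma Jc_rec (m : ℕ) : Jc (m+2) = ((m:ℂ)+1) * Jc m := by
  rw [Jc_as_K, Jc_as_K, Krec]; push_cast; ring


lemma Jc_def (m : ℕ) : Jc m = ∫ x : ℝ, ((x : ℂ)) ^ m ∂γ := rfl

/-- closed form for even moments -/
def ev (k : ℕ) : ℂ := ((2*k).factorial : ℂ) / (2^k * (k.factorial : ℂ))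

lemma ev_succ (k : ℕ) : ev (k+1) = (2*(k:ℂ)+1) * ev k := by
  have h1 : (2*(k+1)) = (2*k+1)+1 := by ring
  rw [ev, ev, h1, Nat.factorial_succ, Nat.factorial_succ, Nat.factorial_succ]
  have h2 : ((k.factorial : ℂ)) ≠ 0 := Nat.cast_ne_zero.mpr (Nat.factorial_ne_zero k)
  have h3 : ((2:ℂ))^k ≠ 0 := pow_ne_zero _ two_ne_zero
  have h4 : ((k:ℂ)+1) ≠ 0 := by
    have : ((k+1:ℕ):ℂ) ≠ 0 := Nat.cast_ne_zero.mpr k.succ_ne_zero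
    push_cast at this; exact this
  push_cast
  field_simp
  ring

lemma Jc_even (k : ℕ) : Jc (2*k) = ev k := by
  induction k with
  | zero => simpa [ev] using Jc_zero
  | succ k ih =>
    have h1 : 2*(k+1) = (2*k)+2 := by ring
    rw [h1, Jc_rec, ih, ev_succ]
    push_cast; ring

lemma Jc_odd (k : ℕ) : Jc (2*k+1) = 0 := by
  induction k with
  | zero => simpa using Jc_one
  | succ k ih =>
    have h1 : 2*(k+1)+1 = (2*k+1)+2 := by ring
    rw [h1, Jc_rec, ih, mul_zero]

lemma Jc_odd' {m : ℕ} (hm : Odd m) : Jc m = 0 := by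
  obtain ⟨k, rfl⟩ := hm
  exact Jc_odd k

lemma key_comb (a b : ℕ) :
    (((2*(a+b)).choose (2*a) : ℕ) : ℂ) * ev a * ev b = ev (a+b) * (((a+b).choose a : ℕ) : ℂ) := by
  have h3 : 2*(a+b) = 2*a+2*b := by ring
  rw [h3]
  have h1 : 2*a ≤ 2*a+2*b := by omega
  have h2 : a ≤ a+b := by omega
  rw [Nat.cast_choose ℂ h1, Nat.cast_choose ℂ h2]
  have e1 : 2*a+2*b - 2*a = 2*b := by omega
  have e2 : a+b-a = b := by omega
  rw [e1, e2]
  simp only [ev, h3]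
  have hfa : ∀ n : ℕ, ((n.factorial : ℂ)) ≠ 0 := fun n => Nat.cast_ne_zero.mpr (Nat.factorial_ne_zero n)
  have h2a : ((2:ℂ))^a ≠ 0 := pow_ne_zero _ two_ne_zero
  have h2b : ((2:ℂ))^b ≠ 0 := pow_ne_zero _ two_ne_zero
  have h2ab : ((2:ℂ))^(a+b) ≠ 0 := pow_ne_zero _ two_ne_zero
  rw [div_mul_div_comm, div_mul_div_comm, div_mul_div_comm,
    div_eq_div_iff
      (mul_ne_zero (mul_ne_zero (mul_ne_zero (hfa _) (hfa _)) (mul_ne_zero h2a (hfa _)))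
        (mul_ne_zero h2b (hfa _)))
      (mul_ne_zero (mul_ne_zero h2ab (hfa _)) (mul_ne_zero (hfa _) (hfa _)))]
  ring

/-- sum over range (2k+1) of a function vanishing at odd arguments -/
lemma sum_range_even (F : ℕ → ℂ) (k : ℕ) (h : ∀ j, Odd j → F j = 0) :
    ∑ j ∈ range (2*k+1), F j = ∑ a ∈ range (k+1), F (2*a) := by
  induction k with
  | zero => simp
  | succ k ih =>
    have h1 : 2*(k+1)+1 = ((2*k+1)+1)+1 := by ring
    rw [h1, sum_range_succ, sum_range_succ, ih, sum_range_succ]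
    rw [h (2*k+1) ⟨k, by ring⟩]
    have h2 : 2*k+1+1 = 2*(k+1) := by ring
    rw [h2, sum_range_succ, sum_range_succ]; ring

/-- gaussian moment identity for sums -/
lemma M2 (m : ℕ) (α β W : ℂ) (hW : W^2 = α^2 + β^2) :
    ∑ j ∈ range (m+1), ((m.choose j : ℕ) : ℂ) * α^j * β^(m-j) * Jc j * Jc (m-j)
      = W^m * Jc m := by
  rcases Nat.even_or_odd m with ⟨k, hk⟩ | hodd
  · -- m = 2k
    have hm : m = 2*k := by omega
    subst hm
    rw [sum_range_even _ k (fun j hj => by rw [Jc_odd' hj]; ring)]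
    have hstep : ∀ a ∈ range (k+1),
        (((2*k).choose (2*a) : ℕ) : ℂ) * α^(2*a) * β^(2*k-2*a) * Jc (2*a) * Jc (2*k-2*a)
          = ev k * ((((k).choose a : ℕ) : ℂ) * (α^2)^a * (β^2)^(k-a)) := by
      intro a ha
      have hak : a ≤ k := by simpa [Nat.lt_succ_iff] using mem_range.mp ha
      obtain ⟨b, rfl⟩ : ∃ b, k = a + b := ⟨k - a, by omega⟩
      have e1 : 2*(a+b)-2*a = 2*b := by omega
      have e2 : a+b-a = b := by omega
      rw [e1, e2, Jc_even, Jc_even]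
      have := key_comb a b
      calc (((2*(a+b)).choose (2*a) : ℕ) : ℂ) * α^(2*a) * β^(2*b) * ev a * ev b
          = ((((2*(a+b)).choose (2*a) : ℕ) : ℂ) * ev a * ev b) * (α^(2*a) * β^(2*b)) := by ring
        _ = (ev (a+b) * (((a+b).choose a : ℕ) : ℂ)) * (α^(2*a) * β^(2*b)) := by rw [this]
        _ = ev (a+b) * ((((a+b).choose a : ℕ) : ℂ) * (α^2)^a * (β^2)^b) := by
            rw [← pow_mul, ← pow_mul]; ring
    rw [sum_congr rfl hstep, ← mul_sum]
    have hbin : ∑ a ∈ range (k+1), ((((k).choose a : ℕ) : ℂ) * (α^2)^a * (β^2)^(k-a))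
        = (α^2 + β^2)^k := by
      rw [add_pow]
      exact sum_congr rfl fun a _ => by ring
    rw [hbin, ← hW, Jc_even, ← pow_mul]
    ring
  · -- m odd
    obtain ⟨k, hk⟩ := hodd
    subst hk
    rw [Jc_odd, mul_zero]
    refine sum_eq_zero fun j hj => ?_
    rcases Nat.even_or_odd j with ⟨t, ht⟩ | hoj
    · have hjm : j ≤ 2*k+1 := by simpa [Nat.lt_succ_iff] using mem_range.mp hj
      have : Odd (2*k+1-j) := by
        rcases Nat.even_or_odd (2*k+1-j) with he | ho
        · exfalso; obtain ⟨r, hr⟩ := he; omega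
        · exact ho
      rw [Jc_odd' this]; ring
    · rw [Jc_odd' hoj]; ring

lemma expand_pow (c d : ℂ) (m : ℕ) (t : ℝ) :
    (c + d * (t:ℂ))^m = ∑ j ∈ range (m+1), (((m.choose j : ℕ) : ℂ) * c^(m-j) * d^j) * (t:ℂ)^j := by
  rw [add_pow, ← Finset.sum_range_reflect]
  refine sum_congr rfl fun j hj => ?_
  have hjm : j ≤ m := by simpa [Nat.lt_succ_iff] using mem_range.mp hj
  have h1 : m + 1 - 1 - j = m - j := by omega
  rw [h1, Nat.sub_sub_self hjm, Nat.choose_symm hjm, mul_pow]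
  ring

lemma int_lin (c d : ℂ) (m : ℕ) : Integrable (fun t : ℝ => (c + d*(t:ℂ))^m) γ := by
  have h : (fun t : ℝ => (c + d*(t:ℂ))^m)
      = fun t : ℝ => ∑ j ∈ range (m+1), (((m.choose j:ℕ):ℂ) * c^(m-j) * d^j) * (t:ℂ)^j :=
    funext (expand_pow c d m)
  rw [h]
  exact integrable_finset_sum _ fun j _ => (intJc j).const_mul _

lemma integral_pow_lin (c d : ℂ) (m : ℕ) :
    ∫ t : ℝ, (c + d*(t:ℂ))^m ∂γ
      = ∑ j ∈ range (m+1), ((m.choose j : ℕ) : ℂ) * c^(m-j) * d^j * Jc j := by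
  simp_rw [expand_pow]
  rw [integral_finset_sum _ fun j _ => (intJc j).const_mul _]
  refine sum_congr rfl fun j _ => ?_
  rw [integral_const_mul, ← Jc_def]

lemma L5 (ℓ : ℕ) (A d e w : ℂ) (hw0 : w ≠ 0) (hde : d^2 + e^2 = (Complex.I*w)^2) :
    ∑ j ∈ range (ℓ+1), (((ℓ.choose j : ℕ) : ℂ) * d^j * Jc j) *
      (∑ k ∈ range ((ℓ-j)+1), (((ℓ-j).choose k : ℕ) : ℂ) * A^((ℓ-j)-k) * e^k * Jc k)
    = w^ℓ * ∑ m ∈ range (ℓ+1), ((ℓ.choose m : ℕ) : ℂ) * (A/w)^(ℓ-m) * Complex.I^m * Jc m := by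
  have step1 : ∑ j ∈ range (ℓ+1), (((ℓ.choose j : ℕ) : ℂ) * d^j * Jc j) *
      (∑ k ∈ range ((ℓ-j)+1), (((ℓ-j).choose k : ℕ) : ℂ) * A^((ℓ-j)-k) * e^k * Jc k)
      = ∑ j ∈ range (ℓ+1), ∑ k ∈ range ((ℓ+1)-j),
        (((ℓ.choose j : ℕ) : ℂ) * d^j * Jc j) * ((((ℓ-j).choose k : ℕ) : ℂ) * A^((ℓ-j)-k) * e^k * Jc k) := by
    refine sum_congr rfl fun j hj => ?_
    have hjl : j ≤ ℓ := by simpa [Nat.lt_succ_iff] using mem_range.mp hj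
    rw [mul_sum]
    have h1 : (ℓ-j)+1 = (ℓ+1)-j := by omega
    rw [h1]
  rw [step1, ← Finset.sum_range_diag_flip (ℓ+1)
    (fun j k => (((ℓ.choose j : ℕ) : ℂ) * d^j * Jc j) * ((((ℓ-j).choose k : ℕ) : ℂ) * A^((ℓ-j)-k) * e^k * Jc k))]
  rw [mul_sum]
  refine sum_congr rfl fun m hm => ?_
  have hml : m ≤ ℓ := by simpa [Nat.lt_succ_iff] using mem_range.mp hm
  have step2 : ∑ j ∈ range (m+1),
      (((ℓ.choose j : ℕ) : ℂ) * d^j * Jc j) * ((((ℓ-j).choose (m-j) : ℕ) : ℂ) * A^((ℓ-j)-(m-j)) * e^(m-j) * Jc (m-j))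
      = ((ℓ.choose m : ℕ) : ℂ) * A^(ℓ-m) *
        ∑ j ∈ range (m+1), ((m.choose j : ℕ) : ℂ) * d^j * e^(m-j) * Jc j * Jc (m-j) := by
    rw [mul_sum]
    refine sum_congr rfl fun j hj => ?_
    have hjm : j ≤ m := by simpa [Nat.lt_succ_iff] using mem_range.mp hj
    have h2 : (ℓ-j)-(m-j) = ℓ-m := by omega
    have h3 : (ℓ.choose m * m.choose j : ℕ) = (ℓ.choose j * (ℓ-j).choose (m-j) : ℕ) :=
      Nat.choose_mul hjm
    have h4 : ((ℓ.choose m : ℕ) : ℂ) * ((m.choose j : ℕ) : ℂ)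
        = ((ℓ.choose j : ℕ) : ℂ) * (((ℓ-j).choose (m-j) : ℕ) : ℂ) := by exact_mod_cast h3
    rw [h2]
    calc (((ℓ.choose j : ℕ) : ℂ) * d^j * Jc j) * ((((ℓ-j).choose (m-j) : ℕ) : ℂ) * A^(ℓ-m) * e^(m-j) * Jc (m-j))
        = (((ℓ.choose j : ℕ) : ℂ) * (((ℓ-j).choose (m-j) : ℕ) : ℂ)) *
            (d^j * Jc j * A^(ℓ-m) * e^(m-j) * Jc (m-j)) := by ring
      _ = (((ℓ.choose m : ℕ) : ℂ) * ((m.choose j : ℕ) : ℂ)) *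
            (d^j * Jc j * A^(ℓ-m) * e^(m-j) * Jc (m-j)) := by rw [h4]
      _ = ((ℓ.choose m : ℕ) : ℂ) * A^(ℓ-m) * (((m.choose j : ℕ) : ℂ) * d^j * e^(m-j) * Jc j * Jc (m-j)) := by
            ring
  rw [step2, M2 m d e (Complex.I*w) hde.symm]
  have h5 : w^(ℓ-m) ≠ 0 := pow_ne_zero _ hw0
  rw [div_pow, mul_pow]
  have h6 : w^(ℓ-m) * w^m = w^ℓ := pow_sub_mul_pow w hml
  field_simp
  rw [← h6]
  ring

end Stmt10Aux

open Stmt10Aux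

/-- the double Gaussian average of the polynomial `g` equals the
Mehler semigroup applied to the Hermite-expanded polynomial. -/
theorem stmt10 (N : ℕ) (a : ℕ → ℂ) (s : ℝ) (hs0 : 0 ≤ s) (hs1 : s ≤ 1)
    (z w : ℂ) (hw : w ^ 2 = (s : ℂ) + (1 - (s : ℂ)) * z ^ 2) (hw0 : w ≠ 0) (u x : ℝ) :
    (∫ v : ℝ, ∫ y : ℝ,
        ∑ ℓ ∈ Finset.range (N + 1), a ℓ *
          (z * ((x : ℂ) + Complex.I * (y : ℂ)) * (Real.sqrt (1 - s) : ℂ)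
            + ((u : ℂ) + Complex.I * (v : ℂ)) * (Real.sqrt s : ℂ)) ^ ℓ ∂γ ∂γ)
      = ∑ ℓ ∈ Finset.range (N + 1), a ℓ * w ^ ℓ *
          Hpoly ℓ ((((u * Real.sqrt s : ℝ) : ℂ) + z * (x : ℂ) * (Real.sqrt (1 - s) : ℂ)) / w) := by
  obtain ⟨A, hA⟩ : ∃ A:ℂ, A = (u:ℂ) * (Real.sqrt s : ℂ) + z * (x:ℂ) * (Real.sqrt (1-s) : ℂ) := ⟨_, rfl⟩
  obtain ⟨d, hd⟩ : ∃ d:ℂ, d = z * (Real.sqrt (1-s) : ℂ) * Complex.I := ⟨_, rfl⟩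
  obtain ⟨e, he⟩ : ∃ e:ℂ, e = (Real.sqrt s : ℂ) * Complex.I := ⟨_, rfl⟩
  have h1 : ((Real.sqrt s : ℝ):ℂ)^2 = ((s:ℝ):ℂ) := by
    rw [← Complex.ofReal_pow, Real.sq_sqrt hs0]
  have h2 : ((Real.sqrt (1-s) : ℝ):ℂ)^2 = ((1-s:ℝ):ℂ) := by
    rw [← Complex.ofReal_pow, Real.sq_sqrt (by linarith)]
  have hde : d^2 + e^2 = (Complex.I*w)^2 := by
    rw [hd, he]
    calc (z*(Real.sqrt (1-s):ℂ)*Complex.I)^2 + ((Real.sqrt s:ℂ)*Complex.I)^2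
        = (((Real.sqrt s:ℝ):ℂ)^2 + (((Real.sqrt (1-s):ℝ):ℂ)^2) * z^2) * Complex.I^2 := by ring
      _ = Complex.I^2 * w^2 := by rw [h1, h2, hw]; push_cast; ring
      _ = (Complex.I*w)^2 := by ring
  have hargA : (((u * Real.sqrt s : ℝ) : ℂ) + z * (x : ℂ) * (Real.sqrt (1 - s) : ℂ)) = A := by
    rw [hA]; push_cast; ring
  rw [hargA]
  calc (∫ v : ℝ, ∫ y : ℝ,
        ∑ ℓ ∈ Finset.range (N + 1), a ℓ *
          (z * ((x : ℂ) + Complex.I * (y : ℂ)) * (Real.sqrt (1 - s) : ℂ)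
            + ((u : ℂ) + Complex.I * (v : ℂ)) * (Real.sqrt s : ℂ)) ^ ℓ ∂γ ∂γ)
      = ∫ v : ℝ, ∫ y : ℝ, ∑ ℓ ∈ range (N+1), a ℓ * ((A + e*(v:ℂ)) + d*(y:ℂ))^ℓ ∂γ ∂γ := by
        refine integral_congr_ae (Filter.Eventually.of_forall fun v => ?_)
        refine integral_congr_ae (Filter.Eventually.of_forall fun y => ?_)
        refine sum_congr rfl fun ℓ _ => ?_
        rw [hA, hd, he]; ring_nf
    _ = ∫ v : ℝ, ∑ ℓ ∈ range (N+1), a ℓ *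
          ∑ j ∈ range (ℓ+1), ((ℓ.choose j : ℕ) : ℂ) * (A + e*(v:ℂ))^(ℓ-j) * d^j * Jc j ∂γ := by
        refine integral_congr_ae (Filter.Eventually.of_forall fun v => ?_)
        beta_reduce
        rw [integral_finset_sum _ fun ℓ _ => (int_lin _ _ _).const_mul _]
        refine sum_congr rfl fun ℓ _ => ?_
        rw [integral_const_mul, integral_pow_lin]
    _ = ∫ v : ℝ, ∑ ℓ ∈ range (N+1), ∑ j ∈ range (ℓ+1),
          (a ℓ * (((ℓ.choose j : ℕ) : ℂ) * d^j * Jc j)) * (A + e*(v:ℂ))^(ℓ-j) ∂γ := by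
        refine integral_congr_ae (Filter.Eventually.of_forall fun v => ?_)
        beta_reduce
        refine sum_congr rfl fun ℓ _ => ?_
        rw [mul_sum]
        exact sum_congr rfl fun j _ => by ring
    _ = ∑ ℓ ∈ range (N+1), ∑ j ∈ range (ℓ+1),
          (a ℓ * (((ℓ.choose j : ℕ) : ℂ) * d^j * Jc j)) *
            ∑ k ∈ range ((ℓ-j)+1), (((ℓ-j).choose k : ℕ) : ℂ) * A^((ℓ-j)-k) * e^k * Jc k := by
        rw [integral_finset_sum _ fun ℓ _ =>
          integrable_finset_sum _ fun j _ => (int_lin A e (ℓ-j)).const_mul _]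
        refine sum_congr rfl fun ℓ _ => ?_
        rw [integral_finset_sum _ fun j _ => (int_lin A e (ℓ-j)).const_mul _]
        refine sum_congr rfl fun j _ => ?_
        rw [integral_const_mul, integral_pow_lin]
    _ = ∑ ℓ ∈ range (N+1), a ℓ *
          ∑ j ∈ range (ℓ+1), (((ℓ.choose j : ℕ) : ℂ) * d^j * Jc j) *
            ∑ k ∈ range ((ℓ-j)+1), (((ℓ-j).choose k : ℕ) : ℂ) * A^((ℓ-j)-k) * e^k * Jc k := by
        refine sum_congr rfl fun ℓ _ => ?_
        rw [mul_sum]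
        exact sum_congr rfl fun j _ => by ring
    _ = ∑ ℓ ∈ range (N+1), a ℓ * w ^ ℓ * Hpoly ℓ (A/w) := by
        refine sum_congr rfl fun ℓ _ => ?_
        rw [L5 ℓ A d e w hw0 hde]
        rw [Hpoly, integral_pow_lin (A/w) Complex.I ℓ]
        ring


end
end

section
/- Let g(x) = Σ_{ℓ=0}^{N} a_ℓ x^ℓ with a_ℓ ∈ ℂ and let g̃ := Σ_{ℓ=0}^{N} a_ℓ H_ℓ. Let 1 ≤ p ≤ q < ∞, s ∈ (0,1), and z ∈ ℂ with |z| < 1. Then ∫_ℝ ( ∫_ℝ | ∫_ℝ ∫_ℝ g( (u+iv)√s + z (x+iy)√(1-s) ) dγ(v) dγ(y) |^q dγ(x) )^{p/q} dγ(u) = ∫_ℝ ( ∫_ℝ | P_{(1-s)(1-z²)} g̃ ( u√s + z x √(1-s) ) |^q dγ(x) )^{p/q} dγ(u). -/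
open MeasureTheory Finset

open Filter Complex Real
open scoped NNReal ENNReal

noncomputable section

def ddn : ℕ → ℕ
  | 0 => 1
  | (k+1) => (2*k+1) * ddn k

def MM (n : ℕ) (A c : ℂ) : ℂ :=
  ∑ k ∈ Finset.range (n+1), (n.choose (2*k) : ℂ) * (ddn k : ℂ) * c^k * A^(n - 2*k)

lemma ddn_fact (k : ℕ) : ddn k * (2^k * k.factorial) = (2*k).factorial := by
  induction k with
  | zero => simp [ddn]
  | succ k ih =>
    have h : (2*(k+1)).factorial = (2*k+2) * ((2*k+1) * (2*k).factorial) := by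
      rw [show 2*(k+1) = (2*k+1)+1 by ring, Nat.factorial_succ, Nat.factorial_succ]
    rw [h, ← ih]
    simp only [ddn, Nat.factorial_succ, pow_succ]
    ring

lemma key1 (k K : ℕ) (h : k ≤ K) :
    (2*K).choose (2*k) * (ddn k * ddn (K-k)) = K.choose k * ddn K := by
  have hpos : 0 < 2^K * (k.factorial * (K-k).factorial) := by positivity
  apply Nat.eq_of_mul_eq_mul_right hpos
  have h2K : 2*K - 2*k = 2*(K-k) := by omega
  have e1 : (2*K).choose (2*k) * (2*k).factorial * (2*K - 2*k).factorial = (2*K).factorial :=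
    Nat.choose_mul_factorial_mul_factorial (by omega)
  have e2 : K.choose k * k.factorial * (K-k).factorial = K.factorial :=
    Nat.choose_mul_factorial_mul_factorial h
  have e3 := ddn_fact k
  have e4 := ddn_fact (K-k)
  have e5 := ddn_fact K
  have h2p : (2:ℕ)^K = 2^k * 2^(K-k) := by rw [← pow_add]; congr 1; omega
  have lhs : (2*K).choose (2*k) * (ddn k * ddn (K-k)) * (2^K * (k.factorial * (K-k).factorial))
      = (2*K).factorial := by
    calc (2*K).choose (2*k) * (ddn k * ddn (K-k)) * (2^K * (k.factorial * (K-k).factorial))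
        = (2*K).choose (2*k) * ((ddn k * (2^k * k.factorial)) * (ddn (K-k) * (2^(K-k) * (K-k).factorial))) := by
          rw [h2p]; ring
      _ = (2*K).choose (2*k) * ((2*k).factorial * (2*(K-k)).factorial) := by rw [e3, e4]
      _ = (2*K).choose (2*k) * (2*k).factorial * (2*K-2*k).factorial := by rw [h2K]; ring
      _ = (2*K).factorial := e1
  have rhs : K.choose k * ddn K * (2^K * (k.factorial * (K-k).factorial)) = (2*K).factorial := by
    calc K.choose k * ddn K * (2^K * (k.factorial * (K-k).factorial))
        = ddn K * 2^K * (K.choose k * k.factorial * (K-k).factorial) := by ring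
      _ = ddn K * (2^K * K.factorial) := by rw [e2]; ring
      _ = (2*K).factorial := e5
  rw [lhs, rhs]

lemma key2 (n k j : ℕ) (h : 2*k + 2*j ≤ n) :
    n.choose (2*k) * (n - 2*k).choose (2*j) = n.choose (2*(k+j)) * (2*(k+j)).choose (2*k) := by
  have := Nat.choose_mul (n := n) (show 2*k ≤ 2*(k+j) by omega)
  rw [this]
  congr 2 <;> omega

lemma keyC (n k j : ℕ) (h : 2*k + 2*j ≤ n) :
    (n.choose (2*k) : ℂ) * ((n-2*k).choose (2*j) : ℂ) * (ddn k : ℂ) * (ddn j : ℂ)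
      = (n.choose (2*(k+j)) : ℂ) * ((k+j).choose k : ℂ) * (ddn (k+j) : ℂ) := by
  have h1 := key1 k (k+j) (by omega)
  rw [show k + j - k = j by omega] at h1
  have h2 := key2 n k j h
  have : n.choose (2*k) * (n - 2*k).choose (2*j) * (ddn k * ddn j)
      = n.choose (2*(k+j)) * ((k+j).choose k * ddn (k+j)) := by
    rw [h2, ← h1]; ring
  have := congrArg (fun x : ℕ => (x : ℂ)) this
  push_cast at this
  rw [mul_comm ((ddn k : ℂ)) ((ddn j : ℂ))] at this
  linear_combination this

lemma sum_range_even_odd (f : ℕ → ℂ) (M : ℕ) :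
    ∑ k ∈ Finset.range (2*M), f k
      = ∑ j ∈ Finset.range M, f (2*j) + ∑ j ∈ Finset.range M, f (2*j+1) := by
  induction M with
  | zero => simp
  | succ M ih =>
    rw [show 2*(M+1) = (2*M)+1+1 by ring, Finset.sum_range_succ, Finset.sum_range_succ,
      Finset.sum_range_succ, Finset.sum_range_succ (fun j => f (2*j+1)), ih]
    ring

lemma S_id (n : ℕ) (A c e : ℂ) :
    ∑ k ∈ Finset.range (n+1), (n.choose (2*k) : ℂ) * (ddn k : ℂ) * c^k * MM (n - 2*k) A e
      = MM n A (c + e) := by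
  have lhs1 : ∀ k, (n.choose (2*k) : ℂ) * (ddn k : ℂ) * c^k * MM (n - 2*k) A e
      = ∑ j ∈ Finset.range (n+1), ((n.choose (2*k) : ℂ) * (ddn k : ℂ) * c^k *
          (((n-2*k).choose (2*j) : ℂ) * (ddn j : ℂ) * e^j * A^(n-2*k-2*j))) := by
    intro k
    rw [MM, Finset.mul_sum]
    apply Finset.sum_subset (Finset.range_subset_range.2 (by omega))
    intro j _ hj
    have : n - 2*k < 2*j := by
      simp only [Finset.mem_range, not_lt] at hj ⊢; omega
    rw [Nat.choose_eq_zero_of_lt this]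
    push_cast; ring
  have rhs1 : MM n A (c + e) = ∑ K ∈ Finset.range (n+1), ∑ k ∈ Finset.range (n+1),
      ((n.choose (2*K) : ℂ) * (ddn K : ℂ) * ((K.choose k : ℂ) * c^k * e^(K-k)) * A^(n-2*K)) := by
    rw [MM]
    apply Finset.sum_congr rfl
    intro K hK
    calc (n.choose (2*K) : ℂ) * (ddn K : ℂ) * (c+e)^K * A^(n-2*K)
        = ∑ k ∈ Finset.range (K+1), ((n.choose (2*K) : ℂ) * (ddn K : ℂ) *
            ((K.choose k : ℂ) * c^k * e^(K-k)) * A^(n-2*K)) := by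
          rw [add_pow, Finset.mul_sum, Finset.sum_mul]
          apply Finset.sum_congr rfl
          intro k _
          push_cast; ring
      _ = _ := by
          apply Finset.sum_subset (Finset.range_subset_range.2 (by simp only [Finset.mem_range] at hK; omega))
          intro k _ hk
          have : K < k := by simp only [Finset.mem_range, not_lt] at hk ⊢; omega
          rw [Nat.choose_eq_zero_of_lt this]
          push_cast; ring
  simp only [lhs1]
  rw [rhs1, ← Finset.sum_product', ← Finset.sum_product']
  have hL : ∑ p ∈ (Finset.range (n+1)) ×ˢ (Finset.range (n+1)),
        ((n.choose (2*p.1) : ℂ) * (ddn p.1 : ℂ) * c^p.1 *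
          (((n-2*p.1).choose (2*p.2) : ℂ) * (ddn p.2 : ℂ) * e^p.2 * A^(n-2*p.1-2*p.2)))
      = ∑ p ∈ ((Finset.range (n+1)) ×ˢ (Finset.range (n+1))).filter
            (fun p => 2*p.1 + 2*p.2 ≤ n),
        ((n.choose (2*p.1) : ℂ) * (ddn p.1 : ℂ) * c^p.1 *
          (((n-2*p.1).choose (2*p.2) : ℂ) * (ddn p.2 : ℂ) * e^p.2 * A^(n-2*p.1-2*p.2))) := by
    symm
    apply Finset.sum_filter_of_ne
    intro p _ hne
    by_contra h
    apply hne
    rcases le_or_gt (2*p.1) n with h1 | h1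
    · rw [Nat.choose_eq_zero_of_lt (show n - 2*p.1 < 2*p.2 by omega)]
      push_cast; ring
    · rw [Nat.choose_eq_zero_of_lt (show n < 2*p.1 by omega)]
      push_cast; ring
  have hR : ∑ q ∈ (Finset.range (n+1)) ×ˢ (Finset.range (n+1)),
        ((n.choose (2*q.1) : ℂ) * (ddn q.1 : ℂ) *
          ((q.1.choose q.2 : ℂ) * c^q.2 * e^(q.1-q.2)) * A^(n-2*q.1))
      = ∑ q ∈ ((Finset.range (n+1)) ×ˢ (Finset.range (n+1))).filter
            (fun q => q.2 ≤ q.1 ∧ 2*q.1 ≤ n),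
        ((n.choose (2*q.1) : ℂ) * (ddn q.1 : ℂ) *
          ((q.1.choose q.2 : ℂ) * c^q.2 * e^(q.1-q.2)) * A^(n-2*q.1)) := by
    symm
    apply Finset.sum_filter_of_ne
    intro q hq hne
    by_contra h
    apply hne
    rcases le_or_gt q.2 q.1 with h1 | h1
    · rw [Nat.choose_eq_zero_of_lt (show n < 2*q.1 by omega)]
      push_cast; ring
    · rw [Nat.choose_eq_zero_of_lt h1]
      push_cast; ring
  rw [hL, hR]
  apply Finset.sum_nbij' (fun p => (p.1 + p.2, p.1)) (fun q => (q.2, q.1 - q.2))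
  · intro p hp
    simp only [Finset.mem_filter, Finset.mem_product, Finset.mem_range] at hp ⊢
    omega
  · intro q hq
    simp only [Finset.mem_filter, Finset.mem_product, Finset.mem_range] at hq ⊢
    omega
  · rintro ⟨k, j⟩ hp
    have h1 : k + j - k = j := by omega
    simp [h1]
  · rintro ⟨K, k⟩ hq
    simp only [Finset.mem_filter, Finset.mem_product, Finset.mem_range] at hq
    have h1 : k + (K - k) = K := by omega
    simp [h1]
  · intro p hp
    simp only [Finset.mem_filter, Finset.mem_product, Finset.mem_range] at hp
    obtain ⟨⟨-, -⟩, hle⟩ := hp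
    simp only
    rw [show p.1 + p.2 - p.1 = p.2 by omega, show n - 2*(p.1+p.2) = n - 2*p.1 - 2*p.2 by omega]
    have hk := keyC n p.1 p.2 hle
    linear_combination (c^p.1 * e^p.2 * A^(n-2*p.1-2*p.2)) * hk

lemma norm_poly_gauss (m : ℕ) (b c c' : ℂ) (hb : 0 < b.re) :
    ∃ M : ℝ, ∀ t : ℝ, ‖((t:ℂ)+c')^m * Complex.exp (-b*((t:ℂ)+c)^2)‖
      ≤ M * Real.exp (-(b.re/2) * t^2) := by
  set b2 : ℝ := (-2*b*c).re with hb2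
  set b3 : ℝ := (-b*c^2).re with hb3
  set r : ℝ := b.re/2 with hr
  have hrpos : 0 < r := by positivity
  set a : ℝ := (m : ℝ) + |b2| with ha
  refine ⟨Real.exp ((m:ℝ) * ‖c'‖ + b3 + a^2/(4*r)), fun t => ?_⟩
  have hw : -b*((t:ℂ)+c)^2 = (-b)*((t:ℝ)^2 : ℝ) + (-2*b*c)*(t:ℂ) + (-b*c^2) := by
    push_cast; ring
  have hre : (-b*((t:ℂ)+c)^2).re = -b.re * t^2 + b2 * t + b3 := by
    rw [hw, hb2, hb3]
    simp [Complex.add_re, Complex.mul_re, Complex.ofReal_re, Complex.ofReal_im,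
      ← Complex.ofReal_pow]
    ring
  have hnorm : ‖((t:ℂ)+c')^m * Complex.exp (-b*((t:ℂ)+c)^2)‖
      = ‖(t:ℂ)+c'‖^m * Real.exp (-b.re * t^2 + b2 * t + b3) := by
    rw [norm_mul, norm_pow, Complex.norm_exp, hre]
  clear_value b2 b3 r a
  rw [hnorm]
  have h1 : ‖(t:ℂ)+c'‖ ≤ |t| + ‖c'‖ := by
    calc ‖(t:ℂ)+c'‖ ≤ ‖(t:ℂ)‖ + ‖c'‖ := norm_add_le _ _
      _ = |t| + ‖c'‖ := by rw [Complex.norm_real]; rfl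
  have h2 : ‖(t:ℂ)+c'‖^m ≤ Real.exp ((m:ℝ) * (|t| + ‖c'‖)) := by
    calc ‖(t:ℂ)+c'‖^m ≤ (|t| + ‖c'‖)^m := pow_le_pow_left₀ (norm_nonneg _) h1 m
      _ ≤ (Real.exp (|t| + ‖c'‖))^m := by
          apply pow_le_pow_left₀ (by positivity)
          have := Real.add_one_le_exp (|t| + ‖c'‖)
          linarith
      _ = Real.exp ((m:ℝ) * (|t| + ‖c'‖)) := by rw [← Real.exp_nat_mul]
  calc ‖(t:ℂ)+c'‖^m * Real.exp (-b.re * t^2 + b2 * t + b3)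
      ≤ Real.exp ((m:ℝ) * (|t| + ‖c'‖)) * Real.exp (-b.re * t^2 + b2 * t + b3) := by
        apply mul_le_mul_of_nonneg_right h2 (Real.exp_pos _).le
    _ = Real.exp ((m:ℝ) * |t| + b2 * t + (-b.re * t^2) + ((m:ℝ) * ‖c'‖ + b3)) := by
        rw [← Real.exp_add]; congr 1; ring
    _ ≤ Real.exp ((m:ℝ) * ‖c'‖ + b3 + a^2/(4*r)) * Real.exp (-r * t^2) := by
        rw [← Real.exp_add]
        apply Real.exp_le_exp.2
        have habs : (m:ℝ) * |t| + b2 * t ≤ a * |t| := by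
          have h3 : b2 * t ≤ |b2| * |t| := by
            calc b2 * t ≤ |b2 * t| := le_abs_self _
              _ = |b2| * |t| := abs_mul _ _
          have hm : (0:ℝ) ≤ (m:ℝ) := by positivity
          nlinarith [abs_nonneg t]
        have key : ∀ u : ℝ, 0 ≤ u → (a*u - r*u^2) * (4*r) ≤ a^2 := by
          intro u hu
          nlinarith [sq_nonneg (2*r*u - a)]
        have h4 : (a*|t| - r*t^2) * (4*r) ≤ a^2 := by
          have := key |t| (abs_nonneg t)
          rwa [_root_.sq_abs] at this
        have hsq : a*|t| - r*t^2 ≤ a^2/(4*r) :=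
          (le_div_iff₀ (by linarith : (0:ℝ) < 4*r)).2 h4
        have ht2' : b.re * t^2 = 2*(r*t^2) := by rw [hr]; ring
        linarith [hsq, habs, ht2']

lemma integrable_poly_gauss (m : ℕ) (b c c' : ℂ) (hb : 0 < b.re) :
    Integrable (fun t : ℝ => ((t:ℂ)+c')^m * Complex.exp (-b*((t:ℂ)+c)^2)) := by
  obtain ⟨M, hM⟩ := norm_poly_gauss m b c c' hb
  have hcont : Continuous (fun t : ℝ => ((t:ℂ)+c')^m * Complex.exp (-b*((t:ℂ)+c)^2)) := by
    apply Continuous.mul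
    · exact (Complex.continuous_ofReal.add continuous_const).pow m
    · exact (continuous_const.mul ((Complex.continuous_ofReal.add continuous_const).pow 2)).cexp
  apply Integrable.mono' ((integrable_exp_neg_mul_sq (show 0 < b.re/2 by positivity)).const_mul M)
    hcont.aestronglyMeasurable
  exact ae_of_all _ hM

lemma tendsto_poly_gauss_atTop (m : ℕ) (b c c' : ℂ) (hb : 0 < b.re) :
    Tendsto (fun t : ℝ => ((t:ℂ)+c')^m * Complex.exp (-b*((t:ℂ)+c)^2)) atTop (nhds 0) := by
  obtain ⟨M, hM⟩ := norm_poly_gauss m b c c' hb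
  apply squeeze_zero_norm hM
  rw [show (0:ℝ) = M * 0 by ring]
  apply Tendsto.const_mul
  have h1 : Tendsto (fun t : ℝ => (b.re/2) * t^2) atTop atTop :=
    (tendsto_pow_atTop two_ne_zero).const_mul_atTop (by positivity)
  have h2 : Tendsto (fun t : ℝ => -((b.re/2) * t^2)) atTop atBot :=
    tendsto_neg_atTop_atBot.comp h1
  exact (Real.tendsto_exp_atBot.comp h2).congr (fun t => by rw [Function.comp_apply, neg_mul])

lemma tendsto_poly_gauss_atBot (m : ℕ) (b c c' : ℂ) (hb : 0 < b.re) :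
    Tendsto (fun t : ℝ => ((t:ℂ)+c')^m * Complex.exp (-b*((t:ℂ)+c)^2)) atBot (nhds 0) := by
  obtain ⟨M, hM⟩ := norm_poly_gauss m b c c' hb
  apply squeeze_zero_norm hM
  rw [show (0:ℝ) = M * 0 by ring]
  apply Tendsto.const_mul
  have h1 : Tendsto (fun t : ℝ => (b.re/2) * t^2) atBot atTop := by
    have h2 : Tendsto (fun t : ℝ => (b.re/2) * t^2) atTop atTop :=
      (tendsto_pow_atTop two_ne_zero).const_mul_atTop (by positivity)
    exact (h2.comp tendsto_neg_atBot_atTop).congr (fun t => by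
      rw [Function.comp_apply]; ring)
  have h2 : Tendsto (fun t : ℝ => -((b.re/2) * t^2)) atBot atBot :=
    tendsto_neg_atTop_atBot.comp h1
  exact (Real.tendsto_exp_atBot.comp h2).congr (fun t => by rw [Function.comp_apply, neg_mul])


lemma integral_deriv_zero (F F' : ℝ → ℂ) (hF : ∀ t, HasDerivAt F (F' t) t)
    (hint : Integrable F') (htop : Tendsto F atTop (nhds 0))
    (hbot : Tendsto F atBot (nhds 0)) :
    ∫ t : ℝ, F' t = 0 := by
  have h1 : ∫ t in Set.Ioi (0:ℝ), F' t = 0 - F 0 :=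
    MeasureTheory.integral_Ioi_of_hasDerivAt_of_tendsto
      (hF 0).continuousAt.continuousWithinAt (fun x _ => hF x) hint.integrableOn htop
  have h2 : ∫ t in Set.Iic (0:ℝ), F' t = F 0 - 0 :=
    MeasureTheory.integral_Iic_of_hasDerivAt_of_tendsto
      (hF 0).continuousAt.continuousWithinAt (fun x _ => hF x) hint.integrableOn hbot
  have h3 := MeasureTheory.integral_add_compl
    (measurableSet_Iic : MeasurableSet (Set.Iic (0:ℝ))) hint
  rw [Set.compl_Iic] at h3
  rw [← h3, h1, h2]
  ring

/-- The shifted complex Gaussian moments `Jc`. -/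
def Jc (b c : ℂ) (j : ℕ) : ℂ := ∫ t : ℝ, ((t:ℂ)+c)^j * Complex.exp (-b*((t:ℂ)+c)^2)

lemma hasDerivAt_JcF (b c : ℂ) (j : ℕ) (t : ℝ) :
    HasDerivAt (fun t : ℝ => ((t:ℂ)+c)^(j+1) * Complex.exp (-b*((t:ℂ)+c)^2))
      (((j:ℂ)+1)*((t:ℂ)+c)^j * Complex.exp (-b*((t:ℂ)+c)^2)
        - 2*b*((t:ℂ)+c)^(j+2) * Complex.exp (-b*((t:ℂ)+c)^2)) t := by
  have h1 : HasDerivAt (fun w : ℂ => w + c) 1 (t:ℂ) := (hasDerivAt_id _).add_const c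
  have h2 := h1.pow (j+1)
  have h3 := (h1.pow 2).const_mul (-b)
  have h4 := h3.cexp
  have h5 := h2.mul h4
  have h6 := h5.comp_ofReal
  convert h6 using 1
  · rfl
  simp only [Nat.add_sub_cancel, pow_one, mul_one, Pi.pow_apply]
  push_cast
  ring

lemma Jc_rec (b c : ℂ) (hb : 0 < b.re) (j : ℕ) :
    Jc b c (j+2) = (((j:ℂ)+1)/(2*b)) * Jc b c j := by
  have hbne : (2*b) ≠ 0 := by
    intro h
    have : b = 0 := by linear_combination h/2
    rw [this] at hb; simp at hb
  have hF := hasDerivAt_JcF b c j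
  have hi1 := integrable_poly_gauss j b c c hb
  have hi2 := integrable_poly_gauss (j+2) b c c hb
  have hint : Integrable (fun t : ℝ =>
      (((j:ℂ)+1)*((t:ℂ)+c)^j * Complex.exp (-b*((t:ℂ)+c)^2)
        - 2*b*((t:ℂ)+c)^(j+2) * Complex.exp (-b*((t:ℂ)+c)^2))) := by
    apply Integrable.sub
    · exact (hi1.const_mul ((j:ℂ)+1)).congr (ae_of_all _ (fun t => by ring))
    · exact (hi2.const_mul (2*b)).congr (ae_of_all _ (fun t => by ring))
  have hzero := integral_deriv_zero _ _ hF hint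
    (tendsto_poly_gauss_atTop (j+1) b c c hb) (tendsto_poly_gauss_atBot (j+1) b c c hb)
  rw [integral_sub ((hi1.const_mul ((j:ℂ)+1)).congr (ae_of_all _ (fun t => by ring)))
    ((hi2.const_mul (2*b)).congr (ae_of_all _ (fun t => by ring)))] at hzero
  have e1 : ∫ t : ℝ, ((j:ℂ)+1)*((t:ℂ)+c)^j * Complex.exp (-b*((t:ℂ)+c)^2)
      = ((j:ℂ)+1) * Jc b c j := by
    rw [Jc, ← integral_const_mul]
    congr 1; funext t; ring
  have e2 : ∫ t : ℝ, 2*b*((t:ℂ)+c)^(j+2) * Complex.exp (-b*((t:ℂ)+c)^2)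
      = (2*b) * Jc b c (j+2) := by
    rw [Jc, ← integral_const_mul]
    congr 1; funext t; ring
  rw [e1, e2, sub_eq_zero] at hzero
  rw [div_mul_eq_mul_div, eq_div_iff hbne]
  linear_combination -hzero

lemma Jc_one (b c : ℂ) (hb : 0 < b.re) : Jc b c 1 = 0 := by
  have hbne : (2*b) ≠ 0 := by
    intro h
    have : b = 0 := by linear_combination h/2
    rw [this] at hb; simp at hb
  have hF : ∀ t : ℝ, HasDerivAt (fun t : ℝ => Complex.exp (-b*((t:ℂ)+c)^2))
      (-2*b*((t:ℂ)+c) * Complex.exp (-b*((t:ℂ)+c)^2)) t := by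
    intro t
    have h1 : HasDerivAt (fun w : ℂ => w + c) 1 (t:ℂ) := (hasDerivAt_id _).add_const c
    have h4 := ((h1.pow 2).const_mul (-b)).cexp
    have h6 := h4.comp_ofReal
    convert h6 using 1
    · rfl
    simp only [pow_one, mul_one, Pi.pow_apply]
    ring
  have hi1 := integrable_poly_gauss 1 b c c hb
  have hint : Integrable (fun t : ℝ => -2*b*((t:ℂ)+c) * Complex.exp (-b*((t:ℂ)+c)^2)) := by
    exact (hi1.const_mul (-2*b)).congr (ae_of_all _ (fun t => by simp [pow_one]; ring))
  have htop := tendsto_poly_gauss_atTop 0 b c c hb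
  simp only [pow_zero, one_mul] at htop
  have hbot := tendsto_poly_gauss_atBot 0 b c c hb
  simp only [pow_zero, one_mul] at hbot
  have hzero := integral_deriv_zero _ _ hF hint htop hbot
  have e1 : ∫ t : ℝ, -2*b*((t:ℂ)+c) * Complex.exp (-b*((t:ℂ)+c)^2)
      = (-2*b) * Jc b c 1 := by
    rw [Jc, ← integral_const_mul]
    congr 1; funext t; rw [pow_one]; ring
  rw [e1] at hzero
  have := mul_eq_zero.1 hzero
  rcases this with h | h
  · exact absurd h (by simpa using hbne)
  · exact h

lemma Jc_zero (b c : ℂ) (hb : 0 < b.re) :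
    Jc b c 0 = ((Real.pi : ℂ)/b) ^ ((1:ℂ)/2) := by
  have hbne : b ≠ 0 := by
    intro h; rw [h] at hb; simp at hb
  rw [Jc]
  simp only [pow_zero, one_mul]
  have h1 : ∀ t : ℝ, -b*((t:ℂ)+c)^2
      = -b*(t:ℂ)^2 + (-2*b*c)*(t:ℂ) + (-b*c^2) := by
    intro t; ring
  simp_rw [h1]
  rw [integral_cexp_quadratic (show (-b).re < 0 by simpa using hb)]
  rw [neg_neg]
  have : -b*c^2 - (-2*b*c)^2/(4*(-b)) = 0 := by
    field_simp
    ring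
  rw [this, Complex.exp_zero, mul_one]

lemma Jc_even (b c : ℂ) (hb : 0 < b.re) (j : ℕ) :
    Jc b c (2*j) = (ddn j : ℂ) * ((2*b)⁻¹)^j * ((Real.pi : ℂ)/b) ^ ((1:ℂ)/2)
      ∧ Jc b c (2*j+1) = 0 := by
  induction j with
  | zero =>
    constructor
    · simp only [Nat.mul_zero, ddn, Nat.cast_one, pow_zero, one_mul, mul_one]
      exact Jc_zero b c hb
    · simp only [Nat.mul_zero, Nat.zero_add]
      exact Jc_one b c hb
  | succ j ih =>
    have hbne : (2*b) ≠ 0 := by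
      intro h
      have : b = 0 := by linear_combination h/2
      rw [this] at hb; simp at hb
    constructor
    · have h1 : 2*(j+1) = (2*j)+2 := by ring
      rw [h1, Jc_rec b c hb, ih.1]
      simp only [ddn]
      push_cast
      field_simp
      ring
    · have h1 : 2*(j+1)+1 = (2*j+1)+2 := by ring
      rw [h1, Jc_rec b c hb, ih.2, mul_zero]

/-- Closed form for complex Gaussian moments. -/
lemma int_heat (m : ℕ) (b c : ℂ) (hb : 0 < b.re) :
    ∫ t : ℝ, (t:ℂ)^m * Complex.exp (-b*((t:ℂ)+c)^2)
      = ((Real.pi : ℂ)/b) ^ ((1:ℂ)/2) * MM m (-c) ((2*b)⁻¹) := by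
  have hexp : ∀ t : ℝ, (t:ℂ)^m * Complex.exp (-b*((t:ℂ)+c)^2)
      = ∑ k ∈ Finset.range (m+1), (((t:ℂ)+c)^k * (-c)^(m-k) * (m.choose k : ℂ))
          * Complex.exp (-b*((t:ℂ)+c)^2) := by
    intro t
    rw [← Finset.sum_mul]
    congr 1
    rw [← add_pow]
    congr 1
    ring
  simp_rw [hexp]
  rw [integral_finset_sum _ (fun k _ => by
    exact ((integrable_poly_gauss k b c c hb).const_mul ((-c)^(m-k) * (m.choose k : ℂ))).congr
      (ae_of_all _ (fun t => by ring)))]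
  have hterm : ∀ k, (∫ t : ℝ, (((t:ℂ)+c)^k * (-c)^(m-k) * (m.choose k : ℂ))
      * Complex.exp (-b*((t:ℂ)+c)^2)) = ((-c)^(m-k) * (m.choose k : ℂ)) * Jc b c k := by
    intro k
    rw [Jc, ← integral_const_mul]
    congr 1; funext t; ring
  simp_rw [hterm]
  have hext : ∑ k ∈ Finset.range (m+1), ((-c)^(m-k) * (m.choose k : ℂ)) * Jc b c k
      = ∑ k ∈ Finset.range (2*(m+1)), ((-c)^(m-k) * (m.choose k : ℂ)) * Jc b c k := by
    apply Finset.sum_subset (Finset.range_subset_range.2 (by omega))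
    intro k _ hk
    have : m < k := by simp only [Finset.mem_range, not_lt] at hk ⊢; omega
    rw [Nat.choose_eq_zero_of_lt this]
    simp
  rw [hext, sum_range_even_odd]
  have hodd : ∑ j ∈ Finset.range (m+1), ((-c)^(m-(2*j+1)) * (m.choose (2*j+1) : ℂ)) * Jc b c (2*j+1) = 0 := by
    apply Finset.sum_eq_zero
    intro j _
    rw [(Jc_even b c hb j).2, mul_zero]
  rw [hodd, add_zero, MM, Finset.mul_sum]
  apply Finset.sum_congr rfl
  intro j _
  rw [(Jc_even b c hb j).1]
  ring

lemma integral_gamma (f : ℝ → ℂ) :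
    ∫ x, f x ∂γ = ∫ x, ProbabilityTheory.gaussianPDFReal 0 1 x • f x := by
  have hmeas : Measurable fun x => (ProbabilityTheory.gaussianPDFReal 0 1 x).toNNReal :=
    (ProbabilityTheory.measurable_gaussianPDFReal 0 1).real_toNNReal
  rw [γ, ProbabilityTheory.gaussianReal_of_var_ne_zero _ one_ne_zero]
  have hpdf : ProbabilityTheory.gaussianPDF 0 1
      = fun x => (((ProbabilityTheory.gaussianPDFReal 0 1 x).toNNReal : ℝ≥0) : ℝ≥0∞) := rfl
  rw [hpdf, integral_withDensity_eq_integral_smul hmeas f]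
  congr 1
  funext x
  simp only [NNReal.smul_def, Real.coe_toNNReal _ (ProbabilityTheory.gaussianPDFReal_nonneg 0 1 x)]

lemma integrable_gamma_iff (f : ℝ → ℂ) :
    Integrable f γ ↔ Integrable (fun x => ProbabilityTheory.gaussianPDFReal 0 1 x • f x) := by
  have hmeas : Measurable fun x => (ProbabilityTheory.gaussianPDFReal 0 1 x).toNNReal :=
    (ProbabilityTheory.measurable_gaussianPDFReal 0 1).real_toNNReal
  rw [γ, ProbabilityTheory.gaussianReal_of_var_ne_zero _ one_ne_zero]
  have hpdf : ProbabilityTheory.gaussianPDF 0 1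
      = fun x => (((ProbabilityTheory.gaussianPDFReal 0 1 x).toNNReal : ℝ≥0) : ℝ≥0∞) := rfl
  rw [hpdf, integrable_withDensity_iff_integrable_smul hmeas]
  apply integrable_congr
  apply ae_of_all
  intro x
  simp only [NNReal.smul_def, Real.coe_toNNReal _ (ProbabilityTheory.gaussianPDFReal_nonneg 0 1 x)]

lemma pdf_smul (x : ℝ) (w : ℂ) : ProbabilityTheory.gaussianPDFReal 0 1 x • w
    = ((Real.sqrt (2*Real.pi) : ℂ))⁻¹ * (Complex.exp (-((1:ℂ)/2)*((x:ℂ)+0)^2) * w) := by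
  rw [ProbabilityTheory.gaussianPDFReal, Complex.real_smul,
    show (2*Real.pi*(1:ℝ≥0) : ℝ) = 2*Real.pi by push_cast; ring]
  push_cast
  rw [mul_assoc]
  congr 2
  push_cast
  ring

lemma int_pow_gamma (k : ℕ) : Integrable (fun v : ℝ => ((v:ℂ))^k) γ := by
  rw [integrable_gamma_iff]
  have h := (integrable_poly_gauss k ((1:ℂ)/2) 0 0 (by norm_num)).const_mul
    (((Real.sqrt (2*Real.pi) : ℂ))⁻¹)
  apply h.congr
  apply ae_of_all
  intro v
  dsimp only
  rw [pdf_smul]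
  ring

lemma momc_even (j : ℕ) : ∫ y : ℝ, ((y:ℂ))^(2*j) ∂γ = (ddn j : ℂ) := by
  rw [integral_gamma]
  have h1 : ∀ y : ℝ, ProbabilityTheory.gaussianPDFReal 0 1 y • ((y:ℂ))^(2*j)
      = ((Real.sqrt (2*Real.pi) : ℂ))⁻¹
        * (((y:ℂ)+0)^(2*j) * Complex.exp (-((1:ℂ)/2)*((y:ℂ)+0)^2)) := by
    intro y
    rw [pdf_smul]
    ring
  simp_rw [h1]
  rw [integral_const_mul]
  have h2 : (∫ y : ℝ, ((y:ℂ)+0)^(2*j) * Complex.exp (-((1:ℂ)/2)*((y:ℂ)+0)^2))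
      = Jc ((1:ℂ)/2) 0 (2*j) := by
    rw [Jc]
  rw [h2, (Jc_even ((1:ℂ)/2) 0 (by norm_num) j).1]
  have h3 : ((2:ℂ) * ((1:ℂ)/2))⁻¹ = 1 := by norm_num
  have h4 : ((Real.pi : ℂ))/((1:ℂ)/2) = ((2*Real.pi : ℝ) : ℂ) := by push_cast; ring
  rw [h3, h4, one_pow, mul_one]
  have h5 : (((2*Real.pi : ℝ) : ℂ)) ^ ((1:ℂ)/2) = ((Real.sqrt (2*Real.pi) : ℝ) : ℂ) := by
    rw [show ((1:ℂ)/2) = (((1/2:ℝ)) : ℂ) by norm_num, ← Complex.ofReal_cpow (by positivity),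
      Real.sqrt_eq_rpow]
  rw [h5]
  have h7 : ((Real.sqrt (2*Real.pi) : ℝ) : ℂ) ≠ 0 := by
    have : (0:ℝ) < Real.sqrt (2*Real.pi) := Real.sqrt_pos.2 (by positivity)
    exact Complex.ofReal_ne_zero.2 this.ne'
  have h8 : ((Real.sqrt 2 : ℝ):ℂ) * ((Real.sqrt Real.pi : ℝ):ℂ) ≠ 0 := by
    have a2 : (0:ℝ) < Real.sqrt 2 := Real.sqrt_pos.2 (by norm_num)
    have api : (0:ℝ) < Real.sqrt Real.pi := Real.sqrt_pos.2 Real.pi_pos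
    exact mul_ne_zero (Complex.ofReal_ne_zero.2 a2.ne') (Complex.ofReal_ne_zero.2 api.ne')
  field_simp

lemma momc_odd (j : ℕ) : ∫ y : ℝ, ((y:ℂ))^(2*j+1) ∂γ = 0 := by
  rw [integral_gamma]
  have h1 : ∀ y : ℝ, ProbabilityTheory.gaussianPDFReal 0 1 y • ((y:ℂ))^(2*j+1)
      = ((Real.sqrt (2*Real.pi) : ℂ))⁻¹
        * (((y:ℂ)+0)^(2*j+1) * Complex.exp (-((1:ℂ)/2)*((y:ℂ)+0)^2)) := by
    intro y
    rw [pdf_smul]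
    ring
  simp_rw [h1]
  rw [integral_const_mul]
  have h2 : (∫ y : ℝ, ((y:ℂ)+0)^(2*j+1) * Complex.exp (-((1:ℂ)/2)*((y:ℂ)+0)^2))
      = Jc ((1:ℂ)/2) 0 (2*j+1) := by
    rw [Jc]
  rw [h2, (Jc_even ((1:ℂ)/2) 0 (by norm_num) j).2, mul_zero]

lemma int_poly (m : ℕ) (A B : ℂ) :
    ∫ v : ℝ, (A + B*((v:ℝ):ℂ))^m ∂γ = MM m A (B^2) := by
  have hexp : ∀ v : ℝ, (A + B*(v:ℂ))^m
      = ∑ k ∈ Finset.range (m+1), (B^k * A^(m-k) * (m.choose k : ℂ)) * ((v:ℂ))^k := by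
    intro v
    rw [add_comm, add_pow]
    apply Finset.sum_congr rfl
    intro k _
    rw [mul_pow]
    ring
  simp_rw [hexp]
  rw [integral_finset_sum _ (fun k _ => (int_pow_gamma k).const_mul _)]
  simp_rw [integral_const_mul]
  have hext : ∑ k ∈ Finset.range (m+1),
        (B^k * A^(m-k) * (m.choose k:ℂ)) * (∫ v:ℝ, ((v:ℂ))^k ∂γ)
      = ∑ k ∈ Finset.range (2*(m+1)),
        (B^k * A^(m-k) * (m.choose k:ℂ)) * (∫ v:ℝ, ((v:ℂ))^k ∂γ) := by
    apply Finset.sum_subset (Finset.range_subset_range.2 (by omega))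
    intro k _ hk
    have : m < k := by simp only [Finset.mem_range, not_lt] at hk ⊢; omega
    rw [Nat.choose_eq_zero_of_lt this]
    simp
  rw [hext, sum_range_even_odd]
  have hodd : ∑ j ∈ Finset.range (m+1),
      (B^(2*j+1) * A^(m-(2*j+1)) * (m.choose (2*j+1):ℂ)) * (∫ v:ℝ, ((v:ℂ))^(2*j+1) ∂γ) = 0 := by
    apply Finset.sum_eq_zero
    intro j _
    rw [momc_odd, mul_zero]
  rw [hodd, add_zero, MM]
  apply Finset.sum_congr rfl
  intro j _
  rw [momc_even, pow_mul]
  ring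

lemma integrable_poly_gamma (m : ℕ) (A B : ℂ) :
    Integrable (fun v : ℝ => (A + B*((v:ℝ):ℂ))^m) γ := by
  have hexp : (fun v : ℝ => (A + B*(v:ℂ))^m)
      = fun v : ℝ => ∑ k ∈ Finset.range (m+1), (B^k * A^(m-k) * (m.choose k : ℂ)) * (((v:ℝ):ℂ))^k := by
    funext v
    rw [add_comm, add_pow]
    apply Finset.sum_congr rfl
    intro k _
    rw [mul_pow]
    ring
  rw [hexp]
  exact integrable_finset_sum _ (fun k _ => (int_pow_gamma k).const_mul _)

lemma Hpoly_eq (m : ℕ) (x : ℂ) : Hpoly m x = MM m x (-1) := by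
  have h := int_poly m x Complex.I
  rw [Complex.I_sq] at h
  rw [Hpoly, ← h]

lemma integrable_pow_gauss (m : ℕ) (b c : ℂ) (hb : 0 < b.re) :
    Integrable (fun t : ℝ => ((t:ℂ))^m * Complex.exp (-b*((t:ℂ)+c)^2)) := by
  have h := integrable_poly_gauss m b c 0 hb
  simpa using h

lemma inner_eq (N : ℕ) (a : ℕ → ℂ) (ξ α β τ : ℂ) (hτ : 0 < τ.re)
    (hαβ : α^2 + β^2 = τ - 1) :
    (∫ y : ℝ, ∫ v : ℝ,
        ∑ ℓ ∈ Finset.range (N+1), a ℓ * (ξ + α*((v:ℝ):ℂ) + β*((y:ℝ):ℂ))^ℓ ∂γ ∂γ)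
      = heatP τ (fun t => ∑ ℓ ∈ Finset.range (N+1), a ℓ * Hpoly ℓ t) ξ := by
  have hτne : τ ≠ 0 := by
    intro h; rw [h] at hτ; simp at hτ
  set b : ℂ := (2*τ)⁻¹ with hbdef
  have h2τ : (2*τ) ≠ 0 := by
    intro h
    exact hτne (by linear_combination h/2)
  have hbre : 0 < b.re := by
    rw [hbdef, Complex.inv_re]
    apply div_pos
    · have h' : (2*τ).re = 2*τ.re := by simp [Complex.mul_re]
      rw [h']; linarith
    · exact Complex.normSq_pos.2 h2τ
  -- Step A : integrate in v
  have stepA : ∀ y : ℝ, (∫ v : ℝ,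
        ∑ ℓ ∈ Finset.range (N+1), a ℓ * (ξ + α*((v:ℝ):ℂ) + β*((y:ℝ):ℂ))^ℓ ∂γ)
      = ∑ ℓ ∈ Finset.range (N+1), a ℓ * MM ℓ (ξ + β*(y:ℂ)) (α^2) := by
    intro y
    have hre : ∀ v : ℝ, (ξ + α*(v:ℂ) + β*(y:ℂ)) = ((ξ + β*(y:ℂ)) + α*(v:ℂ)) := fun v => by ring
    rw [integral_finset_sum]
    · apply Finset.sum_congr rfl
      intro ℓ _
      calc (∫ v : ℝ, a ℓ * (ξ + α*(v:ℂ) + β*(y:ℂ))^ℓ ∂γ)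
          = ∫ v : ℝ, a ℓ * ((ξ + β*(y:ℂ)) + α*(v:ℂ))^ℓ ∂γ := by
            congr 1; funext v; rw [hre v]
        _ = a ℓ * ∫ v : ℝ, ((ξ + β*(y:ℂ)) + α*(v:ℂ))^ℓ ∂γ := integral_const_mul _ _
        _ = a ℓ * MM ℓ (ξ + β*(y:ℂ)) (α^2) := by rw [int_poly]
    · intro ℓ _
      apply (((integrable_poly_gamma ℓ (ξ + β*(y:ℂ)) α).const_mul (a ℓ))).congr
      apply ae_of_all
      intro v
      dsimp only
      rw [hre v]
  have hfun1 : (fun y : ℝ => ∫ v : ℝ,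
        ∑ ℓ ∈ Finset.range (N+1), a ℓ * (ξ + α*((v:ℝ):ℂ) + β*((y:ℝ):ℂ))^ℓ ∂γ)
      = fun y : ℝ => ∑ ℓ ∈ Finset.range (N+1), a ℓ * MM ℓ (ξ + β*((y:ℝ):ℂ)) (α^2) :=
    funext stepA
  rw [hfun1]
  -- Step B : integrate in y
  have expand : ∀ ℓ, (fun y : ℝ => MM ℓ (ξ + β*((y:ℝ):ℂ)) (α^2))
      = fun y : ℝ => ∑ k ∈ Finset.range (ℓ+1),
          ((ℓ.choose (2*k) : ℂ) * (ddn k : ℂ) * (α^2)^k) * (ξ + β*((y:ℝ):ℂ))^(ℓ-2*k) := by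
    intro ℓ
    funext y
    rw [MM]
  have hintMM : ∀ ℓ, Integrable (fun y : ℝ => a ℓ * MM ℓ (ξ + β*((y:ℝ):ℂ)) (α^2)) γ := by
    intro ℓ
    apply Integrable.const_mul
    rw [expand ℓ]
    exact integrable_finset_sum _ (fun k _ => (integrable_poly_gamma (ℓ-2*k) ξ β).const_mul _)
  rw [integral_finset_sum _ (fun ℓ _ => hintMM ℓ)]
  have stepB : ∀ ℓ, (∫ y : ℝ, a ℓ * MM ℓ (ξ + β*((y:ℝ):ℂ)) (α^2) ∂γ)
      = a ℓ * MM ℓ ξ (τ - 1) := by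
    intro ℓ
    rw [integral_const_mul]
    congr 1
    rw [expand ℓ, integral_finset_sum _
      (fun k _ => (integrable_poly_gamma (ℓ-2*k) ξ β).const_mul _)]
    have hterm : ∀ k, (∫ y : ℝ, ((ℓ.choose (2*k) : ℂ) * (ddn k : ℂ) * (α^2)^k)
          * (ξ + β*((y:ℝ):ℂ))^(ℓ-2*k) ∂γ)
        = ((ℓ.choose (2*k) : ℂ) * (ddn k : ℂ) * (α^2)^k) * MM (ℓ-2*k) ξ (β^2) := by
      intro k
      rw [integral_const_mul, int_poly]
    simp_rw [hterm]
    have hS := S_id ℓ ξ (α^2) (β^2)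
    rw [hαβ] at hS
    rw [← hS]
  simp_rw [stepB]
  -- Step C : the heat-flow side
  rw [heatP]
  have hker : ∀ t : ℝ, -(ξ - ((t:ℝ):ℂ))^2/(2*τ) = -b*(((t:ℝ):ℂ) + (-ξ))^2 := by
    intro t
    rw [hbdef, div_eq_mul_inv]
    ring
  have hZne : ((2:ℂ) * (Real.pi:ℂ) * τ) ^ ((1:ℂ)/2) ≠ 0 := by
    intro h
    rcases (Complex.cpow_eq_zero_iff _ _).1 h with ⟨h1, -⟩
    have : ((Real.pi:ℝ):ℂ) ≠ 0 := Complex.ofReal_ne_zero.2 Real.pi_ne_zero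
    exact (mul_ne_zero (mul_ne_zero two_ne_zero this) hτne) h1
  have hZrw : ((Real.pi:ℂ)/b) ^ ((1:ℂ)/2) = ((2:ℂ) * (Real.pi:ℂ) * τ) ^ ((1:ℂ)/2) := by
    congr 1
    rw [hbdef, div_eq_mul_inv, inv_inv]
    ring
  have hb2 : ((2:ℂ)*b)⁻¹ = τ := by
    rw [hbdef]
    field_simp
  have hinteg_rw : ∀ t : ℝ,
      (∑ ℓ ∈ Finset.range (N+1), a ℓ * Hpoly ℓ ((t:ℝ):ℂ))
          * Complex.exp (-(ξ - ((t:ℝ):ℂ))^2/(2*τ)) / ((2:ℂ) * (Real.pi:ℂ) * τ) ^ ((1:ℂ)/2)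
      = ∑ ℓ ∈ Finset.range (N+1), ∑ k ∈ Finset.range (ℓ+1),
          (a ℓ * ((ℓ.choose (2*k) : ℂ) * (ddn k : ℂ) * (-1:ℂ)^k
              / ((2:ℂ) * (Real.pi:ℂ) * τ) ^ ((1:ℂ)/2)))
            * ((((t:ℝ):ℂ))^(ℓ-2*k) * Complex.exp (-b*(((t:ℝ):ℂ) + (-ξ))^2)) := by
    intro t
    rw [hker t]
    simp only [Hpoly_eq, MM]
    rw [Finset.sum_mul, Finset.sum_div]
    apply Finset.sum_congr rfl
    intro ℓ _
    rw [Finset.mul_sum, Finset.sum_mul, Finset.sum_div]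
    apply Finset.sum_congr rfl
    intro k _
    ring
  simp_rw [hinteg_rw]
  rw [integral_finset_sum _ (fun ℓ _ => integrable_finset_sum _
    (fun k _ => (integrable_pow_gauss (ℓ-2*k) b (-ξ) hbre).const_mul _))]
  apply Finset.sum_congr rfl
  intro ℓ _
  rw [integral_finset_sum _
    (fun k _ => (integrable_pow_gauss (ℓ-2*k) b (-ξ) hbre).const_mul _)]
  have hterm2 : ∀ k, (∫ t : ℝ,
        (a ℓ * ((ℓ.choose (2*k) : ℂ) * (ddn k : ℂ) * (-1:ℂ)^k
            / ((2:ℂ) * (Real.pi:ℂ) * τ) ^ ((1:ℂ)/2)))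
          * ((((t:ℝ):ℂ))^(ℓ-2*k) * Complex.exp (-b*(((t:ℝ):ℂ) + (-ξ))^2)))
      = (a ℓ * ((ℓ.choose (2*k) : ℂ) * (ddn k : ℂ) * (-1:ℂ)^k)) * MM (ℓ-2*k) ξ τ := by
    intro k
    rw [integral_const_mul, int_heat (ℓ-2*k) b (-ξ) hbre, neg_neg, hb2, hZrw]
    field_simp [hZne]
    try ring
  simp_rw [hterm2]
  have hS := S_id ℓ ξ (-1) τ
  have hτ1 : MM ℓ ξ (τ - 1) = MM ℓ ξ (-1 + τ) := by
    congr 1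
    ring
  rw [hτ1, ← hS, Finset.mul_sum]
  apply Finset.sum_congr rfl
  intro k _
  ring

/-- The Beckner--Janson flow `s ↦ ∫ (∫ |∫∫ g((u+iv)√s + z(x+iy)√(1-s)) dγ(v) dγ(y)|^q dγ(x))^{p/q} dγ(u)`
for the polynomial `g(ξ) = ∑_{ℓ=0}^{L} a ℓ · ξ^ℓ`. -/
def becknerFlow (p q : ℝ) (z : ℂ) (L : ℕ) (a : ℕ → ℂ) (s : ℝ) : ℝ :=
  ∫ u : ℝ, (∫ x : ℝ, ‖(∫ y : ℝ, ∫ v : ℝ,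
      ∑ ℓ ∈ Finset.range (L + 1), a ℓ *
        (((u : ℂ) + Complex.I * (v : ℂ)) * (Real.sqrt s : ℂ)
          + z * ((x : ℂ) + Complex.I * (y : ℂ)) * (Real.sqrt (1 - s) : ℂ)) ^ ℓ
      ∂γ ∂γ)‖ ^ q ∂γ) ^ (p / q) ∂γ

/-- the Beckner--Janson flow rewritten through the analytically
extended heat flow. -/
theorem stmt13 (N : ℕ) (a : ℕ → ℂ) (p q : ℝ) (hp : 1 ≤ p) (hpq : p ≤ q)
    (s : ℝ) (hs0 : 0 < s) (hs1 : s < 1) (z : ℂ) (hz : ‖z‖ < 1) :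
    becknerFlow p q z N a s
      = ∫ u : ℝ, (∫ x : ℝ, ‖
          (heatP ((1 - (s : ℂ)) * (1 - z ^ 2))
            (fun ξ => ∑ ℓ ∈ Finset.range (N + 1), a ℓ * Hpoly ℓ ξ)
            (((u * Real.sqrt s : ℝ) : ℂ) + z * (x : ℂ) * (Real.sqrt (1 - s) : ℂ)))‖ ^ q
          ∂γ) ^ (p / q) ∂γ := by
  have hs0' : (0:ℝ) ≤ s := hs0.le
  have hs1' : (0:ℝ) ≤ 1 - s := by linarith
  have hτre : 0 < ((1 - (s:ℂ)) * (1 - z^2)).re := by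
    have hform : (1 - (s:ℂ)) * (1 - z^2) = (((1-s : ℝ)):ℂ) * (1 - z^2) := by push_cast; ring
    rw [hform, Complex.re_ofReal_mul]
    apply mul_pos (by linarith : (0:ℝ) < 1 - s)
    have h3 : (z^2).re ≤ ‖z^2‖ := Complex.re_le_norm _
    have h4 : ‖z^2‖ = ‖z‖^2 := by rw [norm_pow]
    have h5 : ‖z‖^2 < 1 := by
      nlinarith [norm_nonneg z]
    have h6 : (1 - z^2).re = 1 - (z^2).re := by
      simp [Complex.sub_re, Complex.one_re]
    rw [h6]
    nlinarith
  have key : ∀ u x : ℝ,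
      (∫ y : ℝ, ∫ v : ℝ, ∑ ℓ ∈ Finset.range (N+1), a ℓ *
          (((u:ℂ) + Complex.I*((v:ℝ):ℂ)) * ((Real.sqrt s : ℝ):ℂ)
            + z * ((x:ℂ) + Complex.I*((y:ℝ):ℂ)) * ((Real.sqrt (1-s) : ℝ):ℂ))^ℓ ∂γ ∂γ)
      = heatP ((1 - (s:ℂ)) * (1 - z^2))
          (fun ξ => ∑ ℓ ∈ Finset.range (N+1), a ℓ * Hpoly ℓ ξ)
          (((u * Real.sqrt s : ℝ):ℂ) + z*(x:ℂ)*((Real.sqrt (1-s) : ℝ):ℂ)) := by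
    intro u x
    have hsq1 : ((Real.sqrt s : ℝ):ℂ)^2 = ((s:ℝ):ℂ) := by
      rw [← Complex.ofReal_pow, Real.sq_sqrt hs0']
    have hsq2 : ((Real.sqrt (1-s) : ℝ):ℂ)^2 = ((1-s:ℝ):ℂ) := by
      rw [← Complex.ofReal_pow, Real.sq_sqrt hs1']
    have hαβ : (Complex.I * ((Real.sqrt s : ℝ):ℂ))^2
        + (Complex.I * z * ((Real.sqrt (1-s) : ℝ):ℂ))^2
        = (1 - (s:ℂ)) * (1 - z^2) - 1 := by
      calc (Complex.I * ((Real.sqrt s : ℝ):ℂ))^2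
            + (Complex.I * z * ((Real.sqrt (1-s) : ℝ):ℂ))^2
          = Complex.I^2 * ((Real.sqrt s : ℝ):ℂ)^2
            + Complex.I^2 * z^2 * ((Real.sqrt (1-s) : ℝ):ℂ)^2 := by ring
        _ = -((s:ℝ):ℂ) - z^2*((1-s:ℝ):ℂ) := by rw [hsq1, hsq2, Complex.I_sq]; ring
        _ = (1 - (s:ℂ)) * (1 - z^2) - 1 := by push_cast; ring
    have hbase : ∀ y v : ℝ, ((u:ℂ) + Complex.I*((v:ℝ):ℂ)) * ((Real.sqrt s : ℝ):ℂ)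
          + z * ((x:ℂ) + Complex.I*((y:ℝ):ℂ)) * ((Real.sqrt (1-s) : ℝ):ℂ)
        = (((u * Real.sqrt s : ℝ):ℂ) + z*(x:ℂ)*((Real.sqrt (1-s) : ℝ):ℂ))
          + (Complex.I * ((Real.sqrt s : ℝ):ℂ))*((v:ℝ):ℂ)
          + (Complex.I * z * ((Real.sqrt (1-s) : ℝ):ℂ))*((y:ℝ):ℂ) := by
      intro y v
      push_cast
      ring
    have h1 : (fun y : ℝ => ∫ v : ℝ, ∑ ℓ ∈ Finset.range (N+1), a ℓ *
          (((u:ℂ) + Complex.I*((v:ℝ):ℂ)) * ((Real.sqrt s : ℝ):ℂ)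
            + z * ((x:ℂ) + Complex.I*((y:ℝ):ℂ)) * ((Real.sqrt (1-s) : ℝ):ℂ))^ℓ ∂γ)
        = fun y : ℝ => ∫ v : ℝ, ∑ ℓ ∈ Finset.range (N+1), a ℓ *
            ((((u * Real.sqrt s : ℝ):ℂ) + z*(x:ℂ)*((Real.sqrt (1-s) : ℝ):ℂ))
              + (Complex.I * ((Real.sqrt s : ℝ):ℂ))*((v:ℝ):ℂ)
              + (Complex.I * z * ((Real.sqrt (1-s) : ℝ):ℂ))*((y:ℝ):ℂ))^ℓ ∂γ := by
      funext y
      congr 1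
      funext v
      apply Finset.sum_congr rfl
      intro ℓ _
      rw [hbase y v]
    rw [h1]
    exact inner_eq N a _ _ _ _ hτre hαβ
  unfold becknerFlow
  simp only [key]


end
end

section
/- Let 1 < p ≤ 2 and q = p/(p-1). Let g̃ = Σ_{ℓ=0}^{N} a_ℓ H_ℓ be a polynomial written in the Hermite basis, with a_ℓ ∈ ℂ, and define f(y) := g̃(y) e^{−y²/(2p)} (2π)^{−1/(2p)}. Then (p^{1/(2p)} / q^{1/(2q)}) · ( ∫_ℝ | Σ_{ℓ=0}^{N} a_ℓ (i√(p-1))^ℓ H_ℓ(x) |^q dγ(x) )^{1/q} = ( ∫_ℝ | f̂(ξ) |^q dξ )^{1/q}, where f̂(ξ) = ∫_ℝ f(y) e^{−2πiξy} dy. -/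
open MeasureTheory Finset

noncomputable section

namespace S14
open Filter Real Complex ProbabilityTheory
open scoped NNReal ENNReal

def bconv (u M : ℕ → ℂ) (n : ℕ) : ℂ :=
  ∑ k ∈ range (n+1), (n.choose k : ℂ) * u k * M (n - k)

lemma bconv_succ (u M : ℕ → ℂ) (n : ℕ) :
    bconv u M (n+1) = (∑ k ∈ range (n+1), (n.choose k : ℂ) * u k * M (n+1-k))
      + ∑ k ∈ range (n+1), (n.choose k : ℂ) * u (k+1) * M (n-k) := by
  unfold bconv
  rw [Finset.sum_range_succ' (fun k => ((n+1).choose k : ℂ) * u k * M (n+1-k)) (n+1)]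
  have h1 : ∀ i ∈ range (n+1),
      (((n+1).choose (i+1) : ℂ)) * u (i+1) * M (n+1-(i+1))
        = ((n.choose (i+1) : ℂ)) * u (i+1) * M (n-i) + ((n.choose i : ℂ)) * u (i+1) * M (n-i) := by
    intro i _
    rw [Nat.choose_succ_succ n i, show n+1-(i+1) = n-i from by omega]
    push_cast; ring
  rw [Finset.sum_congr rfl h1, Finset.sum_add_distrib]
  have h2 : (∑ i ∈ range (n+1), ((n.choose (i+1) : ℂ)) * u (i+1) * M (n-i))
      + ((n+1).choose 0 : ℂ) * u 0 * M (n+1-0)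
      = ∑ k ∈ range (n+1), (n.choose k : ℂ) * u k * M (n+1-k) := by
    have h3 := Finset.sum_range_succ' (fun k => ((n.choose k : ℂ)) * u k * M (n+1-k)) (n+1)
    rw [Finset.sum_range_succ (fun k => ((n.choose k : ℂ)) * u k * M (n+1-k)) (n+1)] at h3
    simp only [Nat.choose_succ_self, Nat.cast_zero, zero_mul, add_zero] at h3
    have h4 : ∀ i ∈ range (n+1), ((n.choose (i+1) : ℂ)) * u (i+1) * M (n+1-(i+1))
        = ((n.choose (i+1) : ℂ)) * u (i+1) * M (n-i) := by
      intro i _; congr 2; omega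
    rw [Finset.sum_congr rfl h4] at h3
    simp only [Nat.choose_zero_right, Nat.cast_one, one_mul, Nat.sub_zero] at h3 ⊢
    rw [← h3]
  rw [← h2]
  ring

lemma bconv_rec (u M : ℕ → ℂ) (ρ σ w : ℂ)
    (hu : ∀ k : ℕ, u (k+1) = ρ * k * u (k-1))
    (hM : ∀ m : ℕ, M (m+1) = σ * m * M (m-1) + w * M m) (n : ℕ) :
    bconv u M ((n+1)+1) = w * bconv u M (n+1) + (σ + ρ) * ((n+1 : ℕ) : ℂ) * bconv u M n := by
  rw [bconv_succ u M (n+1)]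
  have hchoose : ∀ k : ℕ, k ≤ n →
      ((n+1-k : ℕ) : ℂ) * ((n+1).choose k : ℂ) = ((n+1 : ℕ) : ℂ) * (n.choose k : ℂ) := by
    intro k hk
    have h1 : (n+1).choose (k+1) * (k+1) = (n+1).choose k * (n+1-k) :=
      Nat.choose_succ_right_eq (n+1) k
    have h2 : (n+1) * n.choose k = (n+1).choose (k+1) * (k+1) := Nat.add_one_mul_choose_eq n k
    have h3 : (n+1) * n.choose k = (n+1).choose k * (n+1-k) := h2.trans h1
    have h4 := congrArg (fun t : ℕ => (t:ℂ)) h3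
    simp only [Nat.cast_mul] at h4
    linear_combination -h4
  have hA : ∀ k ∈ range (n+1+1), ((n+1).choose k : ℂ) * u k * M (n+1+1-k)
      = σ * ((n+1-k : ℕ) : ℂ) * (((n+1).choose k : ℂ) * u k * M (n-k))
        + w * (((n+1).choose k : ℂ) * u k * M (n+1-k)) := by
    intro k hk
    have hk' : k ≤ n+1 := by simpa [Nat.lt_succ_iff] using hk
    rw [show n+1+1-k = (n+1-k)+1 from by omega, hM (n+1-k),
      show (n+1-k)-1 = n-k from by omega]
    ring
  rw [Finset.sum_congr rfl hA, Finset.sum_add_distrib, ← Finset.mul_sum]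
  have hA1 : (∑ k ∈ range (n+1+1), σ * ((n+1-k : ℕ) : ℂ) * (((n+1).choose k : ℂ) * u k * M (n-k)))
      = σ * ((n+1 : ℕ) : ℂ) * bconv u M n := by
    rw [Finset.sum_range_succ]
    simp only [Nat.sub_self, Nat.cast_zero, mul_zero, zero_mul, add_zero]
    have h5 : ∀ k ∈ range (n+1), σ * ((n+1-k : ℕ) : ℂ) * (((n+1).choose k : ℂ) * u k * M (n-k))
        = σ * ((n+1 : ℕ) : ℂ) * ((n.choose k : ℂ) * u k * M (n-k)) := by
      intro k hk
      have := hchoose k (by simpa [Nat.lt_succ_iff] using hk)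
      linear_combination (σ * u k * M (n-k)) * this
    rw [Finset.sum_congr rfl h5, ← Finset.mul_sum]
    rfl
  have hB : (∑ k ∈ range (n+1+1), ((n+1).choose k : ℂ) * u (k+1) * M (n+1-k))
      = ρ * ((n+1 : ℕ) : ℂ) * bconv u M n := by
    rw [Finset.sum_range_succ' (fun k => (((n+1)).choose k : ℂ) * u (k+1) * M (n+1-k)) (n+1)]
    have h0 : (((n+1)).choose 0 : ℂ) * u (0+1) * M (n+1-0) = 0 := by simp [hu 0]
    rw [h0, add_zero]
    have h6 : ∀ i ∈ range (n+1), (((n+1)).choose (i+1) : ℂ) * u (i+1+1) * M (n+1-(i+1))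
        = ρ * ((n+1 : ℕ) : ℂ) * ((n.choose i : ℂ) * u i * M (n-i)) := by
      intro i hi
      rw [hu (i+1), show (i+1:ℕ)-1 = i from rfl, show n+1-(i+1) = n-i from by omega]
      have hc : (((i+1) : ℕ) : ℂ) * ((n+1).choose (i+1) : ℂ)
          = ((n+1 : ℕ) : ℂ) * (n.choose i : ℂ) := by
        have h2 : (n+1) * n.choose i = (n+1).choose (i+1) * (i+1) := Nat.add_one_mul_choose_eq n i
        have h4 := congrArg (fun t : ℕ => (t:ℂ)) h2
        simp only [Nat.cast_mul] at h4
        linear_combination -h4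
      linear_combination (ρ * u i * M (n-i)) * hc
    rw [Finset.sum_congr rfl h6, ← Finset.mul_sum]
    rfl
  rw [hA1, hB]
  unfold bconv
  push_cast
  ring

lemma bconv_eq_of_rec (u M v W : ℕ → ℂ) (c w : ℂ)
    (recU : ∀ n, bconv u M ((n+1)+1) = w * bconv u M (n+1) + c * ((n+1:ℕ):ℂ) * bconv u M n)
    (recV : ∀ n, bconv v W ((n+1)+1) = w * bconv v W (n+1) + c * ((n+1:ℕ):ℂ) * bconv v W n)
    (h0 : bconv u M 0 = M 0 * bconv v W 0) (h1 : bconv u M 1 = M 0 * bconv v W 1) :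
    ∀ n, bconv u M n = M 0 * bconv v W n := by
  intro n
  induction n using Nat.strong_induction_on with
  | _ n ih =>
    match n with
    | 0 => exact h0
    | 1 => exact h1
    | (m+2) =>
      rw [show m+2 = (m+1)+1 from rfl, recU m, recV m]
      rw [ih (m+1) (by omega), ih m (by omega)]
      ring


def Eg (b θ : ℝ) (y : ℝ) : ℂ :=
  Complex.exp (-(b:ℂ) * (y:ℂ)^2 + (θ:ℂ) * Complex.I * (y:ℂ))

def Mg (b θ : ℝ) (m : ℕ) : ℂ := ∫ y : ℝ, (y:ℂ)^m * Eg b θ y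

lemma norm_Eg (b θ : ℝ) (y : ℝ) : ‖Eg b θ y‖ = Real.exp (-b * y^2) := by
  rw [Eg, Complex.norm_exp]
  congr 1
  simp [Complex.add_re, Complex.mul_re, Complex.mul_im, pow_two]

lemma cont_monoEg (b θ : ℝ) (m : ℕ) : Continuous (fun y : ℝ => (y:ℂ)^m * Eg b θ y) := by
  unfold Eg; fun_prop

lemma norm_monoEg (b θ : ℝ) (m : ℕ) (y : ℝ) :
    ‖(y:ℂ)^m * Eg b θ y‖ = |y|^m * Real.exp (-b * y^2) := by
  rw [norm_mul, norm_pow, Complex.norm_real, norm_Eg, Real.norm_eq_abs]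

lemma integrable_abs_pow_gauss {b : ℝ} (hb : 0 < b) (m : ℕ) :
    Integrable (fun y : ℝ => |y|^m * Real.exp (-b * y^2)) := by
  have h := (integrable_rpow_mul_exp_neg_mul_sq hb
    (s := (m:ℝ)) (by exact neg_one_lt_zero.trans_le (Nat.cast_nonneg m))).abs
  refine h.congr (Eventually.of_forall fun y => ?_)
  simp [abs_mul, Real.rpow_natCast, abs_pow, abs_of_pos (Real.exp_pos _)]

lemma integrable_monoEg {b : ℝ} (hb : 0 < b) (θ : ℝ) (m : ℕ) :
    Integrable (fun y : ℝ => (y:ℂ)^m * Eg b θ y) := by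
  refine Integrable.mono' (integrable_abs_pow_gauss hb m)
    (cont_monoEg b θ m).aestronglyMeasurable (Eventually.of_forall fun y => ?_)
  rw [norm_monoEg]

lemma tendsto_abs_pow_gauss_atTop {b : ℝ} (hb : 0 < b) (m : ℕ) :
    Tendsto (fun y : ℝ => |y|^m * Real.exp (-b * y^2)) atTop (nhds 0) := by
  have h1 := (rpow_mul_exp_neg_mul_sq_isLittleO_exp_neg hb (m:ℝ)).isBigO
  have hmul : Tendsto (fun x:ℝ => -(1/2)*x) atTop atBot := by
    have h : Tendsto (fun x:ℝ => (1/2)*x) atTop atTop :=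
      Tendsto.const_mul_atTop (by norm_num) tendsto_id
    have := tendsto_neg_atTop_atBot.comp h
    refine this.congr fun x => ?_
    simp [neg_mul]
  have h2 : Tendsto (fun x : ℝ => Real.exp (-(1/2)*x)) atTop (nhds 0) :=
    Real.tendsto_exp_atBot.comp hmul
  have h3 := h1.trans_tendsto h2
  refine h3.congr' (?_ : _ =ᶠ[atTop] _)
  filter_upwards [eventually_gt_atTop (0:ℝ)] with y hy
  rw [Real.rpow_natCast, abs_of_pos hy]

lemma tendsto_monoEg_atTop {b : ℝ} (hb : 0 < b) (θ : ℝ) (m : ℕ) :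
    Tendsto (fun y : ℝ => (y:ℂ)^m * Eg b θ y) atTop (nhds 0) := by
  rw [tendsto_zero_iff_norm_tendsto_zero]
  refine (tendsto_abs_pow_gauss_atTop hb m).congr fun y => ?_
  rw [norm_monoEg]

lemma tendsto_monoEg_atBot {b : ℝ} (hb : 0 < b) (θ : ℝ) (m : ℕ) :
    Tendsto (fun y : ℝ => (y:ℂ)^m * Eg b θ y) atBot (nhds 0) := by
  rw [tendsto_zero_iff_norm_tendsto_zero]
  have h0 := tendsto_abs_pow_gauss_atTop hb m
  have h1 : Tendsto (fun y : ℝ => |(-y)|^m * Real.exp (-b * (-y)^2)) atBot (nhds 0) :=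
    h0.comp tendsto_neg_atBot_atTop
  refine h1.congr fun y => ?_
  rw [norm_monoEg, abs_neg, neg_pow]
  norm_num

lemma hasDerivAt_monoEg (b θ : ℝ) (m : ℕ) (y : ℝ) :
    HasDerivAt (fun y : ℝ => (y:ℂ)^m * Eg b θ y)
      ((m:ℂ) * (y:ℂ)^(m-1) * Eg b θ y
        + (y:ℂ)^m * ((-(b:ℂ) * (2*(y:ℂ)) + (θ:ℂ)*Complex.I) * Eg b θ y)) y := by
  have h1 : HasDerivAt (fun y : ℝ => ((y:ℝ):ℂ)^m) ((m:ℂ) * (y:ℂ)^(m-1)) y :=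
    (hasDerivAt_pow m (y:ℂ)).comp_ofReal
  have hq : HasDerivAt (fun z : ℂ => -(b:ℂ)*z^2 + (θ:ℂ)*Complex.I*z)
      (-(b:ℂ)*(2*(y:ℂ)) + (θ:ℂ)*Complex.I) (y:ℂ) := by
    have hp := (hasDerivAt_pow 2 (y:ℂ)).const_mul (-(b:ℂ))
    have hl := (hasDerivAt_id (y:ℂ)).const_mul ((θ:ℂ)*Complex.I)
    have := hp.add hl
    have e : (-(b:ℂ) * (((2:ℕ):ℂ) * (y:ℂ) ^ (2 - 1)) + (θ:ℂ) * Complex.I * 1)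
        = -(b:ℂ)*(2*(y:ℂ)) + (θ:ℂ)*Complex.I := by norm_num
    rw [e] at this
    exact this
  have h2 : HasDerivAt (fun y : ℝ => Eg b θ y)
      ((-(b:ℂ)*(2*(y:ℂ)) + (θ:ℂ)*Complex.I) * Eg b θ y) y := by
    have := (hq.cexp).comp_ofReal
    simpa [Eg, mul_comm] using this
  exact h1.mul h2

lemma integral_hasDerivAt_eq_zero (f f' : ℝ → ℂ) (hd : ∀ y, HasDerivAt f (f' y) y)
    (hi : Integrable f') (ht : Tendsto f atTop (nhds 0)) (hbo : Tendsto f atBot (nhds 0)) :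
    ∫ y : ℝ, f' y = 0 := by
  have h1 := MeasureTheory.integral_Ioi_of_hasDerivAt_of_tendsto (a := (0:ℝ)) (m := (0:ℂ))
    (hd 0).continuousAt.continuousWithinAt (fun x _ => (hd x)) hi.integrableOn ht
  have h2 := MeasureTheory.integral_Iic_of_hasDerivAt_of_tendsto (a := (0:ℝ)) (m := (0:ℂ))
    (hd 0).continuousAt.continuousWithinAt (fun x _ => (hd x)) hi.integrableOn hbo
  rw [← intervalIntegral.integral_Iic_add_Ioi hi.integrableOn hi.integrableOn, h1, h2]
  ring

lemma Mg_succ {b : ℝ} (hb : 0 < b) (θ : ℝ) (m : ℕ) :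
    Mg b θ (m+1) = ((m:ℂ) * Mg b θ (m-1) + (θ:ℂ) * Complex.I * Mg b θ m) / (2*(b:ℂ)) := by
  have i1 := (integrable_monoEg hb θ (m-1)).const_mul (m:ℂ)
  have i2 := (integrable_monoEg hb θ (m+1)).const_mul (-(2*(b:ℂ)))
  have i3 := (integrable_monoEg hb θ m).const_mul ((θ:ℂ)*Complex.I)
  have key : (∫ y : ℝ, ((m:ℂ) * ((y:ℂ)^(m-1) * Eg b θ y)
      + (-(2*(b:ℂ))) * ((y:ℂ)^(m+1) * Eg b θ y)
      + ((θ:ℂ)*Complex.I) * ((y:ℂ)^m * Eg b θ y))) = 0 := by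
    apply integral_hasDerivAt_eq_zero (fun y : ℝ => (y:ℂ)^m * Eg b θ y)
    · intro y
      have h := hasDerivAt_monoEg b θ m y
      have e : ((m:ℂ) * (y:ℂ)^(m-1) * Eg b θ y
          + (y:ℂ)^m * ((-(b:ℂ) * (2*(y:ℂ)) + (θ:ℂ)*Complex.I) * Eg b θ y))
          = ((m:ℂ) * ((y:ℂ)^(m-1) * Eg b θ y)
            + (-(2*(b:ℂ))) * ((y:ℂ)^(m+1) * Eg b θ y)
            + ((θ:ℂ)*Complex.I) * ((y:ℂ)^m * Eg b θ y)) := by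
        rw [pow_succ]; ring
      rwa [e] at h
    · exact (i1.add i2).add i3
    · exact tendsto_monoEg_atTop hb θ m
    · exact tendsto_monoEg_atBot hb θ m
  have i12 : Integrable (fun x : ℝ => (m:ℂ) * ((x:ℂ)^(m-1) * Eg b θ x)
      + (-(2*(b:ℂ))) * ((x:ℂ)^(m+1) * Eg b θ x)) := i1.add i2
  rw [integral_add i12 i3, integral_add i1 i2,
    integral_const_mul, integral_const_mul, integral_const_mul] at key
  have hbne : (2*(b:ℂ)) ≠ 0 := by
    simp only [ne_eq, mul_eq_zero]
    push_neg
    exact ⟨two_ne_zero, Complex.ofReal_ne_zero.mpr (ne_of_gt hb)⟩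
  unfold Mg
  rw [eq_div_iff hbne]
  linear_combination -key

lemma Mg_zero {b : ℝ} (hb : 0 < b) (θ : ℝ) :
    Mg b θ 0 = ((Real.sqrt (π/b) : ℝ) : ℂ) * Complex.exp (-(θ:ℂ)^2/(4*(b:ℂ))) := by
  have h := integral_cexp_quadratic (b := -(b:ℂ))
    (by simpa using hb) ((θ:ℂ)*Complex.I) 0
  have e1 : Mg b θ 0 = ∫ x : ℝ, Complex.exp (-(b:ℂ)*(x:ℂ)^2 + (θ:ℂ)*Complex.I*(x:ℂ) + 0) := by
    unfold Mg Eg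
    congr 1; funext y; rw [pow_zero, one_mul, add_zero]
  rw [e1, h]
  have e2 : ((π:ℂ) / -(-(b:ℂ))) = (((π/b : ℝ)):ℂ) := by
    push_cast; rw [neg_neg]
  rw [e2]
  have e3 : ((((π/b : ℝ)):ℂ)) ^ ((1:ℂ)/2) = (((Real.sqrt (π/b)):ℝ):ℂ) := by
    rw [show ((1:ℂ)/2) = (((1/2 : ℝ)):ℂ) by norm_num,
      ← Complex.ofReal_cpow (by positivity), Real.sqrt_eq_rpow]
  rw [e3]
  congr 1
  have h4 : ((θ:ℂ)*Complex.I)^2 = -(θ:ℂ)^2 := by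
    rw [mul_pow, Complex.I_sq]; ring
  rw [h4]
  have hbne : (b:ℂ) ≠ 0 := Complex.ofReal_ne_zero.mpr (ne_of_gt hb)
  field_simp
  ring_nf


lemma pdf01 (x : ℝ) : ProbabilityTheory.gaussianPDFReal 0 1 x
    = (Real.sqrt (2*π))⁻¹ * Real.exp (-x^2/2) := by
  simp [ProbabilityTheory.gaussianPDFReal]

lemma gamma_eq : γ = volume.withDensity
    (fun x => ((Real.toNNReal (ProbabilityTheory.gaussianPDFReal 0 1 x) : ℝ≥0) : ℝ≥0∞)) := by
  rw [γ, ProbabilityTheory.gaussianReal_of_var_ne_zero 0 one_ne_zero]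
  rfl

lemma integral_gamma {E : Type*} [NormedAddCommGroup E] [NormedSpace ℝ E] (f : ℝ → E) :
    ∫ x, f x ∂γ = ∫ x : ℝ, (ProbabilityTheory.gaussianPDFReal 0 1 x) • f x := by
  rw [gamma_eq, integral_withDensity_eq_integral_smul
    ((ProbabilityTheory.measurable_gaussianPDFReal 0 1).real_toNNReal) f]
  congr 1
  funext x
  rw [NNReal.smul_def, Real.coe_toNNReal _ (ProbabilityTheory.gaussianPDFReal_nonneg 0 1 x)]

lemma integrable_gamma_iff {E : Type*} [NormedAddCommGroup E] [NormedSpace ℝ E] (f : ℝ → E) :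
    Integrable f γ ↔ Integrable (fun x : ℝ => (ProbabilityTheory.gaussianPDFReal 0 1 x) • f x) := by
  rw [gamma_eq, integrable_withDensity_iff_integrable_smul
    ((ProbabilityTheory.measurable_gaussianPDFReal 0 1).real_toNNReal)]
  constructor <;> intro h <;> refine h.congr (Eventually.of_forall fun x => ?_) <;>
    simp only [NNReal.smul_def, Real.coe_toNNReal _ (ProbabilityTheory.gaussianPDFReal_nonneg 0 1 x)]

def muG (k : ℕ) : ℂ := ((Real.sqrt (2*π) : ℝ)⁻¹ : ℂ) * Mg (1/2) 0 k

lemma smul_eq_EgMul (k : ℕ) (x : ℝ) :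
    (ProbabilityTheory.gaussianPDFReal 0 1 x) • ((x:ℂ)^k)
      = ((Real.sqrt (2*π) : ℝ)⁻¹ : ℂ) * ((x:ℂ)^k * Eg (1/2) 0 x) := by
  rw [Complex.real_smul, pdf01, Eg]
  have e : (-(((1:ℝ)/2:ℝ):ℂ) * (x:ℂ)^2 + ((0:ℝ):ℂ) * Complex.I * (x:ℂ))
      = (((-x^2/2 : ℝ)):ℂ) := by push_cast; ring
  rw [e, ← Complex.ofReal_exp]
  push_cast
  ring

lemma integrable_mono_gamma (k : ℕ) : Integrable (fun t : ℝ => (t:ℂ)^k) γ := by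
  rw [integrable_gamma_iff]
  refine ((integrable_monoEg (by norm_num : (0:ℝ) < 1/2) 0 k).const_mul
    ((Real.sqrt (2*π) : ℝ)⁻¹ : ℂ)).congr (Eventually.of_forall fun x => ?_)
  exact (smul_eq_EgMul k x).symm

lemma integral_mono_gamma (k : ℕ) : ∫ t : ℝ, (t:ℂ)^k ∂γ = muG k := by
  rw [integral_gamma]
  rw [show (fun x : ℝ => (ProbabilityTheory.gaussianPDFReal 0 1 x) • ((x:ℂ)^k))
    = (fun x : ℝ => ((Real.sqrt (2*π) : ℝ)⁻¹ : ℂ) * ((x:ℂ)^k * Eg (1/2) 0 x)) from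
    funext fun x => smul_eq_EgMul k x]
  rw [integral_const_mul]
  rfl

lemma muG_zero : muG 0 = 1 := by
  unfold muG
  rw [Mg_zero (by norm_num : (0:ℝ) < 1/2) 0]
  have e1 : (π:ℝ)/(1/2) = 2*π := by ring
  rw [e1]
  have e2 : (-((0:ℝ):ℂ)^2/(4*(((1:ℝ)/2:ℝ):ℂ))) = 0 := by norm_num
  rw [e2, Complex.exp_zero, mul_one]
  rw [← Complex.ofReal_inv, ← Complex.ofReal_mul]
  rw [inv_mul_cancel₀ (by positivity : Real.sqrt (2*π) ≠ 0)]
  norm_num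

lemma muG_succ (k : ℕ) : muG (k+1) = (k:ℂ) * muG (k-1) := by
  unfold muG
  rw [Mg_succ (by norm_num : (0:ℝ) < 1/2) 0 k]
  push_cast
  norm_num
  ring

lemma Hpoly_eq (ℓ : ℕ) (x : ℂ) :
    Hpoly ℓ x = ∑ k ∈ range (ℓ+1), (ℓ.choose k : ℂ) * (Complex.I^k * muG k) * x^(ℓ-k) := by
  unfold Hpoly
  have e1 : ∀ t : ℝ, (x + Complex.I * (t:ℂ))^ℓ
      = ∑ k ∈ range (ℓ+1), ((ℓ.choose k : ℂ) * (Complex.I^k * x^(ℓ-k))) * (t:ℂ)^k := by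
    intro t
    rw [show x + Complex.I * (t:ℂ) = Complex.I * (t:ℂ) + x from add_comm _ _, add_pow]
    refine Finset.sum_congr rfl fun k hk => ?_
    rw [mul_pow]
    ring
  rw [show (fun t : ℝ => (x + Complex.I * (t:ℂ))^ℓ)
    = (fun t : ℝ => ∑ k ∈ range (ℓ+1), ((ℓ.choose k : ℂ) * (Complex.I^k * x^(ℓ-k))) * (t:ℂ)^k)
    from funext e1]
  rw [integral_finset_sum _ (fun k _ => (integrable_mono_gamma k).const_mul _)]
  refine Finset.sum_congr rfl fun k hk => ?_
  rw [integral_const_mul, integral_mono_gamma]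
  ring


lemma integrable_HpolyEg {b : ℝ} (hb : 0 < b) (θ : ℝ) (ℓ : ℕ) :
    Integrable (fun y : ℝ => Hpoly ℓ (y:ℂ) * Eg b θ y) := by
  have e : (fun y : ℝ => Hpoly ℓ (y:ℂ) * Eg b θ y)
      = (fun y : ℝ => ∑ k ∈ range (ℓ+1),
          ((ℓ.choose k : ℂ) * (Complex.I^k * muG k)) * ((y:ℂ)^(ℓ-k) * Eg b θ y)) := by
    funext y
    rw [Hpoly_eq, Finset.sum_mul]
    exact Finset.sum_congr rfl fun k _ => by ring
  rw [e]
  exact integrable_finset_sum _ (fun k _ => (integrable_monoEg hb θ (ℓ-k)).const_mul _)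

lemma integral_HpolyEg {b : ℝ} (hb : 0 < b) (θ : ℝ) (ℓ : ℕ) :
    (∫ y : ℝ, Hpoly ℓ (y:ℂ) * Eg b θ y)
      = bconv (fun k => Complex.I^k * muG k) (fun m => Mg b θ m) ℓ := by
  have e : (fun y : ℝ => Hpoly ℓ (y:ℂ) * Eg b θ y)
      = (fun y : ℝ => ∑ k ∈ range (ℓ+1),
          ((ℓ.choose k : ℂ) * (Complex.I^k * muG k)) * ((y:ℂ)^(ℓ-k) * Eg b θ y)) := by
    funext y
    rw [Hpoly_eq, Finset.sum_mul]
    exact Finset.sum_congr rfl fun k _ => by ring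
  rw [e, integral_finset_sum _ (fun k _ => (integrable_monoEg hb θ (ℓ-k)).const_mul _)]
  unfold bconv
  refine Finset.sum_congr rfl fun k hk => ?_
  rw [integral_const_mul]
  show _ * Mg b θ (ℓ-k) = _
  ring

lemma core_ident {p : ℝ} (hp : 1 < p) (θ : ℝ) (ℓ : ℕ) :
    (∫ y : ℝ, Hpoly ℓ (y:ℂ) * Eg (1/(2*p)) θ y)
      = Mg (1/(2*p)) θ 0 * ((Complex.I * ((Real.sqrt (p-1) : ℝ) : ℂ))^ℓ
          * Hpoly ℓ (((p*θ/Real.sqrt (p-1) : ℝ)) : ℂ)) := by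
  have hp0 : 0 < p := lt_trans one_pos hp
  have hb : 0 < 1/(2*p) := by positivity
  have hs0 : 0 < Real.sqrt (p-1) := Real.sqrt_pos.mpr (by linarith)
  set s : ℝ := Real.sqrt (p-1) with hs
  have hs2 : (s:ℝ)^2 = p - 1 := Real.sq_sqrt (by linarith)
  set u : ℕ → ℂ := fun k => Complex.I^k * muG k with hu_def
  set v : ℕ → ℂ := fun k => ((-s : ℝ) : ℂ)^k * muG k with hv_def
  set M : ℕ → ℂ := fun m => Mg (1/(2*p)) θ m with hM_def
  set W : ℕ → ℂ := fun m => (((p*θ : ℝ):ℂ) * Complex.I)^m with hW_def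
  set w : ℂ := ((p*θ : ℝ):ℂ) * Complex.I with hw_def
  have hu : ∀ k : ℕ, u (k+1) = (-1) * k * u (k-1) := by
    intro k
    match k with
    | 0 => simp [hu_def, muG_succ 0]
    | (j+1) =>
      simp only [hu_def]
      rw [muG_succ (j+1), show (j+1)+1 = j+2 from rfl, show (j+1)-1 = j from rfl,
        show j+2 = j+2 from rfl, pow_add, Complex.I_sq]
      push_cast
      ring
  have hM : ∀ m : ℕ, M (m+1) = (p:ℂ) * m * M (m-1) + w * M m := by
    intro m
    simp only [hM_def, hw_def]
    rw [Mg_succ hb θ m]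
    have hpne : (p:ℂ) ≠ 0 := Complex.ofReal_ne_zero.mpr (ne_of_gt hp0)
    push_cast
    field_simp
  have hv : ∀ k : ℕ, v (k+1) = ((p:ℂ)-1) * k * v (k-1) := by
    intro k
    have hns : (((-s : ℝ) : ℂ))^2 = (p:ℂ) - 1 := by
      have h' : ((-s:ℝ))^2 = p - 1 := by rw [neg_pow]; simp [hs2]
      calc (((-s:ℝ):ℂ))^2 = ((((-s:ℝ))^2 : ℝ):ℂ) := by push_cast; ring
        _ = ((p-1 : ℝ):ℂ) := by rw [h']
        _ = (p:ℂ)-1 := by push_cast; ring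
    match k with
    | 0 => simp [hv_def, muG_succ 0]
    | (j+1) =>
      simp only [hv_def]
      rw [muG_succ (j+1), show (j+1)+1 = j+2 from rfl, show (j+1)-1 = j from rfl,
        pow_add, hns]
      push_cast
      ring
  have hW : ∀ m : ℕ, W (m+1) = 0 * m * W (m-1) + w * W m := by
    intro m
    simp only [hW_def, hw_def, pow_succ]
    ring
  have recU : ∀ n, bconv u M ((n+1)+1)
      = w * bconv u M (n+1) + ((p:ℂ)-1) * ((n+1:ℕ):ℂ) * bconv u M n := by
    intro n
    rw [bconv_rec u M (-1) (p:ℂ) w hu hM n]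
    ring
  have recV : ∀ n, bconv v W ((n+1)+1)
      = w * bconv v W (n+1) + ((p:ℂ)-1) * ((n+1:ℕ):ℂ) * bconv v W n := by
    intro n
    rw [bconv_rec v W ((p:ℂ)-1) 0 w hv hW n]
    ring
  have hmu1 : muG 1 = 0 := by simpa using muG_succ 0
  have h0 : bconv u M 0 = M 0 * bconv v W 0 := by
    simp [bconv, hu_def, hv_def, hW_def, muG_zero]
  have h1 : bconv u M 1 = M 0 * bconv v W 1 := by
    have hM1 : M 1 = w * M 0 := by
      have h := hM 0
      simpa using h
    simp [bconv, Finset.sum_range_succ, hu_def, hv_def, hW_def, muG_zero, hmu1, hM1]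
    ring
  have KEY := bconv_eq_of_rec u M v W ((p:ℂ)-1) w recU recV h0 h1 ℓ
  rw [integral_HpolyEg hb θ ℓ]
  rw [show (fun k => Complex.I^k * muG k) = u from hu_def.symm,
    show (fun m => Mg (1/(2*p)) θ m) = M from hM_def.symm]
  rw [KEY]
  have hM0 : Mg (1/(2*p)) θ 0 = M 0 := by rw [hM_def]
  rw [hM0]
  congr 1
  -- bconv v W ℓ = (I*s)^ℓ * Hpoly ℓ X
  rw [Hpoly_eq ℓ (((p*θ/s : ℝ)) : ℂ), Finset.mul_sum]
  unfold bconv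
  refine Finset.sum_congr rfl fun k hk => ?_
  have hk' : k ≤ ℓ := by simpa [Nat.lt_succ_iff] using hk
  have e : (Complex.I*((s:ℝ):ℂ))^ℓ = (Complex.I*((s:ℝ):ℂ))^(ℓ-k) * (Complex.I*((s:ℝ):ℂ))^k := by
    rw [← pow_add]
    congr 1
    omega
  have claim1 : (Complex.I*((s:ℝ):ℂ))^k * (Complex.I:ℂ)^k = (((-s : ℝ) : ℂ))^k := by
    rw [← mul_pow]
    congr 1
    rw [show Complex.I * ((s:ℝ):ℂ) * Complex.I = ((s:ℝ):ℂ) * (Complex.I * Complex.I) from by ring,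
      Complex.I_mul_I]
    push_cast
    ring
  have claim2 : (Complex.I*((s:ℝ):ℂ)) * (((p*θ/s : ℝ)) : ℂ) = w := by
    rw [hw_def]
    push_cast
    linear_combination (Complex.I*(p:ℂ)*(θ:ℂ)) *
      (div_self (Complex.ofReal_ne_zero.mpr (ne_of_gt hs0)))
  have claim3 : (Complex.I*((s:ℝ):ℂ))^(ℓ-k) * ((((p*θ/s : ℝ)) : ℂ))^(ℓ-k) = W (ℓ-k) := by
    rw [← mul_pow, claim2, hW_def]
  rw [hv_def]
  calc ((ℓ.choose k : ℂ)) * (((-s : ℝ):ℂ)^k * muG k) * W (ℓ-k)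
      = ((ℓ.choose k : ℂ)) * (((Complex.I*((s:ℝ):ℂ))^k * (Complex.I:ℂ)^k) * muG k)
        * ((Complex.I*((s:ℝ):ℂ))^(ℓ-k) * ((((p*θ/s : ℝ)) : ℂ))^(ℓ-k)) := by
        rw [claim1, claim3]
    _ = (Complex.I*((s:ℝ):ℂ))^ℓ * ((ℓ.choose k : ℂ) * ((Complex.I:ℂ)^k * muG k)
        * ((((p*θ/s : ℝ)) : ℂ))^(ℓ-k)) := by
        rw [e]; ring



def Gfun (p : ℝ) (N : ℕ) (a : ℕ → ℂ) (x : ℝ) : ℂ :=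
  ∑ ℓ ∈ Finset.range (N+1), a ℓ * (Complex.I * ((Real.sqrt (p-1) : ℝ) : ℂ))^ℓ * Hpoly ℓ (x:ℂ)

def Rν (p ξ : ℝ) : ℝ := Real.sqrt (2*π*p) * Real.exp (-(2*π^2*p*ξ^2))

lemma Rν_pos {p : ℝ} (hp : 0 < p) (ξ : ℝ) : 0 < Rν p ξ := by
  unfold Rν; positivity

lemma Mg_zero_R {p : ℝ} (hp : 1 < p) (ξ : ℝ) :
    Mg (1/(2*p)) (-(2*π*ξ)) 0 = ((Rν p ξ : ℝ) : ℂ) := by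
  have hp0 : 0 < p := lt_trans one_pos hp
  have hb : 0 < 1/(2*p) := by positivity
  rw [Mg_zero hb]
  have e1 : (π / (1/(2*p))) = 2*π*p := by field_simp
  rw [e1]
  have e2 : (-(((-(2*π*ξ)):ℝ):ℂ)^2/(4*(((1/(2*p)):ℝ):ℂ))) = (((-(2*π^2*p*ξ^2)):ℝ):ℂ) := by
    have hpC : ((p:ℝ):ℂ) ≠ 0 := Complex.ofReal_ne_zero.mpr (ne_of_gt hp0)
    push_cast
    field_simp
    ring
  rw [e2, ← Complex.ofReal_exp, Rν, ← Complex.ofReal_mul]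

lemma fhat {p : ℝ} (hp : 1 < p) (N : ℕ) (a : ℕ → ℂ) (ξ : ℝ) :
    (∫ y : ℝ, ((∑ ℓ ∈ Finset.range (N + 1), a ℓ * Hpoly ℓ (y : ℂ))
        * (Real.exp (-(y ^ 2) / (2 * p)) : ℂ)
        * (((2 * Real.pi) ^ (-(1 : ℝ) / (2 * p)) : ℝ) : ℂ))
      * Complex.exp (-2 * Real.pi * Complex.I * ξ * y))
    = ((((2*Real.pi) ^ (-(1:ℝ)/(2*p)) : ℝ)):ℂ) * ((Rν p ξ : ℝ):ℂ)
      * Gfun p N a ((-2*π*p/Real.sqrt (p-1)) * ξ) := by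
  have hp0 : 0 < p := lt_trans one_pos hp
  have hb : 0 < 1/(2*p) := by positivity
  have eexp : ∀ y : ℝ, (Real.exp (-(y^2)/(2*p)) : ℂ)
      * Complex.exp (-2 * Real.pi * Complex.I * (ξ:ℂ) * (y:ℂ))
      = Eg (1/(2*p)) (-(2*π*ξ)) y := by
    intro y
    rw [Eg, Complex.ofReal_exp, ← Complex.exp_add]
    congr 1
    push_cast
    ring
  have e1 : (fun y : ℝ => ((∑ ℓ ∈ Finset.range (N + 1), a ℓ * Hpoly ℓ (y : ℂ))
        * (Real.exp (-(y ^ 2) / (2 * p)) : ℂ)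
        * (((2 * Real.pi) ^ (-(1 : ℝ) / (2 * p)) : ℝ) : ℂ))
      * Complex.exp (-2 * Real.pi * Complex.I * ξ * y))
      = fun y : ℝ => ∑ ℓ ∈ Finset.range (N+1),
          (a ℓ * ((((2 * Real.pi) ^ (-(1 : ℝ) / (2 * p)) : ℝ)) : ℂ))
            * (Hpoly ℓ (y:ℂ) * Eg (1/(2*p)) (-(2*π*ξ)) y) := by
    funext y
    rw [← eexp y, Finset.sum_mul, Finset.sum_mul, Finset.sum_mul]
    refine Finset.sum_congr rfl fun ℓ _ => ?_
    ring
  rw [e1, integral_finset_sum _ (fun ℓ _ => (integrable_HpolyEg hb _ ℓ).const_mul _)]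
  have e3 : ∀ ℓ : ℕ, (∫ y : ℝ, Hpoly ℓ (y:ℂ) * Eg (1/(2*p)) (-(2*π*ξ)) y)
      = ((Rν p ξ : ℝ):ℂ) * ((Complex.I * ((Real.sqrt (p-1):ℝ):ℂ))^ℓ
          * Hpoly ℓ ((((-2*π*p/Real.sqrt (p-1)) * ξ : ℝ)):ℂ)) := by
    intro ℓ
    rw [core_ident hp (-(2*π*ξ)) ℓ, Mg_zero_R hp ξ,
      show (p*(-(2*π*ξ))/Real.sqrt (p-1) : ℝ) = (-2*π*p/Real.sqrt (p-1)) * ξ from by ring]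
  rw [Finset.sum_congr rfl (fun ℓ _ => by rw [integral_const_mul, e3 ℓ] : ∀ ℓ ∈ Finset.range (N+1),
    (∫ y : ℝ, (a ℓ * ((((2 * Real.pi) ^ (-(1 : ℝ) / (2 * p)) : ℝ)) : ℂ))
      * (Hpoly ℓ (y:ℂ) * Eg (1/(2*p)) (-(2*π*ξ)) y))
    = (a ℓ * ((((2 * Real.pi) ^ (-(1 : ℝ) / (2 * p)) : ℝ)) : ℂ))
      * (((Rν p ξ : ℝ):ℂ) * ((Complex.I * ((Real.sqrt (p-1):ℝ):ℂ))^ℓ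
        * Hpoly ℓ ((((-2*π*p/Real.sqrt (p-1)) * ξ : ℝ)):ℂ))))]
  unfold Gfun
  rw [Finset.mul_sum]
  refine Finset.sum_congr rfl fun ℓ _ => ?_
  ring

lemma abs_point {p q : ℝ} (hp : 1 < p) (hq : q = p/(p-1)) (N : ℕ) (a : ℕ → ℂ) (ξ : ℝ) :
    ‖(((((2*Real.pi) ^ (-(1:ℝ)/(2*p)) : ℝ)):ℂ) * ((Rν p ξ : ℝ):ℂ)
        * Gfun p N a ((-2*π*p/Real.sqrt (p-1)) * ξ))‖ ^ q
      = (((2*Real.pi) ^ (-(1:ℝ)/(2*p)) : ℝ)^q * Real.sqrt (2*π*p)^q * Real.sqrt (2*π))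
        * (ProbabilityTheory.gaussianPDFReal 0 1 ((-2*π*p/Real.sqrt (p-1)) * ξ)
          * ‖(Gfun p N a ((-2*π*p/Real.sqrt (p-1)) * ξ))‖ ^ q) := by
  have hp0 : 0 < p := lt_trans one_pos hp
  have hpm1 : 0 < p - 1 := by linarith
  have hs0 : 0 < Real.sqrt (p-1) := Real.sqrt_pos.mpr hpm1
  have hs2 : (Real.sqrt (p-1))^2 = p-1 := Real.sq_sqrt (le_of_lt hpm1)
  have h2π : (0:ℝ) < 2*π := by positivity
  have hc₀ : (0:ℝ) < (2*Real.pi) ^ (-(1:ℝ)/(2*p)) := Real.rpow_pos_of_pos h2π _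
  have habs : ‖(((((2*Real.pi) ^ (-(1:ℝ)/(2*p)) : ℝ)):ℂ) * ((Rν p ξ : ℝ):ℂ)
        * Gfun p N a ((-2*π*p/Real.sqrt (p-1)) * ξ))‖
      = ((2*Real.pi) ^ (-(1:ℝ)/(2*p)) * Rν p ξ)
        * ‖(Gfun p N a ((-2*π*p/Real.sqrt (p-1)) * ξ))‖ := by
    rw [norm_mul, norm_mul, Complex.norm_real, Complex.norm_real, Real.norm_eq_abs,
      Real.norm_eq_abs, abs_of_pos hc₀, abs_of_pos (Rν_pos hp0 ξ)]
  rw [habs]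
  rw [Real.mul_rpow (le_of_lt (mul_pos hc₀ (Rν_pos hp0 ξ))) (norm_nonneg _)]
  rw [Real.mul_rpow (le_of_lt hc₀) (le_of_lt (Rν_pos hp0 ξ))]
  rw [Rν, Real.mul_rpow (Real.sqrt_nonneg _) (le_of_lt (Real.exp_pos _))]
  rw [← Real.exp_mul]
  have hexp : (-(2*π^2*p*ξ^2)) * q = -(((-2*π*p/Real.sqrt (p-1)) * ξ)^2)/2 := by
    have h1 : ((-2*π*p/Real.sqrt (p-1))*ξ)^2 = (4*π^2*p^2*ξ^2)/(p-1) := by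
      rw [mul_pow, div_pow, hs2]; ring
    rw [hq, h1]
    field_simp
    ring
  rw [hexp]
  have hpdf : Real.exp (-(((-2*π*p/Real.sqrt (p-1)) * ξ)^2)/2)
      = Real.sqrt (2*π) * ProbabilityTheory.gaussianPDFReal 0 1 ((-2*π*p/Real.sqrt (p-1)) * ξ) := by
    rw [pdf01, ← mul_assoc, mul_inv_cancel₀ (by positivity : Real.sqrt (2*π) ≠ 0), one_mul]
  rw [hpdf]
  ring

lemma const_ident {p q : ℝ} (hp : 1 < p) (hq : q = p/(p-1)) :
    ((((2*Real.pi) ^ (-(1:ℝ)/(2*p)))^q * Real.sqrt (2*π*p)^q * Real.sqrt (2*π))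
        * (Real.sqrt (p-1)/(2*π*p)))^(1/q)
      = p ^ (1/(2*p)) / q ^ (1/(2*q)) := by
  have hp0 : 0 < p := lt_trans one_pos hp
  have hpm1 : 0 < p - 1 := by linarith
  have hq0 : 0 < q := by rw [hq]; positivity
  have h2π : (0:ℝ) < 2*π := by positivity
  have h2πp : (0:ℝ) < 2*π*p := by positivity
  have hc₀ : (0:ℝ) < (2*Real.pi) ^ (-(1:ℝ)/(2*p)) := Real.rpow_pos_of_pos h2π _
  have h1 : (0:ℝ) < ((2*Real.pi) ^ (-(1:ℝ)/(2*p)))^q := Real.rpow_pos_of_pos hc₀ _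
  have h2 : (0:ℝ) < Real.sqrt (2*π*p)^q := Real.rpow_pos_of_pos (Real.sqrt_pos.mpr h2πp) _
  have h3 : (0:ℝ) < Real.sqrt (2*π) := Real.sqrt_pos.mpr h2π
  have h4 : (0:ℝ) < Real.sqrt (p-1)/(2*π*p) := div_pos (Real.sqrt_pos.mpr hpm1) h2πp
  have hL : (0:ℝ) < (((2*Real.pi) ^ (-(1:ℝ)/(2*p)))^q * Real.sqrt (2*π*p)^q * Real.sqrt (2*π))
      * (Real.sqrt (p-1)/(2*π*p)) := mul_pos (mul_pos (mul_pos h1 h2) h3) h4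
  have hLq : (0:ℝ) < ((((2*Real.pi) ^ (-(1:ℝ)/(2*p)))^q * Real.sqrt (2*π*p)^q * Real.sqrt (2*π))
      * (Real.sqrt (p-1)/(2*π*p)))^(1/q) := Real.rpow_pos_of_pos hL _
  have hR : (0:ℝ) < p ^ (1/(2*p)) / q ^ (1/(2*q)) := by
    apply div_pos (Real.rpow_pos_of_pos hp0 _) (Real.rpow_pos_of_pos hq0 _)
  rw [← Real.exp_log hLq, ← Real.exp_log hR]
  congr 1
  rw [Real.log_rpow hL,
    Real.log_div (ne_of_gt (Real.rpow_pos_of_pos hp0 _)) (ne_of_gt (Real.rpow_pos_of_pos hq0 _)),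
    Real.log_rpow hp0, Real.log_rpow hq0,
    Real.log_mul (ne_of_gt (mul_pos (mul_pos h1 h2) h3)) (ne_of_gt h4),
    Real.log_mul (ne_of_gt (mul_pos h1 h2)) (ne_of_gt h3),
    Real.log_mul (ne_of_gt h1) (ne_of_gt h2),
    Real.log_rpow hc₀,
    Real.log_rpow h2π,
    Real.log_rpow (Real.sqrt_pos.mpr h2πp),
    Real.log_div (ne_of_gt (Real.sqrt_pos.mpr hpm1)) (ne_of_gt h2πp),
    Real.log_sqrt (le_of_lt h2πp), Real.log_sqrt (le_of_lt h2π),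
    Real.log_sqrt (le_of_lt hpm1),
    Real.log_mul (ne_of_gt h2π) (ne_of_gt hp0)]
  rw [show Real.log q = Real.log p - Real.log (p-1) from by
    rw [hq, Real.log_div (ne_of_gt hp0) (ne_of_gt hpm1)]]
  rw [hq]
  have hpne : p ≠ 0 := ne_of_gt hp0
  have hpm1ne : p - 1 ≠ 0 := ne_of_gt hpm1
  field_simp
  ring

end S14

/-- identification of the `s = 0` endpoint with the `L^q` norm of
the Fourier transform of `f(y) := g̃(y) e^{-y²/(2p)} (2π)^{-1/(2p)}`. -/
theorem stmt14 (p q : ℝ) (hp : 1 < p) (hp2 : p ≤ 2) (hq : q = p / (p - 1))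
    (N : ℕ) (a : ℕ → ℂ) :
    (p ^ (1 / (2 * p)) / q ^ (1 / (2 * q))) *
        (∫ x : ℝ, ‖(∑ ℓ ∈ Finset.range (N + 1),
            a ℓ * (Complex.I * (Real.sqrt (p - 1) : ℂ)) ^ ℓ * Hpoly ℓ (x : ℂ))‖ ^ q ∂γ) ^ (1 / q)
      = (∫ ξ : ℝ, ‖(∫ y : ℝ,
            ((∑ ℓ ∈ Finset.range (N + 1), a ℓ * Hpoly ℓ (y : ℂ))
              * (Real.exp (-(y ^ 2) / (2 * p)) : ℂ)
              * (((2 * Real.pi) ^ (-(1 : ℝ) / (2 * p)) : ℝ) : ℂ))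
            * Complex.exp (-2 * Real.pi * Complex.I * ξ * y))‖ ^ q) ^ (1 / q) := by
  have hp0 : 0 < p := lt_trans one_pos hp
  have hpm1 : 0 < p - 1 := by linarith
  have hq0 : 0 < q := by rw [hq]; positivity
  have h2π : (0:ℝ) < 2*Real.pi := by positivity
  have hs0 : 0 < Real.sqrt (p-1) := Real.sqrt_pos.mpr hpm1
  have hc₀ : (0:ℝ) < (2*Real.pi) ^ (-(1:ℝ)/(2*p)) := Real.rpow_pos_of_pos h2π _
  have hJdef : (∫ x : ℝ, ‖(∑ ℓ ∈ Finset.range (N + 1),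
      a ℓ * (Complex.I * (Real.sqrt (p - 1) : ℂ)) ^ ℓ * Hpoly ℓ (x : ℂ))‖ ^ q ∂γ)
      = ∫ x : ℝ, ‖(S14.Gfun p N a x)‖ ^ q ∂γ := rfl
  rw [hJdef]
  simp only [S14.fhat hp N a]
  simp only [S14.abs_point hp hq N a]
  rw [MeasureTheory.integral_const_mul]
  rw [MeasureTheory.Measure.integral_comp_mul_left
      (fun x => ProbabilityTheory.gaussianPDFReal 0 1 x * ‖(S14.Gfun p N a x)‖ ^ q)
      (-2*Real.pi*p/Real.sqrt (p-1))]
  rw [smul_eq_mul]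
  have hgam : (∫ x : ℝ, ‖(S14.Gfun p N a x)‖ ^ q ∂γ)
      = ∫ x : ℝ, ProbabilityTheory.gaussianPDFReal 0 1 x * ‖(S14.Gfun p N a x)‖ ^ q := by
    rw [S14.integral_gamma]
    simp only [smul_eq_mul]
  rw [← hgam]
  have hJ0 : (0:ℝ) ≤ ∫ x : ℝ, ‖(S14.Gfun p N a x)‖ ^ q ∂γ :=
    integral_nonneg fun x => Real.rpow_nonneg (norm_nonneg _) _
  have habs : |(-2*Real.pi*p/Real.sqrt (p-1))⁻¹| = Real.sqrt (p-1)/(2*Real.pi*p) := by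
    rw [show (-2*Real.pi*p/Real.sqrt (p-1))⁻¹ = -(Real.sqrt (p-1)/(2*Real.pi*p)) from by
      field_simp]
    rw [abs_neg, abs_of_pos (div_pos hs0 (by positivity))]
  rw [habs]
  rw [show ((2*Real.pi) ^ (-(1:ℝ)/(2*p)))^q * Real.sqrt (2*Real.pi*p)^q * Real.sqrt (2*Real.pi)
      * (Real.sqrt (p-1)/(2*Real.pi*p) * ∫ x : ℝ, ‖(S14.Gfun p N a x)‖ ^ q ∂γ)
      = (((2*Real.pi) ^ (-(1:ℝ)/(2*p)))^q * Real.sqrt (2*Real.pi*p)^q * Real.sqrt (2*Real.pi)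
        * (Real.sqrt (p-1)/(2*Real.pi*p))) * ∫ x : ℝ, ‖(S14.Gfun p N a x)‖ ^ q ∂γ
    from by ring]
  rw [Real.mul_rpow (le_of_lt (mul_pos (mul_pos (mul_pos
      (Real.rpow_pos_of_pos hc₀ q)
      (Real.rpow_pos_of_pos (Real.sqrt_pos.mpr (by positivity : (0:ℝ) < 2*Real.pi*p)) q))
      (Real.sqrt_pos.mpr h2π))
      (div_pos hs0 (by positivity : (0:ℝ) < 2*Real.pi*p)))) hJ0]
  rw [S14.const_ident hp hq]

end
end
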